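/- arXiv:2002.05094 — 8 statements merged into one kernel-verified Lean document; each statement's English description precedes it below -/
import Mathlib

section
/- Let (Y,ν) be a standard probability space and let S be an invertible ν-nonsingular transformation of Y. If the series Σ_{n=1}^∞ ∫_Y √( d(ν∘S^n)/dν ) dν converges (i.e. Σ_{n=1}^∞ ⟨U_S^n 1, 1⟩ < ∞, where U_S is the Koopman operator), then S is totally dissipative. -/
open MeasureTheory Filter Set
open scoped ENNReal NNReal
set_option linter.unusedSectionVars false

section Aux
variable {Y : Type*} [MeasurableSpace Y]

private lemma zpow_apply_add (S : Equiv.Perm Y) (a b : ℤ) (x : Y) :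
    (S ^ (a + b)) x = (S ^ a) ((S ^ b) x) := by
  rw [zpow_add]; rfl

private lemma measurable_zpow (S : Equiv.Perm Y) (hS : Measurable ⇑S)
    (hS' : Measurable ⇑S.symm) : ∀ m : ℤ, Measurable ⇑(S ^ m) := by
  intro m
  induction m using Int.induction_on with
  | zero => simpa using measurable_id
  | succ n ih =>
      have h : (S ^ ((n : ℤ) + 1)) = S ^ (n : ℤ) * S := by rw [zpow_add, zpow_one]
      rw [h, Equiv.Perm.coe_mul]
      exact ih.comp hS
  | pred n ih =>
      have h : (S ^ (-(n : ℤ) - 1)) = S ^ (-(n : ℤ)) * S⁻¹ := by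
        rw [← zpow_neg_one, ← zpow_add, sub_eq_add_neg]
      rw [h, Equiv.Perm.coe_mul, Equiv.Perm.inv_def]
      exact ih.comp hS'

private lemma zpow_symm_eq (S : Equiv.Perm Y) (m : ℤ) : ⇑(S ^ m).symm = ⇑(S ^ (-m)) := by
  rw [zpow_neg, Equiv.Perm.inv_def]

private noncomputable def zpowEquiv (S : Equiv.Perm Y) (hS : Measurable ⇑S)
    (hS' : Measurable ⇑S.symm) (m : ℤ) : Y ≃ᵐ Y where
  toEquiv := (S ^ m : Equiv.Perm Y)
  measurable_toFun := measurable_zpow S hS hS' m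
  measurable_invFun := by
    show Measurable ⇑(S ^ m).symm
    rw [zpow_symm_eq]
    exact measurable_zpow S hS hS' (-m)

private lemma zpow_embedding (S : Equiv.Perm Y) (hS : Measurable ⇑S)
    (hS' : Measurable ⇑S.symm) (m : ℤ) : MeasurableEmbedding ⇑(S ^ m) :=
  (zpowEquiv S hS hS' m).measurableEmbedding

variable (ν : Measure Y) (S : Equiv.Perm Y)

private lemma map_zpow_comp (hS : Measurable ⇑S) (hS' : Measurable ⇑S.symm) (a b : ℤ) :
    (ν.map ⇑(S ^ a)).map ⇑(S ^ b) = ν.map ⇑(S ^ (b + a)) := by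
  rw [Measure.map_map (measurable_zpow S hS hS' b) (measurable_zpow S hS hS' a)]
  congr 1
  funext x
  exact (zpow_apply_add S b a x).symm

private lemma map_zpow_prob [IsProbabilityMeasure ν] (hS : Measurable ⇑S)
    (hS' : Measurable ⇑S.symm) (m : ℤ) : IsProbabilityMeasure (ν.map ⇑(S ^ m)) :=
  Measure.isProbabilityMeasure_map (measurable_zpow S hS hS' m).aemeasurable

private lemma map_zpow_zero : ν.map ⇑(S ^ (0 : ℤ)) = ν := by
  have h : ⇑(S ^ (0 : ℤ)) = id := by
    rw [zpow_zero]; rfl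
  rw [h, Measure.map_id]

private lemma map_zpow_ac (hS : Measurable ⇑S) (hS' : Measurable ⇑S.symm)
    (hns : ν.map ⇑S ≪ ν ∧ ν ≪ ν.map ⇑S) :
    ∀ m : ℤ, ν.map ⇑(S ^ m) ≪ ν ∧ ν ≪ ν.map ⇑(S ^ m) := by
  have hid : (ν.map ⇑S).map ⇑S.symm = ν := by
    rw [Measure.map_map hS' hS]
    have h : ⇑S.symm ∘ ⇑S = id := funext fun x => S.symm_apply_apply x
    rw [h, Measure.map_id]
  have hacS' : ν.map ⇑S.symm ≪ ν ∧ ν ≪ ν.map ⇑S.symm := by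
    constructor
    · calc ν.map ⇑S.symm ≪ (ν.map ⇑S).map ⇑S.symm := hns.2.map hS'
        _ = ν := hid
    · calc ν = (ν.map ⇑S).map ⇑S.symm := hid.symm
        _ ≪ ν.map ⇑S.symm := hns.1.map hS'
  intro m
  induction m using Int.induction_on with
  | zero => rw [map_zpow_zero]; exact ⟨Measure.AbsolutelyContinuous.rfl, Measure.AbsolutelyContinuous.rfl⟩
  | succ n ih =>
      have hm : ν.map ⇑(S ^ ((n : ℤ) + 1)) = (ν.map ⇑(S ^ (n : ℤ))).map ⇑S := by
        have h1 : ⇑(S ^ (1 : ℤ)) = ⇑S := by rw [zpow_one]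
        rw [← h1, map_zpow_comp ν S hS hS', add_comm 1 (n : ℤ)]
      constructor
      · rw [hm]
        exact (ih.1.map hS).trans hns.1
      · rw [hm]
        exact hns.2.trans (ih.2.map hS)
  | pred n ih =>
      have hm : ν.map ⇑(S ^ (-(n : ℤ) - 1)) = (ν.map ⇑(S ^ (-n : ℤ))).map ⇑S.symm := by
        have h1 : ⇑(S ^ (-1 : ℤ)) = ⇑S.symm := by rw [zpow_neg_one, Equiv.Perm.inv_def]
        rw [← h1, map_zpow_comp ν S hS hS', sub_eq_add_neg, add_comm (-(n:ℤ)) (-1)]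
      constructor
      · rw [hm]
        exact (ih.1.map hS').trans hacS'.1
      · rw [hm]
        exact hacS'.2.trans (ih.2.map hS')



private lemma hellinger_calc {x : ℝ≥0∞} (h0 : x ≠ 0) (ht : x ≠ ⊤) :
    x * (x⁻¹) ^ (1/2 : ℝ) = x ^ (1/2 : ℝ) := by
  have h1 : x ^ (1/2:ℝ) ≠ 0 := by simp [ENNReal.rpow_eq_zero_iff, h0, ht]
  have h2 : x ^ (1/2:ℝ) ≠ ⊤ := by simp [ENNReal.rpow_eq_top_iff, h0, ht]
  have hx : x = x ^ (1/2:ℝ) * x ^ (1/2:ℝ) := by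
    rw [← ENNReal.rpow_add _ _ h0 ht]; norm_num
  rw [ENNReal.inv_rpow]
  calc x * (x ^ (1/2:ℝ))⁻¹ = (x ^ (1/2:ℝ) * x ^ (1/2:ℝ)) * (x ^ (1/2:ℝ))⁻¹ := by rw [← hx]
    _ = x ^ (1/2:ℝ) * (x ^ (1/2:ℝ) * (x ^ (1/2:ℝ))⁻¹) := by rw [mul_assoc]
    _ = x ^ (1/2:ℝ) := by rw [ENNReal.mul_inv_cancel h1 h2, mul_one]

private lemma hellinger_symm (α β : Measure Y) [IsFiniteMeasure α] [IsFiniteMeasure β]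
    (hab : α ≪ β) (hba : β ≪ α) :
    ∫⁻ x, β.rnDeriv α x ^ (1/2:ℝ) ∂α = ∫⁻ x, α.rnDeriv β x ^ (1/2:ℝ) ∂β := by
  rw [← MeasureTheory.lintegral_rnDeriv_mul hab
    (((Measure.measurable_rnDeriv β α).pow_const (1/2:ℝ)).aemeasurable)]
  refine lintegral_congr_ae ?_
  filter_upwards [hba.ae_le (Measure.inv_rnDeriv hab), hba.ae_le (Measure.rnDeriv_pos hab),
    Measure.rnDeriv_lt_top α β] with z hinv hpos hlt
  simp only [Pi.inv_apply] at hinv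
  rw [← hinv, hellinger_calc hpos.ne' hlt.ne]

private noncomputable def fm (ν : Measure Y) (S : Equiv.Perm Y) (m : ℤ) : Y → ℝ≥0∞ :=
  (ν.map ⇑(S ^ (-m))).rnDeriv ν

private lemma zpow_cancel (S : Equiv.Perm Y) (m : ℤ) (x : Y) : (S ^ m) ((S ^ (-m)) x) = x := by
  rw [← zpow_apply_add S m (-m) x, add_neg_cancel, zpow_zero]
  rfl

private lemma chain_ae [IsProbabilityMeasure ν] (hS : Measurable ⇑S)
    (hS' : Measurable ⇑S.symm) (hns : ν.map ⇑S ≪ ν ∧ ν ≪ ν.map ⇑S) (n m : ℤ) :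
    fm ν S (n + m) =ᵐ[ν] (fun y => fm ν S n ((S ^ m) y) * fm ν S m y) := by
  haveI := map_zpow_prob ν S hS hS' (-n)
  haveI := map_zpow_prob ν S hS hS' (-m)
  haveI := map_zpow_prob ν S hS hS' (-(n+m))
  have hac := map_zpow_ac ν S hS hS' hns
  have hcomp : (ν.map ⇑(S ^ (-n))).map ⇑(S ^ (-m)) = ν.map ⇑(S ^ (-(n+m))) := by
    rw [map_zpow_comp ν S hS hS', show (-m + -n) = -(n+m) by ring]
  have hemb := (zpow_embedding S hS hS' (-m)).rnDeriv_map (ν.map ⇑(S ^ (-n))) ν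
  rw [hcomp] at hemb
  have h3 : ∀ᵐ z ∂(ν.map ⇑(S ^ (-m))),
      (ν.map ⇑(S ^ (-(n+m)))).rnDeriv (ν.map ⇑(S ^ (-m))) z = fm ν S n ((S ^ m) z) := by
    rw [(zpow_embedding S hS hS' (-m)).ae_map_iff]
    filter_upwards [hemb] with x hx
    show (ν.map ⇑(S ^ (-(n+m)))).rnDeriv (ν.map ⇑(S ^ (-m))) ((S ^ (-m)) x)
      = fm ν S n ((S ^ m) ((S ^ (-m)) x))
    rw [zpow_cancel S m x]
    exact hx
  have h4 : ∀ᵐ z ∂ν, (ν.map ⇑(S ^ (-(n+m)))).rnDeriv (ν.map ⇑(S ^ (-m))) z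
      = fm ν S n ((S ^ m) z) := (hac (-m)).2.ae_le h3
  have h5 := Measure.rnDeriv_mul_rnDeriv (κ := ν)
    (((hac (-(n+m))).1).trans ((hac (-m)).2))
  filter_upwards [h4, h5] with y hy4 hy5
  show (ν.map ⇑(S ^ (-(n+m)))).rnDeriv ν y = fm ν S n ((S ^ m) y) * fm ν S m y
  rw [← hy5]
  show (ν.map ⇑(S ^ (-(n+m)))).rnDeriv (ν.map ⇑(S ^ (-m))) y
      * (ν.map ⇑(S ^ (-m))).rnDeriv ν y = _
  rw [hy4]
  rfl

private lemma symm_lint [IsProbabilityMeasure ν] (hS : Measurable ⇑S)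
    (hS' : Measurable ⇑S.symm) (hns : ν.map ⇑S ≪ ν ∧ ν ≪ ν.map ⇑S) (m : ℤ) :
    ∫⁻ y, fm ν S (-m) y ^ (1/2:ℝ) ∂ν = ∫⁻ y, fm ν S m y ^ (1/2:ℝ) ∂ν := by
  haveI := map_zpow_prob ν S hS hS' (-m)
  haveI := map_zpow_prob ν S hS hS' m
  have hac := map_zpow_ac ν S hS hS' hns
  have h1 : (ν.map ⇑(S ^ m)).map ⇑(S ^ (-m)) = ν := by
    rw [map_zpow_comp ν S hS hS', neg_add_cancel, map_zpow_zero]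
  have hemb := (zpow_embedding S hS hS' (-m)).rnDeriv_map (ν.map ⇑(S ^ m)) ν
  rw [h1] at hemb
  have hL : ∫⁻ y, fm ν S (-m) y ^ (1/2:ℝ) ∂ν
      = ∫⁻ x, (ν.rnDeriv (ν.map ⇑(S ^ (-m))) ((S ^ (-m)) x)) ^ (1/2:ℝ) ∂ν := by
    refine lintegral_congr_ae ?_
    filter_upwards [hemb] with x hx
    have : fm ν S (-m) x = (ν.map ⇑(S ^ m)).rnDeriv ν x := by
      simp only [fm, neg_neg]
    rw [this, ← hx]
  rw [hL]
  have hmeas : Measurable fun z => (ν.rnDeriv (ν.map ⇑(S ^ (-m))) z) ^ (1/2:ℝ) :=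
    (Measure.measurable_rnDeriv _ _).pow_const _
  rw [← lintegral_map hmeas (measurable_zpow S hS hS' (-m))]
  exact hellinger_symm (ν.map ⇑(S ^ (-m))) ν (hac (-m)).1 (hac (-m)).2

private lemma rpow_half_le_one_add (x : ℝ≥0∞) : x ^ (1/2:ℝ) ≤ 1 + x := by
  rcases le_total x 1 with h | h
  · calc x ^ (1/2:ℝ) ≤ 1 ^ (1/2:ℝ) := ENNReal.rpow_le_rpow h (by norm_num)
      _ = 1 := ENNReal.one_rpow _
      _ ≤ 1 + x := le_self_add
  · calc x ^ (1/2:ℝ) ≤ x ^ (1:ℝ) := ENNReal.rpow_le_rpow_of_exponent_le h (by norm_num)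
      _ = x := ENNReal.rpow_one x
      _ ≤ 1 + x := le_add_self

private lemma lint_le_two [IsProbabilityMeasure ν] (hS : Measurable ⇑S)
    (hS' : Measurable ⇑S.symm) (m : ℤ) :
    ∫⁻ y, fm ν S m y ^ (1/2:ℝ) ∂ν ≤ 2 := by
  haveI := map_zpow_prob ν S hS hS' (-m)
  calc ∫⁻ y, fm ν S m y ^ (1/2:ℝ) ∂ν ≤ ∫⁻ y, (1 + fm ν S m y) ∂ν :=
        lintegral_mono fun y => rpow_half_le_one_add _
    _ = ν univ + ∫⁻ y, fm ν S m y ∂ν := by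
        rw [lintegral_add_left measurable_const]
        simp
    _ ≤ 1 + (ν.map ⇑(S ^ (-m))) univ := by
        rw [measure_univ]
        exact add_le_add le_rfl (Measure.lintegral_rnDeriv_le)
    _ = 2 := by rw [measure_univ]; norm_num

private def GoodPt (ν : Measure Y) (S : Equiv.Perm Y) (g : Y → ℝ≥0∞) (y : Y) : Prop :=
  (∀ n m : ℤ, fm ν S (n + m) y = fm ν S n ((S ^ m) y) * fm ν S m y) ∧
  (∀ m : ℤ, 0 < fm ν S m y) ∧ (∀ m : ℤ, fm ν S m y < ⊤) ∧ fm ν S 0 y = 1 ∧ g y < ⊤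

variable {g : Y → ℝ≥0∞} {S} {ν}

private lemma good_rpow_ne_zero {y : Y} (hy : GoodPt ν S g y) (m : ℤ) :
    fm ν S m y ^ (1/2:ℝ) ≠ 0 := by
  simp [ENNReal.rpow_eq_zero_iff, (hy.2.1 m).ne', (hy.2.2.1 m).ne]

private lemma good_rpow_ne_top {y : Y} (hy : GoodPt ν S g y) (m : ℤ) :
    fm ν S m y ^ (1/2:ℝ) ≠ ⊤ := by
  simp [ENNReal.rpow_eq_top_iff, (hy.2.1 m).ne', (hy.2.2.1 m).ne]

private lemma good_g_shift (hgdef : ∀ x, g x = ∑' m : ℤ, fm ν S m x ^ (1/2:ℝ))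
    {y : Y} (hy : GoodPt ν S g y) (m : ℤ) :
    g ((S ^ m) y) = g y * (fm ν S m y ^ (1/2:ℝ))⁻¹ := by
  have hshift : ∀ n : ℤ, fm ν S n ((S ^ m) y) = fm ν S (n + m) y * (fm ν S m y)⁻¹ := by
    intro n
    rw [hy.1 n m, mul_assoc, ENNReal.mul_inv_cancel (hy.2.1 m).ne' (hy.2.2.1 m).ne, mul_one]
  rw [hgdef]
  calc ∑' n : ℤ, fm ν S n ((S ^ m) y) ^ (1/2:ℝ)
      = ∑' n : ℤ, (fm ν S (n + m) y ^ (1/2:ℝ)) * (fm ν S m y ^ (1/2:ℝ))⁻¹ := by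
        refine tsum_congr fun n => ?_
        rw [hshift n, ENNReal.mul_rpow_of_ne_top (hy.2.2.1 (n+m)).ne
          (by simp [(hy.2.1 m).ne']), ENNReal.inv_rpow]
    _ = (∑' n : ℤ, fm ν S (n + m) y ^ (1/2:ℝ)) * (fm ν S m y ^ (1/2:ℝ))⁻¹ :=
        ENNReal.tsum_mul_right
    _ = g y * (fm ν S m y ^ (1/2:ℝ))⁻¹ := by
        rw [hgdef]
        congr 1
        exact (Equiv.addRight m).tsum_eq fun k => fm ν S k y ^ (1/2:ℝ)

private lemma good_g_one_le (hgdef : ∀ x, g x = ∑' m : ℤ, fm ν S m x ^ (1/2:ℝ))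
    {y : Y} (hy : GoodPt ν S g y) : 1 ≤ g y := by
  rw [hgdef]
  have h0 : fm ν S 0 y ^ (1/2:ℝ) = 1 := by rw [hy.2.2.2.1, ENNReal.one_rpow]
  calc (1:ℝ≥0∞) = fm ν S 0 y ^ (1/2:ℝ) := h0.symm
    _ ≤ ∑' m : ℤ, fm ν S m y ^ (1/2:ℝ) := ENNReal.le_tsum 0

private lemma good_c_shift (hgdef : ∀ x, g x = ∑' m : ℤ, fm ν S m x ^ (1/2:ℝ))
    {y : Y} (hy : GoodPt ν S g y) (m : ℤ) :
    (g ((S ^ m) y))⁻¹ = fm ν S m y ^ (1/2:ℝ) * (g y)⁻¹ := by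
  have hg0 : g y ≠ 0 := by
    intro h
    have := good_g_one_le hgdef hy
    simp [h] at this
  rw [good_g_shift hgdef hy m, ENNReal.mul_inv (Or.inl hg0)
    (Or.inl hy.2.2.2.2.ne), inv_inv, mul_comm]

private lemma good_c_sum (hgdef : ∀ x, g x = ∑' m : ℤ, fm ν S m x ^ (1/2:ℝ))
    {y : Y} (hy : GoodPt ν S g y) : ∑' m : ℤ, (g ((S ^ m) y))⁻¹ = 1 := by
  have hg0 : g y ≠ 0 := by
    intro h
    have := good_g_one_le hgdef hy
    simp [h] at this
  calc ∑' m : ℤ, (g ((S ^ m) y))⁻¹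
      = ∑' m : ℤ, fm ν S m y ^ (1/2:ℝ) * (g y)⁻¹ :=
        tsum_congr fun m => good_c_shift hgdef hy m
    _ = (∑' m : ℤ, fm ν S m y ^ (1/2:ℝ)) * (g y)⁻¹ := ENNReal.tsum_mul_right
    _ = g y * (g y)⁻¹ := by rw [hgdef]
    _ = 1 := ENNReal.mul_inv_cancel hg0 hy.2.2.2.2.ne

private lemma rpow_half_pow (c : ℝ≥0∞) (k : ℕ) : (c ^ k) ^ (1/2:ℝ) = (c ^ (1/2:ℝ)) ^ k := by
  rw [← ENNReal.rpow_natCast c k, ← ENNReal.rpow_mul, mul_comm, ENNReal.rpow_mul,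
    ENNReal.rpow_natCast]

private lemma zpow_cancel' (S : Equiv.Perm Y) (m : ℤ) (x : Y) : (S ^ (-m)) ((S ^ m) x) = x := by
  rw [← zpow_apply_add S (-m) m x, neg_add_cancel, zpow_zero]
  rfl

private lemma good_aperiodic (hgdef : ∀ x, g x = ∑' m : ℤ, fm ν S m x ^ (1/2:ℝ))
    {x : Y} (hx : GoodPt ν S g x) {n : ℤ} (hn : n ≠ 0) : (S ^ n) x ≠ x := by
  intro heq
  have key : ∀ j : ℤ, j ≠ 0 → (S ^ j) x = x → fm ν S j x ^ (1/2:ℝ) < 1 := by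
    intro j hj hfix
    have hpow : ∀ k : ℕ, fm ν S (((k:ℤ)+1) * j) x = fm ν S j x ^ (k+1) := by
      intro k
      induction k with
      | zero => norm_num
      | succ k ih =>
          have hstep : (((k:ℕ)+1 : ℤ)+1) * j = ((k:ℤ)+1) * j + j := by ring
          rw [show (((k+1:ℕ):ℤ)+1) * j = (((k:ℕ)+1 : ℤ)+1) * j by push_cast; ring, hstep,
            hx.1 _ j, hfix, ih]
          ring
    have hinj : Function.Injective (fun k : ℕ => ((k:ℤ)+1) * j) := by
      intro a b hab
      simp only at hab
      have h2 := mul_right_cancel₀ hj hab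
      have : (a:ℤ) = b := by linarith
      exact_mod_cast this
    have hle : ∑' k : ℕ, fm ν S (((k:ℤ)+1) * j) x ^ (1/2:ℝ) ≤ g x := by
      rw [hgdef]
      exact ENNReal.tsum_comp_le_tsum_of_injective hinj (fun m => fm ν S m x ^ (1/2:ℝ))
    by_contra hlt
    push_neg at hlt
    have hone : ∀ k : ℕ, (1:ℝ≥0∞) ≤ fm ν S (((k:ℤ)+1) * j) x ^ (1/2:ℝ) := by
      intro k
      rw [hpow k, rpow_half_pow]
      calc (1:ℝ≥0∞) = 1 ^ (k+1) := (one_pow _).symm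
        _ ≤ (fm ν S j x ^ (1/2:ℝ)) ^ (k+1) := pow_le_pow_left' hlt _
    have htop : (⊤:ℝ≥0∞) ≤ ∑' k : ℕ, fm ν S (((k:ℤ)+1) * j) x ^ (1/2:ℝ) := by
      calc (⊤:ℝ≥0∞) = ∑' _ : ℕ, (1:ℝ≥0∞) :=
          (ENNReal.tsum_const_eq_top_of_ne_zero one_ne_zero).symm
        _ ≤ _ := ENNReal.tsum_le_tsum hone
    exact absurd (lt_of_le_of_lt (htop.trans hle) hx.2.2.2.2) (lt_irrefl _)
  have h1 := key n hn heq
  have hfix' : (S ^ (-n)) x = x := by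
    conv_lhs => rw [← heq]
    exact zpow_cancel' S n x
  have h2 := key (-n) (neg_ne_zero.mpr hn) hfix'
  have hinv : fm ν S (-n) x = (fm ν S n x)⁻¹ := by
    have h0 := hx.1 (-n) n
    rw [neg_add_cancel, hx.2.2.2.1, heq] at h0
    exact ENNReal.eq_inv_of_mul_eq_one_left h0.symm
  rw [hinv, ENNReal.inv_rpow] at h2
  have h3 := ENNReal.inv_lt_one.mp h2
  exact absurd h1 (not_lt.mpr h3.le)

end Aux

/-- A transformation `S` of `(Y,ν)` is totally dissipative if there is a measurable set `B`
whose `S^n`-images, `n ∈ ℤ`, are pairwise disjoint and cover `Y` up to a `ν`-null set. -/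
def TotallyDissipative {Y : Type*} [MeasurableSpace Y] (S : Equiv.Perm Y)
    (ν : Measure Y) : Prop :=
  ∃ B : Set Y, MeasurableSet B ∧
    (Pairwise fun m n : ℤ => Disjoint (⇑(S ^ m) '' B) (⇑(S ^ n) '' B)) ∧
    ν (Set.univ \ ⋃ n : ℤ, ⇑(S ^ n) '' B) = 0

/-- If `Σ_{n≥1} ∫ √(d(ν∘S^n)/dν) dν < ∞` then the invertible nonsingular
transformation `S` of the standard probability space `(Y,ν)` is totally dissipative.
Here `ν∘S^n` is the measure `A ↦ ν(S^n A)`, i.e. the pushforward of `ν` under `S^{-n}`. -/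
theorem stmt0 {Y : Type*} [MeasurableSpace Y] [StandardBorelSpace Y]
    (ν : Measure Y) [IsProbabilityMeasure ν] (S : Equiv.Perm Y)
    (hS : Measurable ⇑S) (hS' : Measurable ⇑S.symm)
    (hns : ν.map ⇑S ≪ ν ∧ ν ≪ ν.map ⇑S)
    (hsum : Summable fun n : ℕ =>
      ∫ y, Real.sqrt (((ν.map ⇑((S ^ (n + 1))⁻¹)).rnDeriv ν) y).toReal ∂ν) :
    TotallyDissipative S ν := by
  classical
  obtain ⟨ψ, hψ⟩ := exists_measurableEmbedding_real Y
  have hTm := measurable_zpow S hS hS'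
  have hac := map_zpow_ac ν S hS hS' hns
  have hprob := map_zpow_prob ν S hS hS'
  have hfmeas : ∀ m : ℤ, Measurable (fm ν S m) := fun m => Measure.measurable_rnDeriv _ _
  set g : Y → ℝ≥0∞ := fun y => ∑' m : ℤ, fm ν S m y ^ (1/2:ℝ) with hgdef0
  have hgdef : ∀ x, g x = ∑' m : ℤ, fm ν S m x ^ (1/2:ℝ) := fun x => rfl
  have hgmeas : Measurable g := Measurable.ennreal_tsum fun m => (hfmeas m).pow_const _
  have hAfin : ∀ m : ℤ, (∫⁻ y, fm ν S m y ^ (1/2:ℝ) ∂ν) ≠ ⊤ := fun m =>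
    ((lint_le_two ν S hS hS' m).trans_lt (by norm_num)).ne
  have hbridge : ∀ n : ℕ, (∫ y, Real.sqrt (((ν.map ⇑((S ^ (n + 1))⁻¹)).rnDeriv ν) y).toReal ∂ν)
      = (∫⁻ y, fm ν S ((n:ℤ)+1) y ^ (1/2:ℝ) ∂ν).toReal := by
    intro n
    have hpe : (S ^ ((n+1 : ℕ)) : Equiv.Perm Y)⁻¹ = S ^ (-((n:ℤ)+1)) := by
      rw [← zpow_natCast S (n+1), ← zpow_neg]
      congr 1
    rw [hpe]
    have hfeq : (ν.map ⇑(S ^ (-((n:ℤ)+1)))).rnDeriv ν = fm ν S ((n:ℤ)+1) := rfl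
    rw [hfeq]
    have hptwise : ∀ y, Real.sqrt ((fm ν S ((n:ℤ)+1) y).toReal)
        = ((fm ν S ((n:ℤ)+1) y) ^ (1/2:ℝ)).toReal := fun y => by
      rw [Real.sqrt_eq_rpow, ENNReal.toReal_rpow]
    simp_rw [hptwise]
    refine integral_toReal ((hfmeas _).pow_const _).aemeasurable ?_
    haveI := hprob (-((n:ℤ)+1))
    filter_upwards [Measure.rnDeriv_lt_top (ν.map ⇑(S ^ (-((n:ℤ)+1)))) ν] with y hy
    exact ENNReal.rpow_lt_top_of_nonneg (by norm_num) hy.ne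
  have hsum' : Summable fun n : ℕ => (∫⁻ y, fm ν S ((n:ℤ)+1) y ^ (1/2:ℝ) ∂ν).toReal :=
    hsum.congr hbridge
  have hS1 : (∑' n : ℕ, ∫⁻ y, fm ν S ((n:ℤ)+1) y ^ (1/2:ℝ) ∂ν) ≠ ⊤ := by
    have h1 := ENNReal.ofReal_tsum_of_nonneg (fun n => ENNReal.toReal_nonneg) hsum'
    have h2 : ∑' n : ℕ, ENNReal.ofReal ((∫⁻ y, fm ν S ((n:ℤ)+1) y ^ (1/2:ℝ) ∂ν).toReal)
        = ∑' n : ℕ, ∫⁻ y, fm ν S ((n:ℤ)+1) y ^ (1/2:ℝ) ∂ν :=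
      tsum_congr fun n => ENNReal.ofReal_toReal (hAfin _)
    rw [← h2, ← h1]
    exact ENNReal.ofReal_ne_top
  have hSZ : (∑' m : ℤ, ∫⁻ y, fm ν S m y ^ (1/2:ℝ) ∂ν) ≠ ⊤ := by
    rw [← tsum_nat_add_neg_add_one ENNReal.summable, ENNReal.tsum_add]
    refine ENNReal.add_ne_top.mpr ⟨?_, ?_⟩
    · rw [tsum_eq_zero_add' ENNReal.summable]
      refine ENNReal.add_ne_top.mpr ⟨by simpa using hAfin 0, ?_⟩
      have hc : ∀ n : ℕ, (∫⁻ y, fm ν S (((n+1 : ℕ)):ℤ) y ^ (1/2:ℝ) ∂ν)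
          = ∫⁻ y, fm ν S ((n:ℤ)+1) y ^ (1/2:ℝ) ∂ν := by
        intro n
        norm_cast
      rw [tsum_congr hc]
      exact hS1
    · have hc : ∀ n : ℕ, (∫⁻ y, fm ν S (-((n:ℤ)+1)) y ^ (1/2:ℝ) ∂ν)
          = ∫⁻ y, fm ν S ((n:ℤ)+1) y ^ (1/2:ℝ) ∂ν := fun n => symm_lint ν S hS hS' hns _
      rw [tsum_congr hc]
      exact hS1
  have hglt : ∫⁻ y, g y ∂ν ≠ ⊤ := by
    simp only [hgdef0]
    rw [lintegral_tsum fun m => ((hfmeas m).pow_const _).aemeasurable]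
    exact hSZ
  have hgae : ∀ᵐ y ∂ν, g y < ⊤ := ae_lt_top hgmeas hglt
  have hGae : ∀ᵐ y ∂ν, GoodPt ν S g y := by
    have h1 : ∀ᵐ y ∂ν, ∀ n m : ℤ, fm ν S (n+m) y = fm ν S n ((S^m) y) * fm ν S m y := by
      rw [ae_all_iff]
      intro n
      rw [ae_all_iff]
      intro m
      exact chain_ae ν S hS hS' hns n m
    have h2 : ∀ᵐ y ∂ν, ∀ m : ℤ, 0 < fm ν S m y := by
      rw [ae_all_iff]
      intro m
      exact ((hac (-m)).2).ae_le (Measure.rnDeriv_pos (hac (-m)).1)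
    have h3 : ∀ᵐ y ∂ν, ∀ m : ℤ, fm ν S m y < ⊤ := by
      rw [ae_all_iff]
      intro m
      haveI := hprob (-m)
      exact Measure.rnDeriv_lt_top _ _
    have h4 : ∀ᵐ y ∂ν, fm ν S 0 y = 1 := by
      have he : fm ν S 0 = ν.rnDeriv ν := by
        show (ν.map ⇑(S ^ (-0 : ℤ))).rnDeriv ν = _
        rw [neg_zero, map_zpow_zero]
      rw [he]
      exact ν.rnDeriv_self
    filter_upwards [h1, h2, h3, h4, hgae] with y a b c d e
    exact ⟨a, b, c, d, e⟩
  set Gbad := toMeasurable ν {y | ¬ GoodPt ν S g y} with hGbad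
  have hGbadmeas : MeasurableSet Gbad := measurableSet_toMeasurable _ _
  have hGbad0 : ν Gbad = 0 := by
    rw [hGbad, measure_toMeasurable]
    exact ae_iff.mp hGae
  have hGood : ∀ y, y ∉ Gbad → GoodPt ν S g y := by
    intro y hy
    by_contra h
    exact hy (subset_toMeasurable ν _ h)
  set Gs : Set Y := ⋂ k : ℤ, (⇑(S ^ k)) ⁻¹' Gbadᶜ with hGs
  have hGsmeas : MeasurableSet Gs := MeasurableSet.iInter fun k => (hTm k) hGbadmeas.compl
  have hGsnull : ν Gsᶜ = 0 := by
    rw [hGs, compl_iInter, measure_iUnion_null_iff]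
    intro k
    have hcc : (⇑(S ^ k) ⁻¹' Gbadᶜ)ᶜ = ⇑(S ^ k) ⁻¹' Gbad := by
      rw [← preimage_compl, compl_compl]
    rw [hcc, ← Measure.map_apply (hTm k) hGbadmeas]
    exact (hac k).1 hGbad0
  have hGsmem : ∀ y ∈ Gs, ∀ k : ℤ, GoodPt ν S g ((S ^ k) y) := by
    intro y hy k
    exact hGood _ (mem_iInter.mp hy k)
  have hzero : ∀ x : Y, (S ^ (0:ℤ)) x = x := fun x => by rw [zpow_zero]; rfl
  have hGsGood : ∀ y ∈ Gs, GoodPt ν S g y := by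
    intro y hy
    have := hGsmem y hy 0
    rwa [hzero y] at this
  have hGsinv : ∀ y ∈ Gs, ∀ j : ℤ, (S ^ j) y ∈ Gs := by
    intro y hy j
    rw [hGs, mem_iInter]
    intro k
    rw [mem_preimage, ← zpow_apply_add S k j y]
    exact mem_iInter.mp hy (k + j)
  set B : Set Y := Gs ∩ ⋂ n : ℤ, {x | n ≠ 0 → ((g ((S ^ n) x))⁻¹ < (g x)⁻¹ ∨
      ((g ((S ^ n) x))⁻¹ = (g x)⁻¹ ∧ ψ ((S ^ n) x) < ψ x))} with hB
  have hBmeas : MeasurableSet B := by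
    refine hGsmeas.inter (MeasurableSet.iInter fun n => ?_)
    by_cases hn : n = 0
    · simp [hn]
    · have hmg : Measurable fun x => (g ((S ^ n) x))⁻¹ := (hgmeas.comp (hTm n)).inv
      have hmg0 : Measurable fun x => (g x)⁻¹ := hgmeas.inv
      have h1 : MeasurableSet {x : Y | (g ((S ^ n) x))⁻¹ < (g x)⁻¹} := measurableSet_lt hmg hmg0
      have h2 : MeasurableSet {x : Y | (g ((S ^ n) x))⁻¹ = (g x)⁻¹} := by
        have h2' := (measurableSet_le hmg hmg0).inter (measurableSet_le hmg0 hmg)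
        have : {x : Y | (g ((S ^ n) x))⁻¹ = (g x)⁻¹}
            = {x : Y | (g ((S ^ n) x))⁻¹ ≤ (g x)⁻¹} ∩ {x : Y | (g x)⁻¹ ≤ (g ((S ^ n) x))⁻¹} := by
          ext x
          simp [le_antisymm_iff, Set.mem_inter_iff]
        rw [this]
        exact h2'
      have h3 : MeasurableSet {x : Y | ψ ((S ^ n) x) < ψ x} :=
        measurableSet_lt (hψ.measurable.comp (hTm n)) hψ.measurable
      have hset : {x : Y | n ≠ 0 → ((g ((S ^ n) x))⁻¹ < (g x)⁻¹ ∨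
          ((g ((S ^ n) x))⁻¹ = (g x)⁻¹ ∧ ψ ((S ^ n) x) < ψ x))}
          = {x : Y | (g ((S ^ n) x))⁻¹ < (g x)⁻¹} ∪
            ({x : Y | (g ((S ^ n) x))⁻¹ = (g x)⁻¹} ∩ {x : Y | ψ ((S ^ n) x) < ψ x}) := by
        ext x
        simp [hn]
      rw [hset]
      exact h1.union (h2.inter h3)
  have hdisj : Pairwise fun m n : ℤ => Disjoint (⇑(S ^ m) '' B) (⇑(S ^ n) '' B) := by
    intro m n hmn
    rw [Set.disjoint_left]
    rintro z ⟨a, haB, hza⟩ ⟨b, hbB, hzb⟩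
    have hb : b = (S ^ (m - n)) a := by
      have h1 : (S ^ (-n)) ((S ^ n) b) = (S ^ (-n)) ((S ^ m) a) := by rw [hzb, hza]
      rw [zpow_cancel' S n b] at h1
      rw [h1, ← zpow_apply_add]
      congr 2
      ring
    have hjne : m - n ≠ 0 := sub_ne_zero.mpr hmn
    obtain ⟨haGs, haI⟩ := haB
    obtain ⟨hbGs, hbI⟩ := hbB
    have hA := (mem_iInter.mp haI (m - n)) hjne
    have ha' : (S ^ (-(m - n))) b = a := by
      rw [hb]
      exact zpow_cancel' S (m - n) a
    have hB' := (mem_iInter.mp hbI (-(m - n))) (neg_ne_zero.mpr hjne)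
    rw [ha'] at hB'
    rw [← hb] at hA
    rcases hA with h1 | ⟨h1, h2⟩ <;> rcases hB' with h3 | ⟨h3, h4⟩
    · exact absurd (h1.trans h3) (lt_irrefl _)
    · rw [h3] at h1
      exact absurd h1 (lt_irrefl _)
    · rw [h1] at h3
      exact absurd h3 (lt_irrefl _)
    · exact absurd (h2.trans h4) (lt_irrefl _)
  have hcover : univ \ (⋃ n : ℤ, ⇑(S ^ n) '' B) ⊆ Gsᶜ := by
    intro y hy
    rw [mem_compl_iff]
    intro hyGs
    apply hy.2
    have hGg := hGsGood y hyGs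
    set h : ℤ → ℝ≥0∞ := fun m => (g ((S ^ m) y))⁻¹ with hh
    have hsum1 : ∑' m : ℤ, h m = 1 := good_c_sum hgdef hGg
    have hne : ∀ m, h m ≠ 0 := by
      intro m
      have hlt := (hGsmem y hyGs m).2.2.2.2
      rw [hh]
      exact ENNReal.inv_ne_zero.mpr hlt.ne
    have htsum : ∑' m, h m ≠ ⊤ := by
      rw [hsum1]
      exact ENNReal.one_ne_top
    have hFfin : {m : ℤ | h 0 ≤ h m}.Finite :=
      ENNReal.finite_const_le_of_tsum_ne_top htsum (hne 0)
    obtain ⟨m₁, hm₁F, hm₁max⟩ := Set.exists_max_image _ h hFfin ⟨0, le_refl (h 0)⟩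
    have hmax : ∀ m, h m ≤ h m₁ := by
      intro m
      by_cases hm : h 0 ≤ h m
      · exact hm₁max m hm
      · exact (le_of_not_ge hm).trans (hm₁max 0 (le_refl (h 0)))
    have hAfin' : {m : ℤ | h m₁ ≤ h m}.Finite :=
      ENNReal.finite_const_le_of_tsum_ne_top htsum (hne m₁)
    obtain ⟨m₂, hm₂A, hm₂max⟩ :=
      Set.exists_max_image _ (fun m => ψ ((S ^ m) y)) hAfin' ⟨m₁, le_refl (h m₁)⟩
    have hm₂val : h m₁ ≤ h m₂ := hm₂A
    set x := (S ^ m₂) y with hx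
    have hxGs : x ∈ Gs := hGsinv y hyGs m₂
    have hxB : x ∈ B := by
      refine ⟨hxGs, ?_⟩
      rw [mem_iInter]
      intro n
      intro hn
      have hSnx : (S ^ n) x = (S ^ (n + m₂)) y := by
        rw [hx, ← zpow_apply_add]
      have hcn : (g ((S ^ n) x))⁻¹ = h (n + m₂) := by rw [hSnx]
      have hcx : (g x)⁻¹ = h m₂ := rfl
      have hle : h (n + m₂) ≤ h m₂ := (hmax (n+m₂)).trans hm₂val
      rcases lt_or_eq_of_le hle with hlt | heqv
      · left
        rw [hcn, hcx]
        exact hlt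
      · right
        refine ⟨by rw [hcn, hcx]; exact heqv, ?_⟩
        have hmem : (n + m₂) ∈ {m : ℤ | h m₁ ≤ h m} := by
          show h m₁ ≤ h (n + m₂)
          rw [heqv]
          exact hm₂val
        have hψle := hm₂max (n + m₂) hmem
        rcases lt_or_eq_of_le hψle with hψlt | hψeq
        · rw [hSnx]
          exact hψlt
        · exfalso
          have hptseq := hψ.injective hψeq
          have hfix : (S ^ n) x = x := by
            rw [hSnx, hptseq]
          exact good_aperiodic hgdef (hGsGood x hxGs) hn hfix
    refine mem_iUnion.mpr ⟨-m₂, ?_⟩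
    exact ⟨x, hxB, by rw [hx]; exact zpow_cancel' S m₂ y⟩
  exact ⟨B, hBmeas, hdisj, measure_mono_null hcover hGsnull⟩
end

section
/- Let S be an invertible nonsingular transformation of a standard probability space (Y,ν) such that for every n > 0 the Radon–Nikodym derivative dν/d(ν∘S^{-n}) belongs to L²(Y,ν), and set b(n) := ‖dν/d(ν∘S^{-n})‖₂². If there exists a sequence (a(n))_{n≥1} of positive reals with Σ_{n=1}^∞ a(n) = ∞ and Σ_{n=1}^∞ a(n)² b(n) < ∞, then S is conservative. -/
open MeasureTheory Filter Set

/-- A nonsingular transformation `S` of `(Y,ν)` is conservative if every measurable set of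
positive measure returns to itself with positive measure under some positive iterate. -/
def Conservative' {Y : Type*} [MeasurableSpace Y] (S : Equiv.Perm Y)
    (ν : Measure Y) : Prop :=
  ∀ B : Set Y, MeasurableSet B → 0 < ν B →
    ∃ n : ℕ, 0 < n ∧ 0 < ν (⇑(S ^ n) ⁻¹' B ∩ B)

open scoped ENNReal

lemma my_lintegral_sq_le {α : Type*} [MeasurableSpace α] (μ : Measure α) {f g : α → ℝ≥0∞}
    (hf : AEMeasurable f μ) (hg : AEMeasurable g μ) :
    (∫⁻ a, f a * g a ∂μ) ^ 2 ≤ (∫⁻ a, f a ^ 2 ∂μ) * (∫⁻ a, g a ^ 2 ∂μ) := by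
  have hpq : Real.HolderConjugate 2 2 := by rw [Real.holderConjugate_iff]; norm_num
  have h := ENNReal.lintegral_mul_le_Lp_mul_Lq μ hpq hf hg
  have e2 : ∀ x : ℝ≥0∞, x ^ (2:ℝ) = x ^ (2:ℕ) := fun x => by
    rw [← ENNReal.rpow_natCast x 2]; norm_num
  simp only [Pi.mul_apply, e2] at h
  calc (∫⁻ a, f a * g a ∂μ) ^ 2
      ≤ ((∫⁻ a, f a ^ 2 ∂μ) ^ (1/(2:ℝ)) * (∫⁻ a, g a ^ 2 ∂μ) ^ (1/(2:ℝ))) ^ 2 := by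
        exact pow_le_pow_left' h 2
    _ = (∫⁻ a, f a ^ 2 ∂μ) * (∫⁻ a, g a ^ 2 ∂μ) := by
        rw [mul_pow, ← e2, ← e2, ← ENNReal.rpow_mul, ← ENNReal.rpow_mul]
        norm_num


/-- Let `S` be an invertible nonsingular transformation of a standard probability space
`(Y,ν)` such that for each `n ≥ 1` the Radon–Nikodym derivative `dν/d(ν∘S^{-n})` is in
`L²(ν)`; set `b(n) := ‖dν/d(ν∘S^{-n})‖₂²`.  (Here `ν∘S^{-n} = ν.map S^n` is the measure
`A ↦ ν(S^{-n} A)`.)  If there are positive reals `(a(n))_{n≥1}` with `Σ a(n) = ∞` and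
`Σ a(n)² b(n) < ∞` then `S` is conservative. -/
theorem stmt1 {Y : Type*} [MeasurableSpace Y] [StandardBorelSpace Y]
    (ν : Measure Y) [IsProbabilityMeasure ν] (S : Equiv.Perm Y)
    (hS : Measurable ⇑S) (hS' : Measurable ⇑S.symm)
    (hns : ν.map ⇑S ≪ ν ∧ ν ≪ ν.map ⇑S)
    (hL2 : ∀ n : ℕ, 0 < n →
      MemLp (fun y => ((ν.rnDeriv (ν.map ⇑(S ^ n))) y).toReal) 2 ν)
    (a : ℕ → ℝ) (ha : ∀ n, 0 < a n) (hdiv : ¬ Summable a)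
    (hconv : Summable fun n : ℕ =>
      a n ^ 2 * ∫ y, (((ν.rnDeriv (ν.map ⇑(S ^ (n + 1)))) y).toReal) ^ 2 ∂ν) :
    Conservative' S ν := by
  -- measurability of powers
  have hSn : ∀ n : ℕ, Measurable ⇑(S ^ n) := fun n => by
    rw [Equiv.Perm.coe_pow]; exact hS.iterate n
  -- absolute continuity
  have hac : ∀ n : ℕ, ν ≪ ν.map ⇑(S ^ n) := by
    intro n
    induction n with
    | zero => simpa [Measure.map_id] using Measure.AbsolutelyContinuous.rfl
    | succ n ih =>
      have hmm : (ν.map ⇑S).map ⇑(S ^ n) = ν.map ⇑(S ^ (n + 1)) := by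
        rw [Measure.map_map (hSn n) hS, ← Equiv.Perm.coe_mul, ← pow_succ]
      exact ih.trans (hmm ▸ (hns.2.map (hSn n)))
  intro B hB hBpos
  by_contra hcon
  push_neg at hcon
  have hzero : ∀ n : ℕ, ν (⇑(S ^ (n + 1)) ⁻¹' B ∩ B) = 0 := fun n =>
    le_antisymm (hcon (n + 1) n.succ_pos) zero_le
  -- the wandering set
  set N : Set Y := ⋃ n : ℕ, (⇑(S ^ (n + 1)) ⁻¹' B ∩ B) with hN
  have hNnull : ν N = 0 := measure_iUnion_null hzero
  set W : Set Y := B \ N with hWdef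
  have hWmeas : MeasurableSet W :=
    hB.diff (MeasurableSet.iUnion fun n => ((hSn (n + 1)) hB).inter hB)
  have hWB : W ⊆ B := diff_subset
  have hWν : ν W = ν B := measure_diff_null hNnull
  have hWpos : 0 < ν W := hWν ▸ hBpos
  -- disjointness of preimages
  have hdisj : ∀ m n : ℕ, m < n → ⇑(S ^ m) ⁻¹' W ∩ ⇑(S ^ n) ⁻¹' W = ∅ := by
    intro m n hmn
    ext y
    simp only [mem_inter_iff, mem_preimage, mem_empty_iff_false, iff_false, not_and]
    intro hm hn
    have hk : (n - m - 1) + 1 + m = n := by omega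
    have happ : ⇑(S ^ ((n - m - 1) + 1)) (⇑(S ^ m) y) = ⇑(S ^ n) y := by
      rw [← Equiv.Perm.mul_apply, ← pow_add, hk]
    have : ⇑(S ^ m) y ∈ N := by
      refine mem_iUnion.2 ⟨n - m - 1, ?_⟩
      exact ⟨by rw [mem_preimage, happ]; exact hWB hn, hWB hm⟩
    exact hm.2 this
  -- per-n lower bound for μ_n W
  have hkey : ∀ n : ℕ, (ν W) ^ 3 ≤
      (∫⁻ y, (ν.rnDeriv (ν.map ⇑(S ^ (n+1)))) y ^ 2 ∂ν) * ν (⇑(S ^ (n+1)) ⁻¹' W) := by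
    intro n
    set μn := ν.map ⇑(S ^ (n + 1)) with hμn
    haveI : IsProbabilityMeasure μn := Measure.isProbabilityMeasure_map (hSn (n + 1)).aemeasurable
    set g := ν.rnDeriv μn with hg
    have hgm : Measurable g := Measure.measurable_rnDeriv ν μn
    have hwd : μn.withDensity g = ν := Measure.withDensity_rnDeriv_eq ν μn (hac (n + 1))
    have hmW : μn W = ν (⇑(S ^ (n+1)) ⁻¹' W) := Measure.map_apply (hSn (n+1)) hWmeas
    -- ν W = ∫⁻_W g dμn
    have h1 : ν W = ∫⁻ y in W, g y ∂μn := by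
      rw [← hwd, withDensity_apply _ hWmeas]
    -- ∫⁻_W g dν = ∫⁻_W g^2 dμn
    have h2 : ∫⁻ y in W, g y ∂ν = ∫⁻ y in W, g y ^ 2 ∂μn := by
      rw [← hwd, restrict_withDensity hWmeas,
        lintegral_withDensity_eq_lintegral_mul _ hgm hgm]
      simp [pow_two]
    -- CS over μn.restrict W : (ν W)^2 ≤ (∫⁻_W g dν) * μn W
    have h3 : (ν W) ^ 2 ≤ (∫⁻ y in W, g y ∂ν) * μn W := by
      have := my_lintegral_sq_le (μn.restrict W) hgm.aemeasurable
        (aemeasurable_const : AEMeasurable (fun _ => (1:ℝ≥0∞)) _)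
      simp only [mul_one, one_pow, lintegral_one, Measure.restrict_apply_univ] at this
      rw [h1, h2]
      exact this
    -- CS over ν.restrict W : (∫⁻_W g dν)^2 ≤ (∫⁻ g^2 dν) * ν W
    have h4 : (∫⁻ y in W, g y ∂ν) ^ 2 ≤ (∫⁻ y, g y ^ 2 ∂ν) * ν W := by
      have := my_lintegral_sq_le (ν.restrict W) hgm.aemeasurable
        (aemeasurable_const : AEMeasurable (fun _ => (1:ℝ≥0∞)) _)
      simp only [mul_one, one_pow, lintegral_one, Measure.restrict_apply_univ] at this
      exact this.trans (mul_le_mul_left (setLIntegral_le_lintegral _ _) _)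
    -- combine
    have hWfin : ν W ≠ ⊤ := (measure_lt_top ν W).ne
    have h5 : (ν W) ^ 4 ≤ (∫⁻ y, g y ^ 2 ∂ν) * ν W * (μn W) ^ 2 := by
      calc (ν W) ^ 4 = ((ν W) ^ 2) ^ 2 := by ring
        _ ≤ ((∫⁻ y in W, g y ∂ν) * μn W) ^ 2 := pow_le_pow_left' h3 2
        _ = (∫⁻ y in W, g y ∂ν) ^ 2 * (μn W) ^ 2 := by rw [mul_pow]
        _ ≤ (∫⁻ y, g y ^ 2 ∂ν) * ν W * (μn W) ^ 2 := mul_le_mul_left h4 _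
    have h6 : (ν W) ^ 4 ≤ (∫⁻ y, g y ^ 2 ∂ν) * (μn W) * ν W := by
      refine h5.trans ?_
      have : (μn W) ^ 2 ≤ μn W := by
        calc (μn W) ^ 2 = μn W * μn W := sq (μn W) ▸ rfl
          _ ≤ μn W * 1 := mul_le_mul_right prob_le_one _
          _ = μn W := mul_one _
      calc (∫⁻ y, g y ^ 2 ∂ν) * ν W * (μn W) ^ 2
          ≤ (∫⁻ y, g y ^ 2 ∂ν) * ν W * μn W := mul_le_mul_right this _
        _ = (∫⁻ y, g y ^ 2 ∂ν) * (μn W) * ν W := by ring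
    have h7 : (ν W) ^ 3 * ν W ≤ ((∫⁻ y, g y ^ 2 ∂ν) * (μn W)) * ν W := by
      calc (ν W) ^ 3 * ν W = (ν W) ^ 4 := by ring
        _ ≤ _ := h6
    rw [← hmW]
    exact (ENNReal.mul_le_mul_iff_left hWpos.ne' hWfin).mp h7
  -- pass to real numbers
  set vr : ℝ := (ν W).toReal with hvr
  have hvrpos : 0 < vr := ENNReal.toReal_pos hWpos.ne' (measure_lt_top ν W).ne
  set br : ℕ → ℝ := fun n => ∫ y, ((ν.rnDeriv (ν.map ⇑(S ^ (n + 1)))) y).toReal ^ 2 ∂ν with hbr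
  have hbr_nonneg : ∀ n, 0 ≤ br n := fun n => integral_nonneg fun y => sq_nonneg _
  have hBeq : ∀ n : ℕ, (∫⁻ y, (ν.rnDeriv (ν.map ⇑(S ^ (n+1)))) y ^ 2 ∂ν)
      = ENNReal.ofReal (br n) := by
    intro n
    have hint : Integrable (fun y => ((ν.rnDeriv (ν.map ⇑(S ^ (n + 1)))) y).toReal ^ 2) ν :=
      (hL2 (n + 1) n.succ_pos).integrable_sq
    rw [hbr, MeasureTheory.ofReal_integral_eq_lintegral_ofReal hint
      (Filter.Eventually.of_forall fun y => sq_nonneg _)]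
    refine lintegral_congr_ae ?_
    have hne : ∀ᵐ y ∂ν, ν.rnDeriv (ν.map ⇑(S ^ (n+1))) y ≠ ⊤ :=
      (Measure.rnDeriv_ne_top ν _).filter_mono (hac (n+1)).ae_le
    filter_upwards [hne] with y hy
    rw [ENNReal.ofReal_pow ENNReal.toReal_nonneg, ENNReal.ofReal_toReal hy]
  have hreal : ∀ n : ℕ, vr ^ 3 ≤ br n * (ν (⇑(S ^ (n+1)) ⁻¹' W)).toReal := by
    intro n
    have h := hkey n
    rw [hBeq n] at h
    have hfin : (ENNReal.ofReal (br n) * ν (⇑(S ^ (n+1)) ⁻¹' W)) ≠ ⊤ :=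
      ENNReal.mul_ne_top ENNReal.ofReal_ne_top (measure_lt_top _ _).ne
    calc vr ^ 3 = ((ν W) ^ 3).toReal := by rw [ENNReal.toReal_pow]
      _ ≤ (ENNReal.ofReal (br n) * ν (⇑(S ^ (n+1)) ⁻¹' W)).toReal := ENNReal.toReal_mono hfin h
      _ = br n * (ν (⇑(S ^ (n+1)) ⁻¹' W)).toReal := by
          rw [ENNReal.toReal_mul, ENNReal.toReal_ofReal (hbr_nonneg n)]
  have hmr_nonneg : ∀ n : ℕ, 0 ≤ (ν (⇑(S ^ (n+1)) ⁻¹' W)).toReal := fun n => ENNReal.toReal_nonneg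
  have hbrpos : ∀ n, 0 < br n := by
    intro n
    have h := hreal n
    nlinarith [pow_pos hvrpos 3, hmr_nonneg n, hbr_nonneg n]
  have hsum_m : ∀ Nn : ℕ, ∑ i ∈ Finset.range Nn, (ν (⇑(S ^ (i+1)) ⁻¹' W)).toReal ≤ 1 := by
    intro Nn
    have hd : (↑(Finset.range Nn) : Set ℕ).PairwiseDisjoint (fun i => ⇑(S ^ (i+1)) ⁻¹' W) := by
      intro i _ j _ hij
      rcases hij.lt_or_gt with h | h
      · exact Set.disjoint_iff_inter_eq_empty.2 (hdisj (i+1) (j+1) (by omega))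
      · exact (Set.disjoint_iff_inter_eq_empty.2 (hdisj (j+1) (i+1) (by omega))).symm
    have hmeq := measure_biUnion_finset (μ := ν) hd (fun i _ => (hSn (i+1)) hWmeas)
    have hle : ∑ i ∈ Finset.range Nn, ν (⇑(S ^ (i+1)) ⁻¹' W) ≤ 1 := by
      rw [← hmeq]; exact prob_le_one
    calc ∑ i ∈ Finset.range Nn, (ν (⇑(S ^ (i+1)) ⁻¹' W)).toReal
        = (∑ i ∈ Finset.range Nn, ν (⇑(S ^ (i+1)) ⁻¹' W)).toReal :=
          (ENNReal.toReal_sum (fun i _ => (measure_lt_top _ _).ne)).symm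
      _ ≤ (1 : ℝ≥0∞).toReal := ENNReal.toReal_mono ENNReal.one_ne_top hle
      _ = 1 := by simp
  have hsum_inv : ∀ Nn : ℕ, ∑ i ∈ Finset.range Nn, (br i)⁻¹ ≤ (vr ^ 3)⁻¹ := by
    intro Nn
    have hv3 : 0 < vr ^ 3 := pow_pos hvrpos 3
    have h1 : ∀ i : ℕ, vr ^ 3 * (br i)⁻¹ ≤ (ν (⇑(S ^ (i+1)) ⁻¹' W)).toReal := by
      intro i
      rw [← div_eq_mul_inv, div_le_iff₀ (hbrpos i)]
      linarith [hreal i, mul_comm (br i) ((ν (⇑(S ^ (i+1)) ⁻¹' W)).toReal)]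
    have h2 : vr ^ 3 * ∑ i ∈ Finset.range Nn, (br i)⁻¹ ≤ 1 := by
      rw [Finset.mul_sum]
      exact le_trans (Finset.sum_le_sum fun i _ => h1 i) (hsum_m Nn)
    rw [inv_eq_one_div, le_div_iff₀ hv3]
    linarith [h2, mul_comm (vr ^ 3) (∑ i ∈ Finset.range Nn, (br i)⁻¹)]
  -- Cauchy–Schwarz on partial sums
  set K : ℝ := ∑' n, a n ^ 2 * br n with hK
  have hKn : ∀ n : ℕ, 0 ≤ a n ^ 2 * br n := fun n => mul_nonneg (sq_nonneg _) (hbr_nonneg n)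
  have hK0 : 0 ≤ K := tsum_nonneg hKn
  have hpartial : ∀ Nn : ℕ, ∑ i ∈ Finset.range Nn, a i ≤ Real.sqrt (K * (vr ^ 3)⁻¹) := by
    intro Nn
    have hcs := Finset.sum_mul_sq_le_sq_mul_sq (Finset.range Nn)
      (fun i => a i * Real.sqrt (br i)) (fun i => (Real.sqrt (br i))⁻¹)
    have he1 : ∀ i : ℕ, a i * Real.sqrt (br i) * (Real.sqrt (br i))⁻¹ = a i := by
      intro i
      rw [mul_assoc, mul_inv_cancel₀ (ne_of_gt (Real.sqrt_pos.2 (hbrpos i))), mul_one]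
    have he2 : ∀ i : ℕ, (a i * Real.sqrt (br i)) ^ 2 = a i ^ 2 * br i := by
      intro i
      rw [mul_pow, Real.sq_sqrt (hbr_nonneg i)]
    have he3 : ∀ i : ℕ, ((Real.sqrt (br i))⁻¹) ^ 2 = (br i)⁻¹ := by
      intro i
      rw [inv_pow, Real.sq_sqrt (hbr_nonneg i)]
    simp only [he1, he2, he3] at hcs
    have hA : ∑ i ∈ Finset.range Nn, a i ^ 2 * br i ≤ K :=
      Summable.sum_le_tsum (Finset.range Nn) (fun i _ => hKn i) hconv
    have hbound : (∑ i ∈ Finset.range Nn, a i) ^ 2 ≤ K * (vr ^ 3)⁻¹ := by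
      refine hcs.trans (mul_le_mul hA (hsum_inv Nn) ?_ hK0)
      exact Finset.sum_nonneg fun i _ => inv_nonneg.2 (hbr_nonneg i)
    have hsnn : 0 ≤ ∑ i ∈ Finset.range Nn, a i :=
      Finset.sum_nonneg fun i _ => (ha i).le
    calc ∑ i ∈ Finset.range Nn, a i
        = Real.sqrt ((∑ i ∈ Finset.range Nn, a i) ^ 2) := (Real.sqrt_sq hsnn).symm
      _ ≤ Real.sqrt (K * (vr ^ 3)⁻¹) := Real.sqrt_le_sqrt hbound
  exact hdiv (summable_of_sum_range_le (fun n => (ha n).le) hpartial)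
end

section
/- For all reals a > 0 and b > 0, the Hellinger affinity of two Poisson distributions satisfies Σ_{k=0}^∞ √( Pois(a)({k}) · Pois(b)({k}) ) = e^{-(√a − √b)²/2}; equivalently, the squared Hellinger distance is H²(Pois(a),Pois(b)) = 1 − e^{-(√a−√b)²/2}. -/
open MeasureTheory ProbabilityTheory Nat

/-- The Poisson distribution on `ℕ` with parameter (rate) `a`. -/
noncomputable def pois (a : ℝ) : Measure ℕ := poissonMeasure a.toNNReal

lemma pois_apply (a : ℝ) (ha : 0 ≤ a) (k : ℕ) :
    (pois a {k}).toReal = Real.exp (-a) * a ^ k / k ! := by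
  rw [pois, poissonMeasure_singleton, ENNReal.toReal_ofReal (by positivity)]
  simp [ProbabilityTheory.poissonPMFReal, Real.coe_toNNReal a ha]

/-- Hellinger affinity of two Poisson distributions:
`Σ_k √(Pois(a){k} · Pois(b){k}) = exp(-(√a - √b)²/2)`; equivalently the squared Hellinger
distance is `H²(Pois(a),Pois(b)) = 1 - exp(-(√a-√b)²/2)`. -/
theorem stmt2 (a b : ℝ) (ha : 0 < a) (hb : 0 < b) :
    ∑' k : ℕ, Real.sqrt ((pois a {k}).toReal * (pois b {k}).toReal)
      = Real.exp (-(Real.sqrt a - Real.sqrt b) ^ 2 / 2) := by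
  have hab : (0:ℝ) ≤ a * b := by positivity
  have key : ∀ k : ℕ, Real.sqrt ((pois a {k}).toReal * (pois b {k}).toReal)
      = Real.exp (-((a + b) / 2)) * Real.sqrt (a * b) ^ k / k ! := by
    intro k
    rw [pois_apply a ha.le, pois_apply b hb.le]
    rw [show Real.exp (-a) * a ^ k / k ! * (Real.exp (-b) * b ^ k / k !)
        = (Real.exp (-a) * Real.exp (-b)) * (a * b) ^ k / (k ! * k !) by ring]
    rw [← Real.exp_add, Real.sqrt_div' _ (by positivity),
      Real.sqrt_mul (by positivity),
      show Real.sqrt ((a*b)^k) = Real.sqrt (a*b) ^ k by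
        rw [← Real.rpow_natCast (a*b) k, ← Real.rpow_natCast (Real.sqrt (a*b)) k,
          Real.sqrt_eq_rpow, Real.sqrt_eq_rpow, ← Real.rpow_mul hab,
          ← Real.rpow_mul (by positivity), mul_comm (k:ℝ) (1/2)],
      show ((k ! : ℝ) * k !) = (k ! : ℝ) ^ 2 by ring, Real.sqrt_sq (by positivity)]
    congr 2
    rw [Real.sqrt_eq_iff_eq_sq (by positivity) (Real.exp_nonneg _), ← Real.exp_nat_mul]
    congr 1
    push_cast
    ring
  rw [tsum_congr key]
  have hsum : ∑' k : ℕ, Real.sqrt (a * b) ^ k / (k ! : ℝ) = Real.exp (Real.sqrt (a * b)) := by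
    rw [Real.exp_eq_exp_ℝ, NormedSpace.exp_eq_tsum_div]
  simp_rw [mul_div_assoc]
  rw [tsum_mul_left, hsum, ← Real.exp_add]
  congr 1
  have : Real.sqrt (a * b) = Real.sqrt a * Real.sqrt b := Real.sqrt_mul ha.le b
  rw [this]
  have hsa : Real.sqrt a ^ 2 = a := Real.sq_sqrt ha.le
  have hsb : Real.sqrt b ^ 2 = b := Real.sq_sqrt hb.le
  nlinarith [hsa, hsb]
end

section
/- Let (a_n)_{n∈ℤ} be positive reals. The two product probability measures ⊗_{n∈ℤ} Pois(a_{n-1}) and η = ⊗_{n∈ℤ} Pois(a_n) on ℕ^ℤ are mutually absolutely continuous (equivalently, the shift σ is η-nonsingular, since the pushforward of η under σ^{-1} is ⊗_{n∈ℤ} Pois(a_{n-1})) if and only if Σ_{n∈ℤ} (√(a_{n-1}) − √(a_n))² < ∞. -/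
open MeasureTheory ProbabilityTheory

/-- `IsProductOf η μ` says that `η` is the infinite product `⊗_{i} μ i` of the probability
measures `μ i`, i.e. `η` gives each cylinder set the corresponding product value. -/
def IsProductOf {ι : Type*} [MeasurableSpace ι] (η : Measure (ι → ℕ)) (μ : ι → Measure ℕ) : Prop :=
  ∀ (F : Finset ι) (v : ι → ℕ), η {y | ∀ i ∈ F, y i = v i} = ∏ i ∈ F, μ i {v i}

open MeasureTheory ProbabilityTheory Filter Set
open scoped ENNReal NNReal Topology

namespace Kaku

noncomputable def pp (c : ℝ) (k : ℕ) : ℝ := Real.exp (-c) * c ^ k / (Nat.factorial k)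

lemma pp_pos {c : ℝ} (hc : 0 < c) (k : ℕ) : 0 < pp c k := by
  unfold pp
  positivity

lemma pp_nonneg {c : ℝ} (hc : 0 < c) (k : ℕ) : 0 ≤ pp c k := (pp_pos hc k).le

lemma pp_eq {c : ℝ} (hc : 0 ≤ c) : pp c = poissonPMFReal c.toNNReal := by
  funext k
  unfold pp poissonPMFReal
  rw [Real.coe_toNNReal c hc]

lemma hasSum_pp {c : ℝ} (hc : 0 ≤ c) : HasSum (pp c) 1 := by
  rw [pp_eq hc]; exact poissonPMFRealSum c.toNNReal

lemma pois_apply {c : ℝ} (hc : 0 ≤ c) (k : ℕ) :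
    pois c {k} = ENNReal.ofReal (pp c k) := by
  rw [pois, poissonMeasure_singleton]
  rw [pp_eq hc]
  rfl

lemma hasSum_hellinger {c d : ℝ} (hc : 0 < c) (hd : 0 < d) :
    HasSum (fun k => Real.sqrt (pp d k * pp c k))
      (Real.exp (-(Real.sqrt d - Real.sqrt c) ^ 2 / 2)) := by
  have key : ∀ k : ℕ, Real.sqrt (pp d k * pp c k)
      = Real.exp (-(c + d) / 2) * (Real.sqrt (d * c) ^ k / (Nat.factorial k : ℝ)) := by
    intro k
    have he : Real.exp (-(c + d)) = Real.exp (-d) * Real.exp (-c) := by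
      rw [← Real.exp_add]; ring_nf
    have h1 : pp d k * pp c k
        = Real.exp (-(c + d)) * ((d * c) ^ k / ((Nat.factorial k : ℝ)) ^ 2) := by
      rw [he]; unfold pp; ring
    have hpow : ((d * c) ^ k : ℝ) = (Real.sqrt (d * c) ^ k) ^ 2 := by
      rw [← pow_mul, mul_comm k 2, pow_mul, Real.sq_sqrt (by positivity)]
    rw [h1, Real.sqrt_mul (Real.exp_nonneg _), ← Real.exp_half, hpow,
      ← div_pow, Real.sqrt_sq (by positivity)]
  have h2 : HasSum (fun k : ℕ => Real.sqrt (d * c) ^ k / (Nat.factorial k : ℝ))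
      (Real.exp (Real.sqrt (d * c))) := by
    rw [Real.exp_eq_exp_ℝ]
    exact NormedSpace.expSeries_div_hasSum_exp _
  have h3 := h2.mul_left (Real.exp (-(c + d) / 2))
  rw [← Real.exp_add] at h3
  have h4 : -(c + d) / 2 + Real.sqrt (d * c) = -(Real.sqrt d - Real.sqrt c) ^ 2 / 2 := by
    have hdc : Real.sqrt (d * c) = Real.sqrt d * Real.sqrt c := Real.sqrt_mul hd.le c
    have h5 : Real.sqrt d ^ 2 = d := Real.sq_sqrt hd.le
    have h6 : Real.sqrt c ^ 2 = c := Real.sq_sqrt hc.le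
    rw [hdc]; nlinarith [h5, h6]
  rw [h4] at h3
  refine HasSum.congr_fun h3 ?_
  intro k
  exact key k


def cyl (E : Finset ℤ) (v : ℤ → ℕ) : Set (ℤ → ℕ) := {y | ∀ i ∈ E, y i = v i}

lemma measurableSet_cyl (E : Finset ℤ) (v : ℤ → ℕ) : MeasurableSet (cyl E v) := by
  have h : cyl E v = ⋂ i ∈ (E : Set ℤ), (fun y : ℤ → ℕ => y i) ⁻¹' {v i} := by
    ext y; simp [cyl]
  rw [h]
  exact MeasurableSet.biInter (E : Set ℤ).to_countable fun i _ =>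
    measurable_pi_apply i (measurableSet_singleton _)

lemma measurable_prodeval (F : Finset ℤ) (h : ℤ → ℕ → ℝ≥0∞) :
    Measurable fun y : ℤ → ℕ => ∏ i ∈ F, h i (y i) :=
  Finset.measurable_prod _ fun i _ =>
    (Measurable.of_discrete (f := h i)).comp (measurable_pi_apply i)

lemma measurable_prodeval_real (F : Finset ℤ) (h : ℤ → ℕ → ℝ) :
    Measurable fun y : ℤ → ℕ => ∏ i ∈ F, h i (y i) :=
  Finset.measurable_prod _ fun i _ =>
    (Measurable.of_discrete (f := h i)).comp (measurable_pi_apply i)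

variable {η : Measure (ℤ → ℕ)} {μ : ℤ → Measure ℕ}

lemma lintegral_cyl_prod (hη : IsProductOf η μ) (F : Finset ℤ) :
    ∀ E : Finset ℤ, Disjoint F E → ∀ (v : ℤ → ℕ) (h : ℤ → ℕ → ℝ≥0∞),
    ∫⁻ y in cyl E v, ∏ i ∈ F, h i (y i) ∂η
      = (∏ i ∈ E, μ i {v i}) * ∏ i ∈ F, ∑' k, h i k * μ i {k} := by
  induction F using Finset.induction_on with
  | empty =>
    intro E _ v h
    simp only [Finset.prod_empty, mul_one]
    rw [setLIntegral_one]
    exact hη E v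
  | @insert a F' haF' IH =>
    intro E hdisj v h
    have haE : a ∉ E := fun hmem =>
      (Finset.disjoint_left.1 hdisj (Finset.mem_insert_self a F')) hmem
    have hF'E : Disjoint F' E :=
      Finset.disjoint_of_subset_left (Finset.subset_insert a F') hdisj
    -- pointwise decomposition
    have hpt : ∀ y : ℤ → ℕ, ∏ i ∈ insert a F', h i (y i)
        = ∑' k : ℕ, Set.indicator ((fun y' : ℤ → ℕ => y' a) ⁻¹' {k})
            (fun y' => h a k * ∏ i ∈ F', h i (y' i)) y := by
      intro y
      rw [Finset.prod_insert haF']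
      have := tsum_eq_single (L := SummationFilter.unconditional ℕ) (f := fun k : ℕ => Set.indicator ((fun y' : ℤ → ℕ => y' a) ⁻¹' {k})
          (fun y' => h a k * ∏ i ∈ F', h i (y' i)) y) (y a) (fun k hk => by
        apply Set.indicator_of_notMem
        simp [hk.symm])
      rw [this]
      simp
    calc ∫⁻ y in cyl E v, ∏ i ∈ insert a F', h i (y i) ∂η
        = ∫⁻ y in cyl E v, ∑' k : ℕ, Set.indicator ((fun y' : ℤ → ℕ => y' a) ⁻¹' {k})
            (fun y' => h a k * ∏ i ∈ F', h i (y' i)) y ∂η := by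
          exact lintegral_congr hpt
      _ = ∑' k : ℕ, ∫⁻ y in cyl E v, Set.indicator ((fun y' : ℤ → ℕ => y' a) ⁻¹' {k})
            (fun y' => h a k * ∏ i ∈ F', h i (y' i)) y ∂η := by
          refine lintegral_tsum fun k => Measurable.aemeasurable ?_
          exact Measurable.indicator
            ((measurable_prodeval F' h).const_mul _)
            (measurable_pi_apply a (measurableSet_singleton k))
      _ = ∑' k : ℕ, (h a k * μ a {k}) *
            ((∏ i ∈ E, μ i {v i}) * ∏ i ∈ F', ∑' m, h i m * μ i {m}) := by
          refine tsum_congr fun k => ?_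
          have hmeas : MeasurableSet ((fun y' : ℤ → ℕ => y' a) ⁻¹' {k}) :=
            measurable_pi_apply a (measurableSet_singleton k)
          rw [lintegral_indicator hmeas, Measure.restrict_restrict hmeas]
          have hset : (fun y' : ℤ → ℕ => y' a) ⁻¹' {k} ∩ cyl E v
              = cyl (insert a E) (Function.update v a k) := by
            ext y
            simp only [Set.mem_inter_iff, Set.mem_preimage, Set.mem_singleton_iff, cyl,
              Set.mem_setOf_eq, Finset.mem_insert]
            constructor
            · rintro ⟨h1, h2⟩ i hi
              rcases hi with rfl | hi
              · rwa [Function.update_self]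
              · rw [Function.update_of_ne (fun hia => haE (by rwa [hia] at hi)) _ _]
                exact h2 i hi
            · intro hy
              refine ⟨by simpa [Function.update_self] using hy a (Or.inl rfl), fun i hi => ?_⟩
              have := hy i (Or.inr hi)
              rwa [Function.update_of_ne (fun hia => haE (by rwa [hia] at hi)) _ _] at this
          rw [hset, lintegral_const_mul _ (measurable_prodeval F' h)]
          have hdisj' : Disjoint F' (insert a E) := by
            rw [Finset.disjoint_insert_right]
            exact ⟨haF', hF'E⟩
          rw [IH (insert a E) hdisj' (Function.update v a k) h]
          rw [Finset.prod_insert haE, Function.update_self]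
          have hprod : ∏ i ∈ E, μ i {Function.update v a k i} = ∏ i ∈ E, μ i {v i} :=
            Finset.prod_congr rfl fun i hi => by
              rw [Function.update_of_ne (fun hia => haE (by rwa [hia] at hi)) _ _]
          rw [hprod]
          ring
      _ = (∏ i ∈ E, μ i {v i}) * ∏ i ∈ insert a F', ∑' k, h i k * μ i {k} := by
          rw [ENNReal.tsum_mul_right, Finset.prod_insert haF']
          ring

lemma lintegral_prod_eval (hη : IsProductOf η μ) (F : Finset ℤ) (h : ℤ → ℕ → ℝ≥0∞) :
    ∫⁻ y, ∏ i ∈ F, h i (y i) ∂η = ∏ i ∈ F, ∑' k, h i k * μ i {k} := by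
  have := lintegral_cyl_prod hη F ∅ (Finset.disjoint_empty_right F) (fun _ => 0) h
  have huniv : cyl ∅ (fun _ => 0) = Set.univ := by ext y; simp [cyl]
  rwa [huniv, Measure.restrict_univ, Finset.prod_empty, one_mul] at this

def cylSets : Set (Set (ℤ → ℕ)) := {s | ∃ E v, s = cyl E v}

lemma generateFrom_cylSets :
    (inferInstance : MeasurableSpace (ℤ → ℕ)) = MeasurableSpace.generateFrom cylSets := by
  refine le_antisymm ?_ ?_
  · rw [show (inferInstance : MeasurableSpace (ℤ → ℕ)) = MeasurableSpace.pi from rfl,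
      MeasurableSpace.pi]
    refine iSup_le fun i => ?_
    intro s hs
    obtain ⟨s', _, rfl⟩ := hs
    have : (fun y : ℤ → ℕ => y i) ⁻¹' s' = ⋃ k ∈ s', (fun y : ℤ → ℕ => y i) ⁻¹' {k} := by
      ext y; simp
    rw [this]
    refine MeasurableSet.biUnion s'.to_countable fun k _ =>
      MeasurableSpace.measurableSet_generateFrom ⟨{i}, fun _ => k, ?_⟩
    ext y; simp [cyl]
  · rw [MeasurableSpace.generateFrom_le_iff]
    rintro s ⟨E, v, rfl⟩
    exact measurableSet_cyl E v

lemma isPiSystem_cylSets : IsPiSystem cylSets := by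
  rintro s ⟨E1, v1, rfl⟩ t ⟨E2, v2, rfl⟩ hne
  obtain ⟨y0, hy1, hy2⟩ := hne
  refine ⟨E1 ∪ E2, fun i => if i ∈ E1 then v1 i else v2 i, ?_⟩
  ext y
  simp only [cyl, Set.mem_inter_iff, Set.mem_setOf_eq, Finset.mem_union]
  constructor
  · rintro ⟨h1, h2⟩ i hi
    by_cases hi1 : i ∈ E1
    · rw [if_pos hi1]; exact h1 i hi1
    · rw [if_neg hi1]; exact h2 i (hi.resolve_left hi1)
  · intro hh
    refine ⟨fun i hi => ?_, fun i hi => ?_⟩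
    · have := hh i (Or.inl hi); rwa [if_pos hi] at this
    · have := hh i (Or.inr hi)
      by_cases hi1 : i ∈ E1
      · rw [if_pos hi1] at this
        rw [this, ← hy1 i hi1]
        exact hy2 i hi
      · rwa [if_neg hi1] at this

lemma integral_prod_eval {η : Measure (ℤ → ℕ)} {μ : ℤ → Measure ℕ} (hη : IsProductOf η μ)
    {w : ℤ → ℕ → ℝ} (hμ : ∀ i k, μ i {k} = ENNReal.ofReal (w i k)) (hw : ∀ i k, 0 ≤ w i k)
    (F : Finset ℤ) (h : ℤ → ℕ → ℝ) (h0 : ∀ i k, 0 ≤ h i k) (c : ℤ → ℝ)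
    (hc : ∀ i ∈ F, HasSum (fun k => h i k * w i k) (c i)) :
    Integrable (fun y => ∏ i ∈ F, h i (y i)) η ∧
      ∫ y, ∏ i ∈ F, h i (y i) ∂η = ∏ i ∈ F, c i := by
  have hmeas := measurable_prodeval_real F h
  have hnn : ∀ y : ℤ → ℕ, 0 ≤ ∏ i ∈ F, h i (y i) :=
    fun y => Finset.prod_nonneg fun i _ => h0 i _
  have hcnn : ∀ i ∈ F, 0 ≤ c i := fun i hi => by
    rw [← (hc i hi).tsum_eq]
    exact tsum_nonneg fun k => mul_nonneg (h0 _ _) (hw _ _)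
  have hlin : ∫⁻ y, ENNReal.ofReal (∏ i ∈ F, h i (y i)) ∂η
      = ENNReal.ofReal (∏ i ∈ F, c i) := by
    have hp : ∀ y : ℤ → ℕ, ENNReal.ofReal (∏ i ∈ F, h i (y i))
        = ∏ i ∈ F, ENNReal.ofReal (h i (y i)) :=
      fun y => ENNReal.ofReal_prod_of_nonneg fun i _ => h0 i _
    rw [lintegral_congr hp, lintegral_prod_eval hη F (fun i k => ENNReal.ofReal (h i k)),
      ENNReal.ofReal_prod_of_nonneg hcnn]
    refine Finset.prod_congr rfl fun i hi => ?_
    calc ∑' k, ENNReal.ofReal (h i k) * μ i {k}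
        = ∑' k, ENNReal.ofReal (h i k * w i k) := tsum_congr fun k => by
          rw [hμ i k, ← ENNReal.ofReal_mul (h0 i k)]
      _ = ENNReal.ofReal (c i) := by
          rw [← ENNReal.ofReal_tsum_of_nonneg (fun k => mul_nonneg (h0 _ _) (hw _ _))
            (hc i hi).summable, (hc i hi).tsum_eq]
  have hint : Integrable (fun y => ∏ i ∈ F, h i (y i)) η := by
    refine ⟨hmeas.aestronglyMeasurable, ?_⟩
    rw [hasFiniteIntegral_iff_ofReal (ae_of_all _ hnn), hlin]
    exact ENNReal.ofReal_lt_top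
  refine ⟨hint, ?_⟩
  rw [integral_eq_lintegral_of_nonneg_ae (ae_of_all _ hnn) hmeas.aestronglyMeasurable, hlin,
    ENNReal.toReal_ofReal (Finset.prod_nonneg hcnn)]

lemma ratio_mul_pp {c d : ℝ} (hc : 0 < c) (hd : 0 < d) (k : ℕ) :
    Real.sqrt (pp d k) / Real.sqrt (pp c k) * pp c k = Real.sqrt (pp d k * pp c k) := by
  have h1 := pp_pos hc k
  have h2 := pp_pos hd k
  have h3 : Real.sqrt (pp c k) ≠ 0 := by positivity
  rw [Real.sqrt_mul (pp_nonneg hd k), div_mul_eq_mul_div, div_eq_iff h3, mul_assoc,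
    Real.mul_self_sqrt (pp_nonneg hc k)]

lemma tsum_ratio_half {c d : ℝ} (hc : 0 < c) (hd : 0 < d) :
    ∑' k, ENNReal.ofReal (Real.sqrt (pp d k) / Real.sqrt (pp c k)) * pois c {k}
      = ENNReal.ofReal (Real.exp (-(Real.sqrt d - Real.sqrt c) ^ 2 / 2)) := by
  have hpt : ∀ k : ℕ, ENNReal.ofReal (Real.sqrt (pp d k) / Real.sqrt (pp c k)) * pois c {k}
      = ENNReal.ofReal (Real.sqrt (pp d k * pp c k)) := by
    intro k
    rw [pois_apply hc.le, ← ENNReal.ofReal_mul (by positivity), ratio_mul_pp hc hd]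
  rw [tsum_congr hpt, ← ENNReal.ofReal_tsum_of_nonneg (fun k => Real.sqrt_nonneg _)
    (hasSum_hellinger hc hd).summable, (hasSum_hellinger hc hd).tsum_eq]

lemma dir1 (b b' : ℤ → ℝ) (hb : ∀ n, 0 < b n) (hb' : ∀ n, 0 < b' n)
    {η η' : Measure (ℤ → ℕ)} (hη : IsProductOf η fun n => pois (b n))
    (hη' : IsProductOf η' fun n => pois (b' n))
    (hns : ¬ Summable fun n => (Real.sqrt (b' n) - Real.sqrt (b n)) ^ 2) :
    ∃ B : Set (ℤ → ℕ), η B = 0 ∧ η' B = 1 := by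
  set r : ℤ → ℝ := fun n => (Real.sqrt (b' n) - Real.sqrt (b n)) ^ 2 with hrdef
  have hr0 : ∀ n, 0 ≤ r n := fun n => sq_nonneg _
  have hub : ∀ C : ℝ, ∃ G : Finset ℤ, C ≤ ∑ n ∈ G, r n := by
    intro C; by_contra hcon; push_neg at hcon
    exact hns (summable_of_sum_le (fun n => hr0 n) fun G => (hcon G).le)
  choose F hF using fun j : ℕ => hub (4 * ((j : ℝ) + 1))
  set S : ℕ → ℝ := fun j => ∑ n ∈ F j, r n with hSdef
  have hS4 : ∀ j : ℕ, 4 * ((j : ℝ) + 1) ≤ S j := hF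
  have hS0 : ∀ j : ℕ, 0 ≤ S j := fun j => Finset.sum_nonneg fun n _ => hr0 n
  set φ : ℤ → ℕ → ℝ := fun n k => Real.sqrt (pp (b' n) k) / Real.sqrt (pp (b n) k) with hφdef
  set ψ : ℤ → ℕ → ℝ := fun n k => Real.sqrt (pp (b n) k) / Real.sqrt (pp (b' n) k) with hψdef
  set Y : ℕ → (ℤ → ℕ) → ℝ≥0∞ := fun j y => ∏ n ∈ F j, ENNReal.ofReal (φ n (y n)) with hYdef
  set Z : ℕ → (ℤ → ℕ) → ℝ≥0∞ := fun j y => ∏ n ∈ F j, ENNReal.ofReal (ψ n (y n)) with hZdef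
  have hYm : ∀ j, Measurable (Y j) :=
    fun j => measurable_prodeval (F j) fun n k => ENNReal.ofReal (φ n k)
  have hZm : ∀ j, Measurable (Z j) :=
    fun j => measurable_prodeval (F j) fun n k => ENNReal.ofReal (ψ n k)
  have hsq : ∀ x y : ℝ, (x - y) ^ 2 = (y - x) ^ 2 := fun x y => by ring
  have hIY : ∀ j, ∫⁻ y, Y j y ∂η = ENNReal.ofReal (Real.exp (-(S j) / 2)) := by
    intro j
    rw [hYdef]
    rw [lintegral_prod_eval hη (F j) fun n k => ENNReal.ofReal (φ n k)]
    calc ∏ n ∈ F j, ∑' k, ENNReal.ofReal (φ n k) * pois (b n) {k}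
        = ∏ n ∈ F j, ENNReal.ofReal (Real.exp (-(r n) / 2)) :=
          Finset.prod_congr rfl fun n _ => tsum_ratio_half (hb n) (hb' n)
      _ = ENNReal.ofReal (∏ n ∈ F j, Real.exp (-(r n) / 2)) :=
          (ENNReal.ofReal_prod_of_nonneg fun n _ => (Real.exp_pos _).le).symm
      _ = ENNReal.ofReal (Real.exp (-(S j) / 2)) := by
          rw [← Real.exp_sum]
          congr 1
          rw [hSdef]
          rw [← Finset.sum_div, ← Finset.sum_neg_distrib]
  have hIZ : ∀ j, ∫⁻ y, Z j y ∂η' = ENNReal.ofReal (Real.exp (-(S j) / 2)) := by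
    intro j
    rw [hZdef]
    rw [lintegral_prod_eval hη' (F j) fun n k => ENNReal.ofReal (ψ n k)]
    calc ∏ n ∈ F j, ∑' k, ENNReal.ofReal (ψ n k) * pois (b' n) {k}
        = ∏ n ∈ F j, ENNReal.ofReal (Real.exp (-(r n) / 2)) := by
          refine Finset.prod_congr rfl fun n _ => ?_
          rw [tsum_ratio_half (hb' n) (hb n), hsq]
      _ = ENNReal.ofReal (∏ n ∈ F j, Real.exp (-(r n) / 2)) :=
          (ENNReal.ofReal_prod_of_nonneg fun n _ => (Real.exp_pos _).le).symm
      _ = ENNReal.ofReal (Real.exp (-(S j) / 2)) := by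
          rw [← Real.exp_sum]
          congr 1
          rw [hSdef]
          rw [← Finset.sum_div, ← Finset.sum_neg_distrib]
  set t : ℕ → ℝ≥0∞ := fun j => ENNReal.ofReal (Real.exp (-(S j) / 4)) with htdef
  have ht0 : ∀ j, t j ≠ 0 := fun j => (ENNReal.ofReal_pos.2 (Real.exp_pos _)).ne'
  have httop : ∀ j, t j ≠ ∞ := fun j => ENNReal.ofReal_ne_top
  set q : ℝ≥0∞ := ENNReal.ofReal (Real.exp (-1)) with hqdef
  have hq1 : q < 1 := ENNReal.ofReal_lt_one.2 (Real.exp_lt_one_iff.2 (by norm_num))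
  have hqb : ∀ j : ℕ, ENNReal.ofReal (Real.exp (-(S j) / 4)) ≤ q ^ (j + 1) := by
    intro j
    have h1 : Real.exp (-(S j) / 4) ≤ Real.exp (-((j : ℝ) + 1)) := by
      apply Real.exp_le_exp.2
      have := hS4 j
      linarith
    have h2 : Real.exp (-((j : ℝ) + 1)) = Real.exp (-1) ^ (j + 1) := by
      rw [← Real.exp_nat_mul]
      congr 1
      push_cast
      ring
    calc ENNReal.ofReal (Real.exp (-(S j) / 4)) ≤ ENNReal.ofReal (Real.exp (-((j : ℝ) + 1))) :=
          ENNReal.ofReal_le_ofReal h1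
      _ = q ^ (j + 1) := by rw [h2, ENNReal.ofReal_pow (Real.exp_nonneg _)]
  -- Markov bounds
  set Bad : ℕ → Set (ℤ → ℕ) := fun j => {y | t j ≤ Y j y} with hBaddef
  have hBadm : ∀ j, MeasurableSet (Bad j) := fun j => measurableSet_le measurable_const (hYm j)
  have hYb : ∀ j, η (Bad j) ≤ q ^ (j + 1) := by
    intro j
    refine le_trans (le_trans (meas_ge_le_lintegral_div (hYm j).aemeasurable (ht0 j) (httop j)) ?_)
      (hqb j)
    rw [hIY j, htdef, ← ENNReal.ofReal_div_of_pos (Real.exp_pos _), ← Real.exp_sub]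
    apply ENNReal.ofReal_le_ofReal
    apply Real.exp_le_exp.2
    linarith
  have hYZ : ∀ j y, Y j y * Z j y = 1 := by
    intro j y
    rw [hYdef, hZdef, ← Finset.prod_mul_distrib]
    rw [show (1 : ℝ≥0∞) = ∏ _n ∈ F j, 1 from (Finset.prod_const_one).symm]
    refine Finset.prod_congr rfl fun n _ => ?_
    have h1 : Real.sqrt (pp (b n) (y n)) ≠ 0 := by
      have := pp_pos (hb n) (y n); positivity
    have h2 : Real.sqrt (pp (b' n) (y n)) ≠ 0 := by
      have := pp_pos (hb' n) (y n); positivity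
    rw [← ENNReal.ofReal_mul (by positivity), hφdef, hψdef]
    simp only
    rw [div_mul_div_comm]
    rw [mul_comm (Real.sqrt (pp (b' n) (y n)))]
    rw [div_self (by positivity), ENNReal.ofReal_one]
  have hZb : ∀ j, η' (Bad j)ᶜ ≤ q ^ (j + 1) := by
    intro j
    have hsub : (Bad j)ᶜ ⊆ {y | (t j)⁻¹ ≤ Z j y} := by
      intro y hy
      simp only [hBaddef, Set.mem_compl_iff, Set.mem_setOf_eq, not_le] at hy
      have h1 : Y j y * Z j y ≤ t j * Z j y := mul_le_mul_left hy.le _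
      rw [hYZ j y] at h1
      have h2 : (t j)⁻¹ * 1 ≤ (t j)⁻¹ * (t j * Z j y) := mul_le_mul_right h1 _
      rwa [mul_one, ← mul_assoc, ENNReal.inv_mul_cancel (ht0 j) (httop j), one_mul] at h2
    refine le_trans (measure_mono hsub) ?_
    refine le_trans (meas_ge_le_lintegral_div (hZm j).aemeasurable
      (by simp [ht0 j, httop j]) (by simp [ht0 j, httop j])) ?_
    rw [hIZ j, div_eq_mul_inv, inv_inv, htdef, ← ENNReal.ofReal_mul (Real.exp_nonneg _),
      ← Real.exp_add]
    refine le_trans (ENNReal.ofReal_le_ofReal (Real.exp_le_exp.2 ?_)) (hqb j)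
    have := hS0 j
    linarith
  -- the singular set
  set B : Set (ℤ → ℕ) := ⋂ m : ℕ, ⋃ j : ℕ, Bad (m + j) with hBdef
  have c_ne_top : (1 - q)⁻¹ ≠ ∞ := by
    rw [Ne, ENNReal.inv_eq_top, tsub_eq_zero_iff_le]
    exact not_le.2 hq1
  have hgeo : ∀ m : ℕ, η B ≤ q ^ m * (q * (1 - q)⁻¹) := by
    intro m
    refine le_trans (measure_mono (Set.iInter_subset _ m)) ?_
    refine le_trans (measure_iUnion_le _) ?_
    refine le_trans (ENNReal.tsum_le_tsum fun j => hYb (m + j)) ?_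
    have hpow : ∀ j : ℕ, q ^ (m + j + 1) = (q ^ m * q) * q ^ j := fun j => by ring
    rw [tsum_congr hpow, ENNReal.tsum_mul_left, ENNReal.tsum_geometric, mul_assoc]
  have hηB : η B = 0 := by
    have htend : Tendsto (fun m : ℕ => q ^ m * (q * (1 - q)⁻¹)) atTop (𝓝 0) := by
      have := ENNReal.Tendsto.mul_const
        (ENNReal.tendsto_pow_atTop_nhds_zero_of_lt_one hq1)
        (b := q * (1 - q)⁻¹) (Or.inr (ENNReal.mul_ne_top ENNReal.ofReal_ne_top c_ne_top))
      simpa using this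
    have hle : η B ≤ 0 := ge_of_tendsto htend (Eventually.of_forall hgeo)
    exact le_antisymm hle zero_le
  have hη'Bc : η' Bᶜ = 0 := by
    have hBc : Bᶜ = ⋃ m : ℕ, ⋂ j : ℕ, (Bad (m + j))ᶜ := by
      rw [hBdef, Set.compl_iInter]
      exact Set.iUnion_congr fun m => Set.compl_iUnion _
    rw [hBc]
    refine measure_iUnion_null fun m => ?_
    have hbd : ∀ j : ℕ, η' (⋂ j' : ℕ, (Bad (m + j'))ᶜ) ≤ q ^ j := by
      intro j
      refine le_trans (measure_mono (Set.iInter_subset _ j)) (le_trans (hZb (m + j)) ?_)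
      have : q ^ (m + j + 1) = q ^ j * q ^ (m + 1) := by ring
      rw [this]
      calc q ^ j * q ^ (m + 1) ≤ q ^ j * 1 := mul_le_mul_right (pow_le_one' hq1.le _) _
        _ = q ^ j := mul_one _
    have hle := ge_of_tendsto (ENNReal.tendsto_pow_atTop_nhds_zero_of_lt_one hq1)
      (Eventually.of_forall hbd)
    exact le_antisymm hle zero_le
  have huniv : η' Set.univ = 1 := by
    have := hη' ∅ (fun _ => 0)
    simpa using this
  refine ⟨B, hηB, ?_⟩
  have h1 : (1 : ℝ≥0∞) ≤ η' B := by
    calc (1 : ℝ≥0∞) = η' Set.univ := huniv.symm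
      _ = η' (B ∪ Bᶜ) := by rw [Set.union_compl_self]
      _ ≤ η' B + η' Bᶜ := measure_union_le _ _
      _ = η' B := by rw [hη'Bc, add_zero]
  refine le_antisymm ?_ h1
  rw [← huniv]
  exact measure_mono (Set.subset_univ B)

lemma amgm_aux {t u v : ℝ} (ht : 0 < t) (hu : 0 ≤ u) (hv : 0 ≤ v) :
    |u * v ^ 2 - u|
      ≤ (t * (u * v ^ 2 + 2 * (u * v) + u) + (u * v ^ 2 - 2 * (u * v) + u) / t) / 2 := by
  have habs : |u * v ^ 2 - u| = u * |v - 1| * (v + 1) := by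
    rw [show u * v ^ 2 - u = u * ((v - 1) * (v + 1)) by ring, abs_mul, abs_mul,
      abs_of_nonneg hu, abs_of_nonneg (by linarith : (0:ℝ) ≤ v + 1)]
    ring
  have hrhs : (t * (u * v ^ 2 + 2 * (u * v) + u) + (u * v ^ 2 - 2 * (u * v) + u) / t) / 2
      = (t ^ 2 * (u * (v + 1) ^ 2) + u * (v - 1) ^ 2) / (2 * t) := by
    field_simp
    ring
  rw [habs, hrhs, le_div_iff₀ (by positivity)]
  nlinarith [mul_nonneg hu (sq_nonneg (t * (v + 1) - |v - 1|)), sq_abs (v - 1), abs_nonneg (v - 1)]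

lemma hasSum_g {c d : ℝ} (hc : 0 < c) (hd : 0 < d) :
    HasSum (fun k => pp d k / pp c k * pp c k) 1 :=
  (hasSum_pp hd.le).congr_fun fun k => div_mul_cancel₀ _ (pp_pos hc k).ne'

lemma hasSum_sqrt_g {c d : ℝ} (hc : 0 < c) (hd : 0 < d) :
    HasSum (fun k => Real.sqrt (pp d k / pp c k) * pp c k)
      (Real.exp (-(Real.sqrt d - Real.sqrt c) ^ 2 / 2)) :=
  (hasSum_hellinger hc hd).congr_fun fun k => by
    rw [Real.sqrt_div (pp_nonneg hd k), ratio_mul_pp hc hd]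

lemma mem_Icc_sup_natAbs {E : Finset ℤ} {i : ℤ} (hi : i ∈ E) :
    i ∈ Finset.Icc (-((E.sup fun n => n.natAbs : ℕ) : ℤ)) ((E.sup fun n => n.natAbs : ℕ) : ℤ) := by
  have h : i.natAbs ≤ E.sup fun n => n.natAbs := Finset.le_sup hi
  rw [Finset.mem_Icc]
  omega

lemma dir2 (b b' : ℤ → ℝ) (hb : ∀ n, 0 < b n) (hb' : ∀ n, 0 < b' n)
    (η η' : Measure (ℤ → ℕ)) [IsProbabilityMeasure η] [IsProbabilityMeasure η']
    (hη : IsProductOf η fun n => pois (b n)) (hη' : IsProductOf η' fun n => pois (b' n))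
    (hsum : Summable fun n => (Real.sqrt (b' n) - Real.sqrt (b n)) ^ 2) : η' ≪ η := by
  set r : ℤ → ℝ := fun n => (Real.sqrt (b' n) - Real.sqrt (b n)) ^ 2 with hrdef
  have hr0 : ∀ n, 0 ≤ r n := fun n => sq_nonneg _
  set g : ℤ → ℕ → ℝ := fun n k => pp (b' n) k / pp (b n) k with hgdef
  have hg0 : ∀ n k, 0 ≤ g n k := fun n k => by
    have h1 := pp_pos (hb n) k
    have h2 := pp_pos (hb' n) k
    positivity
  have hμw : ∀ i k, (fun n => pois (b n)) i {k} = ENNReal.ofReal (pp (b i) k) :=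
    fun i k => pois_apply (hb i).le k
  have base : ∀ (G : Finset ℤ) (h : ℤ → ℕ → ℝ), (∀ i k, 0 ≤ h i k) → ∀ c : ℤ → ℝ,
      (∀ i ∈ G, HasSum (fun k => h i k * pp (b i) k) (c i)) →
      Integrable (fun y => ∏ i ∈ G, h i (y i)) η ∧
        ∫ y, ∏ i ∈ G, h i (y i) ∂η = ∏ i ∈ G, c i :=
    fun G h h0 c hc =>
      integral_prod_eval hη hμw (fun i k => pp_nonneg (hb i) k) G h h0 c hc
  set Bx : ℕ → Finset ℤ := fun N => Finset.Icc (-(N : ℤ)) N with hBxdef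
  have hBmono : ∀ {N M : ℕ}, N ≤ M → Bx N ⊆ Bx M := fun {N M} hNM =>
    Finset.Icc_subset_Icc (neg_le_neg (Int.ofNat_le.2 hNM)) (Int.ofNat_le.2 hNM)
  set ℓ : ℕ → (ℤ → ℕ) → ℝ := fun N y => ∏ n ∈ Bx N, g n (y n) with hℓdef
  have hℓmeas : ∀ N, Measurable (ℓ N) := fun N => measurable_prodeval_real (Bx N) g
  have hℓnn : ∀ (N : ℕ) (y : ℤ → ℕ), 0 ≤ ℓ N y :=
    fun N y => Finset.prod_nonneg fun i _ => hg0 i _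
  have hbase1 : ∀ N : ℕ, Integrable (ℓ N) η ∧ ∫ y, ℓ N y ∂η = 1 := by
    intro N
    have h := base (Bx N) g hg0 (fun _ => 1) fun i _ => hasSum_g (hb i) (hb' i)
    rw [Finset.prod_const_one] at h
    exact h
  have intl : ∀ N, Integrable (ℓ N) η := fun N => (hbase1 N).1
  have vall : ∀ N, ∫ y, ℓ N y ∂η = 1 := fun N => (hbase1 N).2
  -- master L¹ bound
  have master : ∀ N M : ℕ, N ≤ M → ∀ t : ℝ, 0 < t →
      ∫ y, |ℓ M y - ℓ N y| ∂η ≤ 2 * t + (∑ n ∈ Bx M \ Bx N, r n) / 2 / t := by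
    intro N M hNM t ht
    set D : Finset ℤ := Bx M \ Bx N with hDdef
    set W : (ℤ → ℕ) → ℝ := fun y => ∏ n ∈ D, Real.sqrt (g n (y n)) with hWdef
    have hWnn : ∀ y, 0 ≤ W y := fun y => Finset.prod_nonneg fun i _ => Real.sqrt_nonneg _
    set P : ℝ := ∏ n ∈ D, Real.exp (-(r n) / 2) with hPdef
    have hsplit : Bx N ∪ D = Bx M := Finset.union_sdiff_of_subset (hBmono hNM)
    have hdisjD : Disjoint (Bx N) D := Finset.disjoint_sdiff
    have hPsum : P = Real.exp (-(∑ n ∈ D, r n) / 2) := by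
      rw [hPdef, ← Real.exp_sum]
      congr 1
      rw [← Finset.sum_div, ← Finset.sum_neg_distrib]
    have hP0 : 0 ≤ P := by rw [hPsum]; exact (Real.exp_pos _).le
    have hP1 : P ≤ 1 := by
      rw [hPsum]
      exact Real.exp_le_one_iff.2 (by
        have : 0 ≤ ∑ n ∈ D, r n := Finset.sum_nonneg fun n _ => hr0 n
        linarith)
    have hPtail : 1 - P ≤ (∑ n ∈ D, r n) / 2 := by
      rw [hPsum]
      have := Real.add_one_le_exp (-(∑ n ∈ D, r n) / 2)
      linarith
    -- the mixed integral
    have hmix : Integrable (fun y => ℓ N y * W y) η ∧ ∫ y, ℓ N y * W y ∂η = P := by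
      have h := base (Bx M)
        (fun i k => if i ∈ Bx N then g i k else Real.sqrt (g i k))
        (fun i k => by split
                       · exact hg0 i k
                       · exact Real.sqrt_nonneg _)
        (fun i => if i ∈ Bx N then 1 else Real.exp (-(r i) / 2))
        (fun i _ => by
          split
          · exact hasSum_g (hb i) (hb' i)
          · exact hasSum_sqrt_g (hb i) (hb' i))
      have hpt : (fun y : ℤ → ℕ => ∏ i ∈ Bx M,
          (if i ∈ Bx N then g i (y i) else Real.sqrt (g i (y i))))
          = fun y => ℓ N y * W y := by
        funext y
        rw [← hsplit, Finset.prod_union hdisjD]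
        congr 1
        · exact Finset.prod_congr rfl fun i hi => if_pos hi
        · refine Finset.prod_congr rfl fun i hi => if_neg ?_
          exact (Finset.mem_sdiff.1 hi).2
      have hval : (∏ i ∈ Bx M, if i ∈ Bx N then (1:ℝ) else Real.exp (-(r i) / 2)) = P := by
        rw [← hsplit, Finset.prod_union hdisjD]
        rw [Finset.prod_congr rfl fun i hi => if_pos hi, Finset.prod_const_one, one_mul]
        exact Finset.prod_congr rfl fun i hi => if_neg (Finset.mem_sdiff.1 hi).2
      rw [hpt, hval] at h
      exact h
    have hMW : ∀ y, ℓ M y = ℓ N y * W y ^ 2 := by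
      intro y
      rw [hℓdef]
      simp only
      rw [← hsplit, Finset.prod_union hdisjD, hWdef]
      simp only
      rw [← Finset.prod_pow]
      congr 1
      exact Finset.prod_congr rfl fun i _ => (Real.sq_sqrt (hg0 i _)).symm
    -- the comparison function
    set A : (ℤ → ℕ) → ℝ := fun y => ℓ M y + 2 * (ℓ N y * W y) + ℓ N y with hAdef
    set Bf : (ℤ → ℕ) → ℝ := fun y => ℓ M y - 2 * (ℓ N y * W y) + ℓ N y with hBdef
    have i1 : Integrable (fun y => 2 * (ℓ N y * W y)) η := hmix.1.const_mul 2
    have i2 : Integrable (fun y => ℓ M y + 2 * (ℓ N y * W y)) η := (intl M).add i1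
    have i2' : Integrable (fun y => ℓ M y - 2 * (ℓ N y * W y)) η := (intl M).sub i1
    have hintA : Integrable A η := i2.add (intl N)
    have hintB : Integrable Bf η := i2'.add (intl N)
    have hImix : ∫ y, 2 * (ℓ N y * W y) ∂η = 2 * P := by
      rw [integral_const_mul, hmix.2]
    have hIA : ∫ y, A y ∂η = 2 + 2 * P := by
      rw [hAdef]
      simp only
      rw [integral_add i2 (intl N), integral_add (intl M) i1, hImix, vall M, vall N]
      ring
    have hIB : ∫ y, Bf y ∂η = 2 - 2 * P := by
      rw [hBdef]
      simp only
      rw [integral_add i2' (intl N), integral_sub (intl M) i1, hImix, vall M, vall N]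
      ring
    set R : (ℤ → ℕ) → ℝ := fun y => (t * A y + Bf y / t) / 2 with hRdef
    have hintR : Integrable R η := ((hintA.const_mul t).add (hintB.div_const t)).div_const 2
    have hptle : ∀ y, |ℓ M y - ℓ N y| ≤ R y := by
      intro y
      have := amgm_aux (u := ℓ N y) (v := W y) ht (hℓnn N y) (hWnn y)
      rw [hRdef, hAdef, hBdef]
      simp only
      rw [hMW y]
      convert this using 3 <;> ring
    have hIR : ∫ y, R y ∂η = (t * (2 + 2 * P) + (2 - 2 * P) / t) / 2 := by
      rw [hRdef]
      simp only
      rw [integral_div, integral_add (hintA.const_mul t) (hintB.div_const t),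
        integral_const_mul, integral_div, hIA, hIB]
    have hmono : ∫ y, |ℓ M y - ℓ N y| ∂η ≤ ∫ y, R y ∂η :=
      integral_mono ((intl M).sub (intl N)).abs hintR hptle
    rw [hIR] at hmono
    refine le_trans hmono ?_
    have h1 : t * (2 + 2 * P) ≤ 4 * t := by nlinarith
    have h2 : (2 - 2 * P) / t ≤ 2 * ((∑ n ∈ D, r n) / 2 / t) := by
      rw [div_le_iff₀ ht]
      have h3 : (∑ n ∈ D, r n) / 2 / t * t = (∑ n ∈ D, r n) / 2 :=
        div_mul_cancel₀ _ ht.ne'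
      rw [mul_assoc, h3]
      linarith
    linarith
  -- the L¹ elements
  set J : ℕ → (Lp ℝ 1 η) := fun N => (intl N).toL1 (ℓ N) with hJdef
  have hdist : ∀ N M : ℕ, dist (J M) (J N) = ∫ y, |ℓ M y - ℓ N y| ∂η := by
    intro N M
    rw [dist_eq_norm, hJdef]
    simp only
    rw [← Integrable.toL1_sub, Integrable.norm_toL1_eq_lintegral_norm]
    rw [integral_eq_lintegral_of_nonneg_ae (f := fun y => |ℓ M y - ℓ N y|) (Eventually.of_forall fun y => abs_nonneg _)
      (((hℓmeas M).sub (hℓmeas N)).abs.aestronglyMeasurable)]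
    congr 1
  have hcauchy : CauchySeq J := by
    rw [Metric.cauchySeq_iff']
    intro ε hε
    have hδ : (0:ℝ) < ε ^ 2 / 32 := by positivity
    obtain ⟨s, hs⟩ := hsum.vanishing (Iio_mem_nhds hδ)
    set N₀ : ℕ := s.sup fun n => n.natAbs with hN₀def
    refine ⟨N₀, fun n hn => ?_⟩
    have hssub : s ⊆ Bx N₀ := fun i hi => mem_Icc_sup_natAbs hi
    have hdisj : Disjoint (Bx n \ Bx N₀) s := by
      rw [Finset.disjoint_left]
      intro x hx hxs
      exact (Finset.mem_sdiff.1 hx).2 (hssub hxs)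
    have hsb : ∑ m ∈ Bx n \ Bx N₀, r m < ε ^ 2 / 32 := hs _ hdisj
    have hsb0 : 0 ≤ ∑ m ∈ Bx n \ Bx N₀, r m := Finset.sum_nonneg fun m _ => hr0 m
    have h8 : (0:ℝ) < ε / 8 := by positivity
    calc dist (J n) (J N₀) = ∫ y, |ℓ n y - ℓ N₀ y| ∂η := hdist N₀ n
      _ ≤ 2 * (ε / 8) + (∑ m ∈ Bx n \ Bx N₀, r m) / 2 / (ε / 8) := master N₀ n hn (ε / 8) h8
      _ < ε := by
          have hq : (∑ m ∈ Bx n \ Bx N₀, r m) / 2 / (ε / 8) < ε / 2 := by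
            rw [div_lt_iff₀ h8]
            nlinarith
          linarith
  obtain ⟨Λ, hΛ⟩ := cauchySeq_tendsto_of_complete hcauchy
  set Λf : (ℤ → ℕ) → ℝ := ⇑Λ with hΛfdef
  -- cylinder integrals of ℓ N
  have cylval : ∀ (E : Finset ℤ) (v : ℤ → ℕ) (N : ℕ), E ⊆ Bx N →
      ∫ y in cyl E v, ℓ N y ∂η = (η' (cyl E v)).toReal := by
    intro E v N hEB
    have h := base (Bx N)
      (fun i k => if i ∈ E then (if k = v i then g i k else 0) else g i k)
      (fun i k => by
        split
        · split
          · exact hg0 i k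
          · exact le_refl 0
        · exact hg0 i k)
      (fun i => if i ∈ E then pp (b' i) (v i) else 1)
      (fun i _ => by
        split
        · refine (hasSum_ite_eq (v i) (pp (b' i) (v i))).congr_fun fun k => ?_
          by_cases hk : k = v i
          · subst hk
            rw [if_pos rfl, if_pos rfl]
            exact div_mul_cancel₀ _ (pp_pos (hb i) _).ne'
          · rw [if_neg hk, if_neg hk, zero_mul]
        · exact hasSum_g (hb i) (hb' i))
    have hpt : (fun y : ℤ → ℕ => ∏ i ∈ Bx N,
        (if i ∈ E then (if y i = v i then g i (y i) else 0) else g i (y i)))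
        = Set.indicator (cyl E v) (ℓ N) := by
      funext y
      by_cases hy : y ∈ cyl E v
      · rw [Set.indicator_of_mem hy]
        refine Finset.prod_congr rfl fun i hi => ?_
        by_cases hiE : i ∈ E
        · rw [if_pos hiE, if_pos (hy i hiE)]
        · rw [if_neg hiE]
      · rw [Set.indicator_of_notMem hy]
        simp only [cyl, Set.mem_setOf_eq, not_forall] at hy
        obtain ⟨i, hiE, hne⟩ := hy
        exact Finset.prod_eq_zero (hEB hiE) (by rw [if_pos hiE, if_neg hne])
    have hval : (∏ i ∈ Bx N, if i ∈ E then pp (b' i) (v i) else 1)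
        = ∏ i ∈ E, pp (b' i) (v i) := by
      rw [← Finset.prod_subset hEB (fun i _ hiE => if_neg hiE)]
      exact Finset.prod_congr rfl fun i hi => if_pos hi
    rw [hpt, hval] at h
    rw [← integral_indicator (measurableSet_cyl E v), h.2]
    have hη'c : η' (cyl E v) = ENNReal.ofReal (∏ i ∈ E, pp (b' i) (v i)) := by
      rw [show η' (cyl E v) = ∏ i ∈ E, pois (b' i) {v i} from hη' E v,
        ENNReal.ofReal_prod_of_nonneg fun i _ => pp_nonneg (hb' i) _]
      exact Finset.prod_congr rfl fun i _ => pois_apply (hb' i).le _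
    rw [hη'c, ENNReal.toReal_ofReal (Finset.prod_nonneg fun i _ => pp_nonneg (hb' i) _)]
  -- limit of cylinder integrals
  have cyllim : ∀ (E : Finset ℤ) (v : ℤ → ℕ),
      ∫ y in cyl E v, Λf y ∂η = (η' (cyl E v)).toReal := by
    intro E v
    set N₁ : ℕ := E.sup fun n => n.natAbs with hN₁def
    have hEB : E ⊆ Bx N₁ := fun i hi => mem_Icc_sup_natAbs hi
    have h1 : Tendsto (fun n => ∫ y in cyl E v, (J n : (ℤ → ℕ) → ℝ) y ∂η) atTop
        (𝓝 (∫ y in cyl E v, Λf y ∂η)) :=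
      ((continuous_setIntegral (cyl E v)).tendsto Λ).comp hΛ
    have h2 : ∀ n ≥ N₁, ∫ y in cyl E v, (J n : (ℤ → ℕ) → ℝ) y ∂η = (η' (cyl E v)).toReal := by
      intro n hn
      rw [integral_congr_ae (ae_restrict_of_ae (Integrable.coeFn_toL1 (intl n)))]
      exact cylval E v n (hEB.trans (hBmono hn))
    have h3 : Tendsto (fun _ : ℕ => (η' (cyl E v)).toReal) atTop
        (𝓝 (∫ y in cyl E v, Λf y ∂η)) := by
      refine h1.congr' ?_
      filter_upwards [eventually_ge_atTop N₁] with n hn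
      exact h2 n hn
    exact tendsto_nhds_unique h3 tendsto_const_nhds
  -- nonnegativity of the limit
  have hnn : 0 ≤ᵐ[η] Λf := by
    have hel : Tendsto (fun n => eLpNorm ((J n : (ℤ → ℕ) → ℝ) - Λf) 1 η) atTop (𝓝 0) := by
      have hd : ∀ n, eLpNorm ((J n : (ℤ → ℕ) → ℝ) - Λf) 1 η
          = ENNReal.ofReal (dist (J n) Λ) := by
        intro n
        rw [dist_eq_norm, Lp.norm_def,
          ENNReal.ofReal_toReal (Lp.eLpNorm_ne_top _)]
        exact (eLpNorm_congr_ae (Lp.coeFn_sub (J n) Λ)).symm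
      have hd0 : Tendsto (fun n => dist (J n) Λ) atTop (𝓝 0) :=
        tendsto_iff_dist_tendsto_zero.1 hΛ
      have := ENNReal.tendsto_ofReal hd0
      rw [ENNReal.ofReal_zero] at this
      exact Tendsto.congr (fun n => (hd n).symm) this
    have htim := tendstoInMeasure_of_tendsto_eLpNorm (μ := η) one_ne_zero
      (fun n => Lp.aestronglyMeasurable (J n)) (Lp.aestronglyMeasurable Λ) hel
    obtain ⟨ns, _, hae⟩ := htim.exists_seq_tendsto_ae
    have hcoe : ∀ᵐ y ∂η, ∀ n : ℕ, (J n : (ℤ → ℕ) → ℝ) y = ℓ n y :=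
      ae_all_iff.2 fun n => Integrable.coeFn_toL1 (intl n)
    filter_upwards [hae, hcoe] with y h1 h2
    refine ge_of_tendsto h1 (Eventually.of_forall fun k => ?_)
    rw [h2 (ns k)]
    exact hℓnn (ns k) y
  -- the density measure
  set ν : Measure (ℤ → ℕ) := η.withDensity fun y => ENNReal.ofReal (Λf y) with hνdef
  have key : ∀ (E : Finset ℤ) (v : ℤ → ℕ), ν (cyl E v) = η' (cyl E v) := by
    intro E v
    rw [hνdef, withDensity_apply _ (measurableSet_cyl E v),
      ← ofReal_integral_eq_lintegral_ofReal ((L1.integrable_coeFn Λ).restrict)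
        (ae_restrict_of_ae hnn),
      cyllim E v, ENNReal.ofReal_toReal (measure_ne_top η' _)]
  have hcylu : cyl ∅ (fun _ => 0) = Set.univ := by
    ext y; simp [cyl]
  have hν_univ : ν Set.univ = 1 := by
    rw [← hcylu, key, hcylu, measure_univ]
  haveI : IsFiniteMeasure ν := ⟨by rw [hν_univ]; exact ENNReal.one_lt_top⟩
  have hext : ν = η' := by
    refine ext_of_generate_finite cylSets generateFrom_cylSets isPiSystem_cylSets ?_ ?_
    · rintro s ⟨E, v, rfl⟩
      exact key E v
    · rw [hν_univ, measure_univ]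
  rw [← hext, hνdef]
  exact withDensity_absolutelyContinuous η _

end Kaku

/-- Let `(a_n)_{n∈ℤ}` be positive reals.  The product measures `⊗_{n∈ℤ} Pois(a_{n-1})` and
`η = ⊗_{n∈ℤ} Pois(a_n)` on `ℕ^ℤ` are mutually absolutely continuous if and only if
`Σ_{n∈ℤ} (√(a_{n-1}) - √(a_n))² < ∞`. -/
theorem stmt3 (a : ℤ → ℝ) (ha : ∀ n, 0 < a n)
    (η η' : Measure (ℤ → ℕ)) [IsProbabilityMeasure η] [IsProbabilityMeasure η']
    (hη : IsProductOf η fun n => pois (a n))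
    (hη' : IsProductOf η' fun n => pois (a (n - 1))) :
    (η' ≪ η ∧ η ≪ η') ↔
      Summable fun n : ℤ => (Real.sqrt (a (n - 1)) - Real.sqrt (a n)) ^ 2 := by
  constructor
  · rintro ⟨h1, _⟩
    by_contra hns
    obtain ⟨B, hB0, hB1⟩ := Kaku.dir1 a (fun n => a (n - 1)) ha (fun n => ha (n - 1)) hη hη' hns
    have h0 : η' B = 0 := h1 hB0
    rw [h0] at hB1
    exact zero_ne_one hB1
  · intro hs
    have hs' : Summable fun n : ℤ => (Real.sqrt (a n) - Real.sqrt (a (n - 1))) ^ 2 :=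
      (summable_congr fun n => by ring).2 hs
    exact ⟨Kaku.dir2 a (fun n => a (n - 1)) ha (fun n => ha (n - 1)) η η' hη hη' hs,
      Kaku.dir2 (fun n => a (n - 1)) a (fun n => ha (n - 1)) ha η' η hη' hη hs'⟩
end

section
/- Let (a_n)_{n∈ℤ} and (b_n)_{n∈ℤ} be two sequences of positive reals. The infinite product probability measures ⊗_{n∈ℤ} Pois(b_n) and ⊗_{n∈ℤ} Pois(a_n) on ℕ^ℤ are mutually absolutely continuous if and only if Σ_{n∈ℤ} (√(b_n) − √(a_n))² < ∞. -/
open MeasureTheory ProbabilityTheory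
open scoped ENNReal NNReal Topology
open Filter

namespace Kak

lemma sqrt_div_mul {x y : ℝ} (hx : 0 < x) (hy : 0 < y) :
    Real.sqrt (y / x) * x = Real.sqrt (x * y) := by
  calc Real.sqrt (y / x) * x = Real.sqrt (y / x) * (Real.sqrt x * Real.sqrt x) := by
        rw [Real.mul_self_sqrt hx.le]
    _ = (Real.sqrt (y / x) * Real.sqrt x) * Real.sqrt x := by ring
    _ = Real.sqrt (y / x * x) * Real.sqrt x := by
        rw [← Real.sqrt_mul (div_nonneg hy.le hx.le)]
    _ = Real.sqrt y * Real.sqrt x := by rw [div_mul_cancel₀ _ hx.ne']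
    _ = Real.sqrt (x * y) := by rw [← Real.sqrt_mul hy.le, mul_comm]


lemma meas_prod {M : Type*} [CommMonoid M] [MeasurableSpace M] [MeasurableMul₂ M]
    (F : Finset ℤ) (f : ℤ → ℕ → M) :
    Measurable fun y : ℤ → ℕ => ∏ i ∈ F, f i (y i) :=
  Finset.measurable_prod _ fun i _ => (measurable_from_top).comp (measurable_pi_apply i)

lemma meas_coord (j : ℤ) (k : ℕ) : MeasurableSet {y' : ℤ → ℕ | y' j = k} :=
  show MeasurableSet ((fun y : ℤ → ℕ => y j) ⁻¹' {k}) from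
    measurable_pi_apply j (measurableSet_singleton _)

lemma cyl_meas (F : Finset ℤ) (v : ℤ → ℕ) :
    MeasurableSet {y : ℤ → ℕ | ∀ i ∈ F, y i = v i} := by
  have : {y : ℤ → ℕ | ∀ i ∈ F, y i = v i} = ⋂ i ∈ F, {y | y i = v i} := by
    ext y; simp
  rw [this]
  refine MeasurableSet.biInter F.countable_toSet fun i _ => ?_
  exact show MeasurableSet ((fun y : ℤ → ℕ => y i) ⁻¹' {v i}) from
    measurable_pi_apply i (measurableSet_singleton _)

variable {μs : ℤ → Measure ℕ} {η : Measure (ℤ → ℕ)}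

lemma workhorse_aux (hη : IsProductOf η μs) (F : Finset ℤ) :
    ∀ (f : ℤ → ℕ → ℝ≥0∞) (G : Finset ℤ) (v : ℤ → ℕ), Disjoint F G →
      ∫⁻ y in {y | ∀ i ∈ G, y i = v i}, ∏ i ∈ F, f i (y i) ∂η
        = (∏ i ∈ G, μs i {v i}) * ∏ i ∈ F, ∫⁻ k, f i k ∂(μs i) := by
  classical
  induction F using Finset.induction_on with
  | empty =>
    intro f G v _
    simp only [Finset.prod_empty, mul_one]
    rw [setLIntegral_one]
    exact hη G v
  | insert j F hj ih =>
    intro f G v hdis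
    have hjG : j ∉ G := (Finset.disjoint_insert_left.mp hdis).1
    have hFG : Disjoint F G := (Finset.disjoint_insert_left.mp hdis).2
    have hP : Measurable fun y : ℤ → ℕ => ∏ i ∈ F, f i (y i) := meas_prod F f
    -- pointwise expansion of coordinate j
    have hpt : ∀ y : ℤ → ℕ, (∏ i ∈ insert j F, f i (y i))
        = ∑' k : ℕ, Set.indicator {y' : ℤ → ℕ | y' j = k}
            (fun y => f j k * ∏ i ∈ F, f i (y i)) y := by
      intro y
      rw [Finset.prod_insert hj]
      symm
      have h0 : ∀ (k : ℕ), k ≠ y j → Set.indicator {y' : ℤ → ℕ | y' j = k}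
          (fun y => f j k * ∏ i ∈ F, f i (y i)) y = 0 := fun k hk =>
        Set.indicator_of_notMem (show y ∉ {y' : ℤ → ℕ | y' j = k} from fun h => hk (Eq.symm h)) _
      rw [tsum_eq_single (y j) h0]
      exact Set.indicator_of_mem (show y ∈ {y' : ℤ → ℕ | y' j = y j} from rfl) _
    calc ∫⁻ y in {y | ∀ i ∈ G, y i = v i}, ∏ i ∈ insert j F, f i (y i) ∂η
        = ∫⁻ y in {y | ∀ i ∈ G, y i = v i}, ∑' k : ℕ, Set.indicator {y' : ℤ → ℕ | y' j = k}
            (fun y => f j k * ∏ i ∈ F, f i (y i)) y ∂η := by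
          exact lintegral_congr fun y => hpt y
      _ = ∑' k : ℕ, ∫⁻ y in {y | ∀ i ∈ G, y i = v i}, Set.indicator {y' : ℤ → ℕ | y' j = k}
            (fun y => f j k * ∏ i ∈ F, f i (y i)) y ∂η := by
          refine lintegral_tsum fun k => ?_
          exact ((hP.const_mul _).indicator (meas_coord j k)).aemeasurable
      _ = ∑' k : ℕ, ∫⁻ y in {y' : ℤ → ℕ | y' j = k} ∩ {y | ∀ i ∈ G, y i = v i},
            f j k * ∏ i ∈ F, f i (y i) ∂η := by
          refine tsum_congr fun k => ?_
          rw [lintegral_indicator (meas_coord j k),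
            Measure.restrict_restrict (meas_coord j k)]
      _ = ∑' k : ℕ, f j k * (μs j {k} * ((∏ i ∈ G, μs i {v i}) * ∏ i ∈ F, ∫⁻ m, f i m ∂(μs i))) := by
          refine tsum_congr fun k => ?_
          have hset : {y' : ℤ → ℕ | y' j = k} ∩ {y | ∀ i ∈ G, y i = v i}
              = {y | ∀ i ∈ insert j G, y i = Function.update v j k i} := by
            ext y
            simp only [Set.mem_inter_iff, Set.mem_setOf_eq, Finset.mem_insert]
            constructor
            · rintro ⟨h1, h2⟩ i hi
              rcases hi with rfl | hi
              · simpa [Function.update] using h1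
              · rw [Function.update_of_ne (by rintro rfl; exact hjG hi)]
                exact h2 i hi
            · intro h
              refine ⟨by simpa [Function.update] using h j (Or.inl rfl), fun i hi => ?_⟩
              have := h i (Or.inr hi)
              rwa [Function.update_of_ne (by rintro rfl; exact hjG hi)] at this
          rw [hset, lintegral_const_mul _ hP,
            ih f (insert j G) (Function.update v j k)
              (Finset.disjoint_insert_right.mpr ⟨hj, hFG⟩)]
          have hupd : (∏ i ∈ insert j G, μs i {Function.update v j k i})
              = μs j {k} * ∏ i ∈ G, μs i {v i} := by
            rw [Finset.prod_insert hjG, Function.update_self]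
            congr 1
            exact Finset.prod_congr rfl fun i hi => by
              rw [Function.update_of_ne (by rintro rfl; exact hjG hi)]
          rw [hupd]; ring
      _ = (∫⁻ k, f j k ∂(μs j)) * ((∏ i ∈ G, μs i {v i}) * ∏ i ∈ F, ∫⁻ m, f i m ∂(μs i)) := by
          rw [lintegral_countable', ← ENNReal.tsum_mul_right]
          exact tsum_congr fun k => by ring
      _ = (∏ i ∈ G, μs i {v i}) * ∏ i ∈ insert j F, ∫⁻ k, f i k ∂(μs i) := by
          rw [Finset.prod_insert hj]; ring

lemma workhorse (hη : IsProductOf η μs) (F : Finset ℤ) (f : ℤ → ℕ → ℝ≥0∞) :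
    ∫⁻ y, ∏ i ∈ F, f i (y i) ∂η = ∏ i ∈ F, ∫⁻ k, f i k ∂(μs i) := by
  have := workhorse_aux hη F f ∅ 0 (Finset.disjoint_empty_right F)
  simpa using this


open Real

/-- real Poisson pmf -/
noncomputable def pp (c : ℝ) (k : ℕ) : ℝ := Real.exp (-c) * c ^ k / (k.factorial : ℝ)

lemma pp_pos {c : ℝ} (hc : 0 < c) (k : ℕ) : 0 < pp c k := by
  unfold pp
  positivity

lemma pp_nonneg {c : ℝ} (hc : 0 < c) (k : ℕ) : 0 ≤ pp c k := (pp_pos hc k).le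

lemma hasSum_pp {c : ℝ} (hc : 0 < c) : HasSum (pp c) 1 := by
  have := poissonPMFRealSum c.toNNReal
  unfold poissonPMFReal at this
  unfold pp
  simpa [Real.coe_toNNReal c hc.le] using this

lemma pois_singleton {c : ℝ} (hc : 0 < c) (k : ℕ) :
    pois c {k} = ENNReal.ofReal (pp c k) := by
  unfold pois poissonMeasure
  rw [Measure.sum_smul_dirac_singleton]
  unfold pp
  rw [Real.coe_toNNReal c hc.le]

lemma tsum_exp (x : ℝ) : ∑' k : ℕ, x ^ k / (k.factorial : ℝ) = Real.exp x := by
  rw [Real.exp_eq_exp_ℝ, NormedSpace.exp_eq_tsum_div]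

/-- Hellinger affinity of two Poisson distributions -/
noncomputable def rho (a b : ℝ) : ℝ := Real.exp (-((Real.sqrt b - Real.sqrt a) ^ 2 / 2))

lemma rho_pos (a b : ℝ) : 0 < rho a b := Real.exp_pos _

lemma rho_le_one (a b : ℝ) : rho a b ≤ 1 := by
  unfold rho
  rw [Real.exp_le_one_iff]
  exact neg_nonpos.mpr (by positivity)

lemma rho_comm (a b : ℝ) : rho b a = rho a b := by
  unfold rho
  rw [show Real.sqrt a - Real.sqrt b = -(Real.sqrt b - Real.sqrt a) by ring, neg_sq]

lemma sqrt_pp_mul {a b : ℝ} (ha : 0 < a) (hb : 0 < b) (k : ℕ) :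
    Real.sqrt (pp a k * pp b k)
      = Real.exp (-((a + b) / 2)) * Real.sqrt (a * b) ^ k / (k.factorial : ℝ) := by
  have hK : (0:ℝ) < (k.factorial : ℝ) := by positivity
  have key : pp a k * pp b k
      = (Real.exp (-((a + b) / 2)) * Real.sqrt (a * b) ^ k / (k.factorial : ℝ))
        * (Real.exp (-((a + b) / 2)) * Real.sqrt (a * b) ^ k / (k.factorial : ℝ)) := by
    have e1 : Real.exp (-a) * Real.exp (-b)
        = Real.exp (-((a + b) / 2)) * Real.exp (-((a + b) / 2)) := by
      rw [← Real.exp_add, ← Real.exp_add]; ring_nf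
    have e2 : (a : ℝ) ^ k * b ^ k
        = Real.sqrt (a * b) ^ k * Real.sqrt (a * b) ^ k := by
      rw [← mul_pow, ← mul_pow, Real.mul_self_sqrt (by positivity)]
    calc pp a k * pp b k
        = (Real.exp (-a) * Real.exp (-b)) * ((a:ℝ) ^ k * b ^ k)
            / ((k.factorial : ℝ) * (k.factorial : ℝ)) := by unfold pp; ring
      _ = _ := by rw [e1, e2]; ring
  rw [key, Real.sqrt_mul_self (by positivity)]

lemma hasSum_sqrt_pp {a b : ℝ} (ha : 0 < a) (hb : 0 < b) :
    HasSum (fun k => Real.sqrt (pp a k * pp b k)) (rho a b) := by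
  have hsum : HasSum (fun k : ℕ => Real.exp (-((a + b) / 2))
      * (Real.sqrt (a * b) ^ k / (k.factorial : ℝ)))
      (Real.exp (-((a + b) / 2)) * Real.exp (Real.sqrt (a * b))) :=
    ((Real.summable_pow_div_factorial (Real.sqrt (a * b))).hasSum_iff.mpr
      (tsum_exp _)).mul_left _
  have hval : Real.exp (-((a + b) / 2)) * Real.exp (Real.sqrt (a * b)) = rho a b := by
    rw [← Real.exp_add]
    unfold rho
    congr 1
    rw [sub_sq, Real.sq_sqrt hb.le, Real.sq_sqrt ha.le,
      show 2 * Real.sqrt b * Real.sqrt a = 2 * Real.sqrt (a * b) by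
        rw [Real.sqrt_mul ha.le b]; ring]
    ring
  rw [← hval]
  refine hsum.congr_fun fun k => ?_
  rw [sqrt_pp_mul ha hb k]; ring

lemma summable_sqrt_pp {a b : ℝ} (ha : 0 < a) (hb : 0 < b) :
    Summable (fun k => Real.sqrt (pp a k * pp b k)) := (hasSum_sqrt_pp ha hb).summable

-- single coordinate integrals
lemma S1 {a b : ℝ} (ha : 0 < a) (hb : 0 < b) :
    ∫⁻ k, ENNReal.ofReal (pp b k / pp a k) ∂(pois a) = 1 := by
  rw [lintegral_countable']
  have : ∀ k : ℕ, ENNReal.ofReal (pp b k / pp a k) * (pois a) {k}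
      = ENNReal.ofReal (pp b k) := by
    intro k
    rw [pois_singleton ha,
      ← ENNReal.ofReal_mul (div_nonneg (pp_nonneg hb k) (pp_nonneg ha k)),
      div_mul_cancel₀ _ (pp_pos ha k).ne']
  rw [tsum_congr this, ← ENNReal.ofReal_tsum_of_nonneg (fun k => pp_nonneg hb k)
    (hasSum_pp hb).summable, (hasSum_pp hb).tsum_eq, ENNReal.ofReal_one]

lemma S2 {a b : ℝ} (ha : 0 < a) (hb : 0 < b) :
    ∫⁻ k, ENNReal.ofReal (Real.sqrt (pp b k / pp a k)) ∂(pois a)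
      = ENNReal.ofReal (rho a b) := by
  rw [lintegral_countable']
  have : ∀ k : ℕ, ENNReal.ofReal (Real.sqrt (pp b k / pp a k)) * (pois a) {k}
      = ENNReal.ofReal (Real.sqrt (pp a k * pp b k)) := by
    intro k
    rw [pois_singleton ha, ← ENNReal.ofReal_mul (Real.sqrt_nonneg _)]
    congr 1
    have hp := pp_pos ha k
    calc Real.sqrt (pp b k / pp a k) * pp a k
        = Real.sqrt (pp b k / pp a k) * (Real.sqrt (pp a k) * Real.sqrt (pp a k)) := by
          rw [Real.mul_self_sqrt hp.le]
      _ = (Real.sqrt (pp b k / pp a k) * Real.sqrt (pp a k)) * Real.sqrt (pp a k) := by ring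
      _ = Real.sqrt (pp b k / pp a k * pp a k) * Real.sqrt (pp a k) := by
          rw [← Real.sqrt_mul (div_nonneg (pp_nonneg hb k) (pp_nonneg ha k))]
      _ = Real.sqrt (pp b k) * Real.sqrt (pp a k) := by
          rw [div_mul_cancel₀ _ hp.ne']
      _ = Real.sqrt (pp a k * pp b k) := by
          rw [← Real.sqrt_mul (pp_nonneg hb k), mul_comm]
  rw [tsum_congr this, ← ENNReal.ofReal_tsum_of_nonneg (fun k => Real.sqrt_nonneg _)
    (summable_sqrt_pp ha hb), (hasSum_sqrt_pp ha hb).tsum_eq]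

lemma S3 {a b : ℝ} (ha : 0 < a) (hb : 0 < b) (v : ℕ) :
    ∫⁻ k, (if k = v then ENNReal.ofReal (pp b k / pp a k) else 0) ∂(pois a)
      = pois b {v} := by
  rw [lintegral_countable']
  rw [tsum_eq_single v (fun k hk => by simp [hk])]
  simp only [if_pos]
  rw [pois_singleton ha, pois_singleton hb,
    ← ENNReal.ofReal_mul (div_nonneg (pp_nonneg hb v) (pp_nonneg ha v)),
    div_mul_cancel₀ _ (pp_pos ha v).ne']

def cylSet : Set (Set (ℤ → ℕ)) :=
  {S | ∃ (F : Finset ℤ) (v : ℤ → ℕ), S = {y | ∀ i ∈ F, y i = v i}}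

lemma isPiSystem_cyl : IsPiSystem cylSet := by
  rintro S1 ⟨F, v, rfl⟩ S2 ⟨G, w, rfl⟩ ⟨y0, hy1, hy2⟩
  refine ⟨F ∪ G, y0, ?_⟩
  ext y
  simp only [Set.mem_inter_iff, Set.mem_setOf_eq, Finset.mem_union]
  constructor
  · rintro ⟨h1, h2⟩ i hi
    rcases hi with hi | hi
    · rw [h1 i hi, ← hy1 i hi]
    · rw [h2 i hi, ← hy2 i hi]
  · intro h
    exact ⟨fun i hi => by rw [h i (Or.inl hi), hy1 i hi],
      fun i hi => by rw [h i (Or.inr hi), hy2 i hi]⟩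

lemma generateFrom_cyl :
    (MeasurableSpace.pi : MeasurableSpace (ℤ → ℕ)) = MeasurableSpace.generateFrom cylSet := by
  have hev : ∀ i : ℤ, @Measurable (ℤ → ℕ) ℕ (MeasurableSpace.generateFrom cylSet) _
      (fun y : ℤ → ℕ => y i) := by
    intro i
    refine @measurable_to_countable' ℕ (ℤ → ℕ) _ _ (MeasurableSpace.generateFrom cylSet)
      (fun y => y i) fun k => ?_
    refine MeasurableSpace.measurableSet_generateFrom ?_
    refine ⟨{i}, fun _ => k, ?_⟩
    ext y; simp
  refine le_antisymm ?_ ?_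
  · exact iSup_le fun i => measurable_iff_comap_le.mp (hev i)
  · refine MeasurableSpace.generateFrom_le ?_
    rintro S ⟨F, v, rfl⟩
    exact cyl_meas F v

lemma measure_eq_of_cyl (η η' : Measure (ℤ → ℕ)) [IsProbabilityMeasure η]
    [IsProbabilityMeasure η']
    (h : ∀ (F : Finset ℤ) (v : ℤ → ℕ),
      η {y | ∀ i ∈ F, y i = v i} = η' {y | ∀ i ∈ F, y i = v i}) : η = η' := by
  refine ext_of_generate_finite cylSet generateFrom_cyl isPiSystem_cyl ?_ ?_
  · rintro S ⟨F, v, rfl⟩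
    exact h F v
  · simp

-- summability helpers
lemma finset_subset_Icc (F : Finset ℤ) :
    ∃ N : ℕ, F ⊆ Finset.Icc (-(N : ℤ)) N := by
  classical
  refine ⟨F.sup fun i => i.natAbs, fun i hi => ?_⟩
  have h1 : i.natAbs ≤ F.sup fun i => i.natAbs := Finset.le_sup hi
  have h2 : |i| ≤ ((F.sup fun i => i.natAbs : ℕ) : ℤ) := by
    rw [Int.abs_eq_natAbs]; exact_mod_cast h1
  rw [Finset.mem_Icc]
  exact ⟨(abs_le.mp h2).1, (abs_le.mp h2).2⟩

lemma tendsto_FN : Tendsto (fun N : ℕ => Finset.Icc (-(N : ℤ)) N) atTop atTop := by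
  refine tendsto_atTop_finset_of_monotone ?_ ?_
  · intro m n hmn
    exact Finset.Icc_subset_Icc (by exact_mod_cast neg_le_neg (Int.ofNat_le.mpr hmn))
      (by exact_mod_cast Int.ofNat_le.mpr hmn)
  · intro x
    exact ⟨x.natAbs, Finset.mem_Icc.mpr (by omega)⟩

lemma tendsto_sum_FN_atTop {s : ℤ → ℝ} (hs : ∀ i, 0 ≤ s i) (h : ¬ Summable s) :
    Tendsto (fun N : ℕ => ∑ i ∈ Finset.Icc (-(N : ℤ)) N, s i) atTop atTop := by
  refine tendsto_atTop_atTop_of_monotone' ?_ ?_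
  · intro m n hmn
    refine Finset.sum_le_sum_of_subset_of_nonneg
      (Finset.Icc_subset_Icc (by exact_mod_cast neg_le_neg (Int.ofNat_le.mpr hmn))
        (by exact_mod_cast Int.ofNat_le.mpr hmn)) fun i _ _ => hs i
  · rintro ⟨C, hC⟩
    refine h (summable_of_sum_le (c := C) (fun i => hs i) fun F => ?_)
    obtain ⟨N, hN⟩ := finset_subset_Icc F
    calc ∑ i ∈ F, s i ≤ ∑ i ∈ Finset.Icc (-(N : ℤ)) N, s i :=
          Finset.sum_le_sum_of_subset_of_nonneg hN fun i _ _ => hs i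
      _ ≤ C := hC (Set.mem_range_self N)

lemma tendsto_tail {s : ℤ → ℝ} :
    Tendsto (fun N : ℕ => ∑' i : {x : ℤ // x ∉ Finset.Icc (-(N : ℤ)) N}, s i)
      atTop (𝓝 0) :=
  (tendsto_tsum_compl_atTop_zero s).comp tendsto_FN

lemma sum_le_tail {s : ℤ → ℝ} (hs : ∀ i, 0 ≤ s i) (hsum : Summable s)
    {T : Finset ℤ} {N : ℕ} (hT : ∀ i ∈ T, i ∉ Finset.Icc (-(N : ℤ)) N) :
    ∑ i ∈ T, s i ≤ ∑' i : {x : ℤ // x ∉ Finset.Icc (-(N : ℤ)) N}, s i := by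
  classical
  refine le_trans ?_ (le_of_eq (tsum_subtype {x : ℤ | x ∉ Finset.Icc (-(N : ℤ)) N} s).symm)
  have heq : ∀ i ∈ T, s i = Set.indicator {x : ℤ | x ∉ Finset.Icc (-(N : ℤ)) N} s i :=
    fun i hi => (Set.indicator_of_mem (show i ∈ {x : ℤ | x ∉ Finset.Icc (-(N : ℤ)) N} from hT i hi) s).symm
  rw [Finset.sum_congr rfl heq]
  exact (hsum.indicator _).sum_le_tsum T (fun i _ => Set.indicator_nonneg (fun j _ => hs j) i)

lemma prod_rpow_half {F : Finset ℤ} (g : ℤ → ℝ≥0∞) :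
    (∏ i ∈ F, g i) ^ (1/2 : ℝ) = ∏ i ∈ F, (g i) ^ (1/2 : ℝ) :=
  (ENNReal.prod_rpow_of_nonneg (by norm_num : (0:ℝ) ≤ 1/2)).symm

lemma factor_eq {P Q : ℝ} (hP : 0 < P) (hQ : 0 < Q) :
    ENNReal.ofReal Q ^ (1/2 : ℝ) * ENNReal.ofReal P ^ (1/2 : ℝ)
      = ENNReal.ofReal (Real.sqrt (Q / P)) * ENNReal.ofReal P := by
  rw [ENNReal.ofReal_rpow_of_pos hQ, ENNReal.ofReal_rpow_of_pos hP,
    ← ENNReal.ofReal_mul (Real.rpow_nonneg hQ.le _),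
    ← ENNReal.ofReal_mul (Real.sqrt_nonneg _)]
  congr 1
  rw [← Real.sqrt_eq_rpow, ← Real.sqrt_eq_rpow, sqrt_div_mul hP hQ,
    ← Real.sqrt_mul hQ.le, mul_comm P Q]

lemma two_conj : Real.HolderConjugate 2 2 := Real.HolderConjugate.two_two

/-- Hölder-type bound on a set. -/
lemma sqrt_bound {f : (ℤ → ℕ) → ℝ≥0∞} (hf : Measurable f) {η : Measure (ℤ → ℕ)}
    {S : Set (ℤ → ℕ)} (hS : MeasurableSet S) :
    ∫⁻ y in S, (f y) ^ (1/2 : ℝ) ∂η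
      ≤ (∫⁻ y in S, f y ∂η) ^ (1/2 : ℝ) * (η S) ^ (1/2 : ℝ) := by
  have h := ENNReal.lintegral_mul_le_Lp_mul_Lq (η.restrict S) two_conj
    (f := fun y => (f y) ^ (1/2 : ℝ)) (g := fun _ => 1)
    ((hf.pow_const _).aemeasurable) aemeasurable_const
  simp only [mul_one, ENNReal.one_rpow, Pi.mul_apply] at h
  have h2 : ∀ y, ((f y) ^ (1/2 : ℝ)) ^ (2 : ℝ) = f y := by
    intro y
    rw [← ENNReal.rpow_mul]
    norm_num
  calc ∫⁻ y in S, (f y) ^ (1/2 : ℝ) ∂η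
      = ∫⁻ y, (f y) ^ (1/2 : ℝ) * 1 ∂(η.restrict S) := by simp
    _ ≤ (∫⁻ y, ((f y) ^ (1/2 : ℝ)) ^ (2:ℝ) ∂(η.restrict S)) ^ (1/2 : ℝ)
        * (∫⁻ _, (1:ℝ≥0∞) ^ (2:ℝ) ∂(η.restrict S)) ^ (1/2 : ℝ) := by
        simpa using h
    _ = (∫⁻ y in S, f y ∂η) ^ (1/2 : ℝ) * (η S) ^ (1/2 : ℝ) := by
        congr 1
        · congr 1; exact lintegral_congr fun y => h2 y
        · simp [lintegral_one]

variable {a b : ℤ → ℝ} {η η' : Measure (ℤ → ℕ)}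

theorem not_ac (ha : ∀ n, 0 < a n) (hb : ∀ n, 0 < b n)
    [IsProbabilityMeasure η] [IsProbabilityMeasure η']
    (hη : IsProductOf η fun n => pois (a n)) (hη' : IsProductOf η' fun n => pois (b n))
    (hns : ¬ Summable fun n : ℤ => (Real.sqrt (b n) - Real.sqrt (a n)) ^ 2)
    (hac : η' ≪ η) : False := by
  classical
  set f := η'.rnDeriv η with hf
  have hfm : Measurable f := Measure.measurable_rnDeriv η' η
  have hwd : η.withDensity f = η' := Measure.withDensity_rnDeriv_eq η' η hac
  -- the key bound for each finite window
  have key : ∀ F : Finset ℤ,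
      ∫⁻ y, (f y) ^ (1/2 : ℝ) ∂η ≤ ENNReal.ofReal (∏ i ∈ F, rho (a i) (b i)) := by
    intro F
    set Φ : (ℤ → ℕ) → ℝ≥0∞ :=
      fun y => ∏ i ∈ F, ENNReal.ofReal (Real.sqrt (pp (b i) (y i) / pp (a i) (y i))) with hΦ
    set ext' : (↑F → ℕ) → ℤ → ℕ := fun v i => if h : i ∈ F then v ⟨i, h⟩ else 0 with hext
    set S : (↑F → ℕ) → Set (ℤ → ℕ) := fun v => {y | ∀ i ∈ F, y i = ext' v i} with hSdef
    have hSm : ∀ v, MeasurableSet (S v) := fun v => cyl_meas F (ext' v)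
    have hdisj : Pairwise (Function.onFun Disjoint S) := by
      intro v w hvw
      refine Set.disjoint_left.mpr fun y hyv hyw => hvw (funext fun i => ?_)
      have h1 := hyv i i.2
      have h2 := hyw i i.2
      rw [hext] at h1 h2
      simp only [dif_pos i.2] at h1 h2
      rw [← h1, ← h2]
    have hcover : (⋃ v, S v) = Set.univ := by
      refine Set.eq_univ_of_forall fun y => Set.mem_iUnion.mpr ⟨fun i => y i, ?_⟩
      intro i hi
      rw [hext]
      simp only [dif_pos hi]
    -- each piece
    have hpiece : ∀ v : ↑F → ℕ,
        ∫⁻ y in S v, (f y) ^ (1/2 : ℝ) ∂η ≤ ∫⁻ y in S v, Φ y ∂η := by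
      intro v
      refine (sqrt_bound hfm (hSm v)).trans ?_
      have hη'Sv : ∫⁻ y in S v, f y ∂η = η' (S v) := by
        rw [← hwd, withDensity_apply f (hSm v)]
      rw [hη'Sv]
      -- compute both sides explicitly
      have hηv : η (S v) = ∏ i ∈ F, ENNReal.ofReal (pp (a i) (ext' v i)) := by
        rw [hSdef]
        rw [hη F (ext' v)]
        exact Finset.prod_congr rfl fun i hi => pois_singleton (ha i) _
      have hη'v : η' (S v) = ∏ i ∈ F, ENNReal.ofReal (pp (b i) (ext' v i)) := by
        rw [hSdef, hη' F (ext' v)]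
        exact Finset.prod_congr rfl fun i hi => pois_singleton (hb i) _
      -- RHS : Φ is constant on S v
      have hconst : ∫⁻ y in S v, Φ y ∂η
          = (∏ i ∈ F, ENNReal.ofReal (Real.sqrt (pp (b i) (ext' v i) / pp (a i) (ext' v i))))
            * η (S v) := by
        rw [← setLIntegral_const (S v) _]
        refine setLIntegral_congr_fun (hSm v) (fun y hy => ?_)
        rw [hΦ]
        exact Finset.prod_congr rfl fun i hi => by rw [hy i hi]
      refine le_of_eq ?_
      calc (η' (S v)) ^ (1/2 : ℝ) * (η (S v)) ^ (1/2 : ℝ)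
          = ∏ i ∈ F, (ENNReal.ofReal (Real.sqrt (pp (b i) (ext' v i) / pp (a i) (ext' v i)))
              * ENNReal.ofReal (pp (a i) (ext' v i))) := by
            rw [hηv, hη'v, prod_rpow_half, prod_rpow_half, ← Finset.prod_mul_distrib]
            exact Finset.prod_congr rfl fun i _ =>
              factor_eq (pp_pos (ha i) (ext' v i)) (pp_pos (hb i) (ext' v i))
        _ = ∫⁻ y in S v, Φ y ∂η := by
            rw [hconst, hηv, ← Finset.prod_mul_distrib]
    -- sum up
    calc ∫⁻ y, (f y) ^ (1/2 : ℝ) ∂η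
        = ∑' v : ↑F → ℕ, ∫⁻ y in S v, (f y) ^ (1/2 : ℝ) ∂η := by
          rw [← lintegral_iUnion hSm hdisj, hcover, Measure.restrict_univ]
      _ ≤ ∑' v : ↑F → ℕ, ∫⁻ y in S v, Φ y ∂η := ENNReal.tsum_le_tsum hpiece
      _ = ∫⁻ y, Φ y ∂η := by rw [← lintegral_iUnion hSm hdisj, hcover, Measure.restrict_univ]
      _ = ∏ i ∈ F, ∫⁻ k, ENNReal.ofReal (Real.sqrt (pp (b i) k / pp (a i) k)) ∂(pois (a i)) := by
          rw [hΦ]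
          exact workhorse hη F fun i k => ENNReal.ofReal (Real.sqrt (pp (b i) k / pp (a i) k))
      _ = ∏ i ∈ F, ENNReal.ofReal (rho (a i) (b i)) :=
          Finset.prod_congr rfl fun i _ => S2 (ha i) (hb i)
      _ = ENNReal.ofReal (∏ i ∈ F, rho (a i) (b i)) :=
          (ENNReal.ofReal_prod_of_nonneg fun i _ => (rho_pos _ _).le).symm
  -- the products tend to zero
  have hs' : ∀ i : ℤ, 0 ≤ (Real.sqrt (b i) - Real.sqrt (a i)) ^ 2 / 2 := fun i => by positivity
  have hns' : ¬ Summable fun i : ℤ => (Real.sqrt (b i) - Real.sqrt (a i)) ^ 2 / 2 := by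
    intro h
    refine hns ?_
    have := h.mul_left 2
    refine this.congr fun i => ?_
    ring
  have hprod : Tendsto (fun N : ℕ => ∏ i ∈ Finset.Icc (-(N:ℤ)) N, rho (a i) (b i))
      atTop (𝓝 0) := by
    have heq : ∀ N : ℕ, ∏ i ∈ Finset.Icc (-(N:ℤ)) N, rho (a i) (b i)
        = Real.exp (-(∑ i ∈ Finset.Icc (-(N:ℤ)) N,
            (Real.sqrt (b i) - Real.sqrt (a i)) ^ 2 / 2)) := by
      intro N
      unfold rho
      rw [← Real.exp_sum]
      congr 1
      simp
    simp_rw [heq]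
    exact Real.tendsto_exp_neg_atTop_nhds_zero.comp (tendsto_sum_FN_atTop hs' hns')
  have hzero : ∫⁻ y, (f y) ^ (1/2 : ℝ) ∂η = 0 := by
    refine le_antisymm ?_ zero_le
    have hof : Tendsto (fun N : ℕ => ENNReal.ofReal (∏ i ∈ Finset.Icc (-(N:ℤ)) N,
        rho (a i) (b i))) atTop (𝓝 0) := by
      rw [show (0:ℝ≥0∞) = ENNReal.ofReal 0 by simp]
      exact ENNReal.tendsto_ofReal hprod
    exact ge_of_tendsto' hof fun N => key _
  have hf0 : f =ᵐ[η] 0 := by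
    have := (lintegral_eq_zero_iff (hfm.pow_const (1/2 : ℝ))).mp hzero
    filter_upwards [this] with y hy
    simp only [Pi.zero_apply] at hy ⊢
    rcases (ENNReal.rpow_eq_zero_iff).mp hy with ⟨h, _⟩ | ⟨_, h⟩
    · exact h
    · norm_num at h
  have : η' Set.univ = 0 := by
    rw [← hwd, withDensity_apply f MeasurableSet.univ]
    rw [setLIntegral_congr_fun_ae MeasurableSet.univ (hf0.mono fun y hy _ => hy)]
    simp
  simp [measure_univ] at this

theorem ac (ha : ∀ n, 0 < a n) (hb : ∀ n, 0 < b n)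
    [IsProbabilityMeasure η] [IsProbabilityMeasure η']
    (hη : IsProductOf η fun n => pois (a n)) (hη' : IsProductOf η' fun n => pois (b n))
    (hsum : Summable fun n : ℤ => (Real.sqrt (b n) - Real.sqrt (a n)) ^ 2) :
    η' ≪ η := by
  classical
  set s : ℤ → ℝ := fun i => (Real.sqrt (b i) - Real.sqrt (a i)) ^ 2 / 2 with hsdef
  have hs0 : ∀ i, 0 ≤ s i := fun i => by positivity
  have hssum : Summable s := hsum.div_const 2
  set FN : ℕ → Finset ℤ := fun N => Finset.Icc (-(N : ℤ)) N with hFNdef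
  set φ : ℤ → ℕ → ℝ := fun i k => Real.sqrt (pp (b i) k / pp (a i) k) with hφdef
  have hφ0 : ∀ i k, 0 ≤ φ i k := fun i k => Real.sqrt_nonneg _
  have hφsq : ∀ i k, φ i k ^ 2 = pp (b i) k / pp (a i) k := fun i k =>
    Real.sq_sqrt (div_nonneg (pp_nonneg (hb i) k) (pp_nonneg (ha i) k))
  set Φ : ℕ → (ℤ → ℕ) → ℝ := fun N y => ∏ i ∈ FN N, φ i (y i) with hΦdef
  have hΦm : ∀ N, Measurable (Φ N) := fun N => meas_prod (FN N) φ
  have hΦ0 : ∀ N y, 0 ≤ Φ N y := fun N y =>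
    Finset.prod_nonneg fun i _ => hφ0 i (y i)
  -- Core cylinder computation
  have hcyl : ∀ (F : Finset ℤ) (v : ℤ → ℕ) (N : ℕ), F ⊆ FN N →
      ∫⁻ y in {y | ∀ i ∈ F, y i = v i}, ENNReal.ofReal ((Φ N y) ^ 2) ∂η
        = η' {y | ∀ i ∈ F, y i = v i} := by
    intro F v N hF
    set A := {y : ℤ → ℕ | ∀ i ∈ F, y i = v i} with hA
    set g : ℤ → ℕ → ℝ≥0∞ := fun i k =>
      if i ∈ F then (if k = v i then ENNReal.ofReal (pp (b i) k / pp (a i) k) else 0)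
      else ENNReal.ofReal (pp (b i) k / pp (a i) k) with hg
    have hpoint : ∀ y, A.indicator (fun y => ENNReal.ofReal ((Φ N y) ^ 2)) y
        = ∏ i ∈ FN N, g i (y i) := by
      intro y
      by_cases hy : y ∈ A
      · rw [Set.indicator_of_mem hy]
        have h1 : ENNReal.ofReal ((Φ N y) ^ 2)
            = ∏ i ∈ FN N, ENNReal.ofReal (pp (b i) (y i) / pp (a i) (y i)) := by
          rw [hΦdef]
          simp only
          rw [← Finset.prod_pow]
          rw [ENNReal.ofReal_prod_of_nonneg (fun i _ => sq_nonneg _)]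
          exact Finset.prod_congr rfl fun i _ => by rw [hφsq]
        rw [h1]
        refine Finset.prod_congr rfl fun i hi => ?_
        by_cases hiF : i ∈ F
        · rw [hg]; simp only [if_pos hiF, if_pos (hy i hiF)]
        · rw [hg]; simp only [if_neg hiF]
      · rw [Set.indicator_of_notMem hy]
        have : ∃ i0 ∈ F, y i0 ≠ v i0 := by
          by_contra hcon
          push_neg at hcon
          exact hy fun i hi => hcon i hi
        obtain ⟨i0, hi0F, hi0⟩ := this
        symm
        apply Finset.prod_eq_zero (hF hi0F)
        rw [hg]; simp only [if_pos hi0F, if_neg hi0]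
    calc ∫⁻ y in A, ENNReal.ofReal ((Φ N y) ^ 2) ∂η
        = ∫⁻ y, A.indicator (fun y => ENNReal.ofReal ((Φ N y) ^ 2)) y ∂η := by
          rw [lintegral_indicator (cyl_meas F v)]
      _ = ∫⁻ y, ∏ i ∈ FN N, g i (y i) ∂η := lintegral_congr hpoint
      _ = ∏ i ∈ FN N, ∫⁻ k, g i k ∂(pois (a i)) := workhorse hη (FN N) g
      _ = ∏ i ∈ FN N, (if i ∈ F then pois (b i) {v i} else 1) := by
          refine Finset.prod_congr rfl fun i _ => ?_
          by_cases hiF : i ∈ F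
          · rw [hg]; simp only [if_pos hiF]
            rw [S3 (ha i) (hb i) (v i)]
          · rw [hg]; simp only [if_neg hiF]
            rw [S1 (ha i) (hb i)]
      _ = ∏ i ∈ F, (if i ∈ F then pois (b i) {v i} else 1) :=
          (Finset.prod_subset hF fun i _ hiF => if_neg hiF).symm
      _ = ∏ i ∈ F, pois (b i) {v i} :=
          Finset.prod_congr rfl fun i hi => if_pos hi
      _ = η' A := (hη' F v).symm
  have huniv_set : ({y : ℤ → ℕ | ∀ i ∈ (∅ : Finset ℤ), y i = (0 : ℤ → ℕ) i} : Set (ℤ → ℕ))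
      = Set.univ := by ext y; simp
  have hΦsqint : ∀ N, ∫⁻ y, ENNReal.ofReal ((Φ N y) ^ 2) ∂η = 1 := by
    intro N
    have := hcyl ∅ 0 N (Finset.empty_subset _)
    rw [huniv_set] at this
    rw [Measure.restrict_univ] at this
    rw [this, measure_univ]
  -- membership in L2
  have hmem : ∀ N, MemLp (Φ N) 2 η := by
    intro N
    refine (memLp_two_iff_integrable_sq (hΦm N).aestronglyMeasurable).mpr ?_
    refine ⟨((hΦm N).pow_const 2).aestronglyMeasurable, ?_⟩
    rw [hasFiniteIntegral_iff_ofReal (ae_of_all _ fun y => sq_nonneg _)]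
    rw [hΦsqint N]
    exact ENNReal.one_lt_top
  set X : ℕ → Lp ℝ 2 η := fun N => (hmem N).toLp (Φ N) with hX
  -- inner products
  have hIP : ∀ M N : ℕ, M ≤ N →
      (inner ℝ (X M) (X N) : ℝ) = ∏ i ∈ (FN N \ FN M), rho (a i) (b i) := by
    intro M N hMN
    have hsub : FN M ⊆ FN N :=
      Finset.Icc_subset_Icc (by exact_mod_cast neg_le_neg (Int.ofNat_le.mpr hMN))
        (by exact_mod_cast Int.ofNat_le.mpr hMN)
    set g : ℤ → ℕ → ℝ≥0∞ := fun i k =>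
      if i ∈ FN M then ENNReal.ofReal (pp (b i) k / pp (a i) k)
      else ENNReal.ofReal (φ i k) with hg
    have hpoint : ∀ y, ENNReal.ofReal (Φ M y * Φ N y) = ∏ i ∈ FN N, g i (y i) := by
      intro y
      have hreal : Φ M y * Φ N y
          = (∏ i ∈ (FN N \ FN M), φ i (y i)) * ∏ i ∈ FN M, (φ i (y i)) ^ 2 := by
        rw [hΦdef]
        simp only
        rw [← Finset.prod_sdiff hsub, Finset.prod_pow]
        ring
      rw [hreal, ← Finset.prod_sdiff hsub]
      rw [ENNReal.ofReal_mul (Finset.prod_nonneg fun i _ => hφ0 i (y i)),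
        ENNReal.ofReal_prod_of_nonneg (fun i _ => hφ0 i (y i)),
        ENNReal.ofReal_prod_of_nonneg (fun i _ => sq_nonneg _)]
      congr 1
      · exact Finset.prod_congr rfl fun i hi => by
          rw [hg]; simp only [if_neg (Finset.mem_sdiff.mp hi).2]
      · exact Finset.prod_congr rfl fun i hi => by
          rw [hg]; simp only [if_pos hi, hφsq]
    have hgl : ∫⁻ y, ENNReal.ofReal (Φ M y * Φ N y) ∂η
        = ENNReal.ofReal (∏ i ∈ (FN N \ FN M), rho (a i) (b i)) := by
      rw [lintegral_congr hpoint, workhorse hη (FN N) g]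
      have hval : ∀ i ∈ FN N, ∫⁻ k, g i k ∂(pois (a i))
          = if i ∈ FN M then 1 else ENNReal.ofReal (rho (a i) (b i)) := by
        intro i _
        by_cases hi : i ∈ FN M
        · rw [hg]; simp only [if_pos hi]; exact S1 (ha i) (hb i)
        · rw [hg]; simp only [if_neg hi]; exact S2 (ha i) (hb i)
      rw [Finset.prod_congr rfl hval, ← Finset.prod_sdiff hsub]
      have h1 : (∏ i ∈ FN M, if i ∈ FN M then (1:ℝ≥0∞) else ENNReal.ofReal (rho (a i) (b i))) = 1 :=
        Finset.prod_eq_one fun i hi => if_pos hi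
      have h2 : (∏ i ∈ (FN N \ FN M), if i ∈ FN M then (1:ℝ≥0∞) else ENNReal.ofReal (rho (a i) (b i)))
          = ∏ i ∈ (FN N \ FN M), ENNReal.ofReal (rho (a i) (b i)) :=
        Finset.prod_congr rfl fun i hi => if_neg (Finset.mem_sdiff.mp hi).2
      rw [h1, h2, mul_one, ← ENNReal.ofReal_prod_of_nonneg fun i _ => (rho_pos _ _).le]
    have hre : ∫ y, Φ M y * Φ N y ∂η = ∏ i ∈ (FN N \ FN M), rho (a i) (b i) := by
      rw [integral_eq_lintegral_of_nonneg_ae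
        (ae_of_all _ fun y => mul_nonneg (hΦ0 M y) (hΦ0 N y))
        ((hΦm M).mul (hΦm N)).aestronglyMeasurable, hgl,
        ENNReal.toReal_ofReal (Finset.prod_nonneg fun i _ => (rho_pos _ _).le)]
    rw [L2.inner_def]
    rw [← hre]
    refine integral_congr_ae ?_
    filter_upwards [MemLp.coeFn_toLp (hmem M), MemLp.coeFn_toLp (hmem N)] with y h1 h2
    rw [RCLike.inner_apply, starRingEnd_apply, star_trivial, h1, h2, mul_comm]
  have hnorm : ∀ N, ‖X N‖ = 1 := by
    intro N
    have h := hIP N N le_rfl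
    rw [Finset.sdiff_self, Finset.prod_empty] at h
    have h2 := real_inner_self_eq_norm_sq (X N)
    nlinarith [norm_nonneg (X N)]
  -- tail bound
  set t : ℕ → ℝ := fun K => ∑' i : {x : ℤ // x ∉ FN K}, s i with ht
  have htail : Tendsto t atTop (𝓝 0) := tendsto_tail
  have hlower : ∀ K N : ℕ, K ≤ N →
      Real.exp (-(t K)) ≤ ∏ i ∈ (FN N \ FN K), rho (a i) (b i) := by
    intro K N _
    have heq : ∏ i ∈ (FN N \ FN K), rho (a i) (b i)
        = Real.exp (-(∑ i ∈ (FN N \ FN K), s i)) := by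
      unfold rho
      rw [← Real.exp_sum]
      congr 1
      simp [hsdef]
    rw [heq, Real.exp_le_exp, neg_le_neg_iff]
    exact sum_le_tail hs0 hssum fun i hi => (Finset.mem_sdiff.mp hi).2
  -- Cauchy sequence
  have hcauchy : CauchySeq X := by
    rw [Metric.cauchySeq_iff']
    intro ε hε
    have hexp : Tendsto (fun K => 2 - 2 * Real.exp (-(t K))) atTop (𝓝 0) := by
      have h1 : Tendsto (fun K => Real.exp (-(t K))) atTop (𝓝 1) := by
        have h0 : Tendsto (fun K => -(t K)) atTop (𝓝 0) := by simpa using htail.neg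
        have := (Real.continuous_exp.tendsto 0).comp h0
        simpa [Function.comp_def] using this
      have := (tendsto_const_nhds (x := (2:ℝ)) (f := atTop)).sub (h1.const_mul 2)
      simpa using this
    obtain ⟨K, hK⟩ := (hexp.eventually (gt_mem_nhds (by positivity : (0:ℝ) < ε ^ 2))).exists
    refine ⟨K, fun n hn => ?_⟩
    have hd : dist (X n) (X K) ^ 2 = 2 - 2 * (inner ℝ (X K) (X n) : ℝ) := by
      rw [dist_eq_norm, norm_sub_sq_real, hnorm n, hnorm K, real_inner_comm]
      ring
    have hip := hIP K n hn
    have hlow := hlower K n hn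
    have h3 : dist (X n) (X K) ^ 2 < ε ^ 2 := by
      rw [hd, hip]
      nlinarith
    nlinarith [dist_nonneg (x := X n) (y := X K)]
  obtain ⟨G0, hG0⟩ := cauchySeq_tendsto_of_complete hcauchy
  have hdist0 : Tendsto (fun N => ‖X N - G0‖) atTop (𝓝 0) := by
    have := tendsto_iff_dist_tendsto_zero.mp hG0
    simpa [dist_eq_norm] using this
  set G : (ℤ → ℕ) → ℝ := fun y => G0 y with hG
  have hmemG : MemLp G 2 η := Lp.memLp G0
  have hintG2 : Integrable (fun y => G y ^ 2) η := hmemG.integrable_sq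
  have hintΦ2 : ∀ N, Integrable (fun y => Φ N y ^ 2) η := fun N => (hmem N).integrable_sq
  -- convergence of set integrals
  have hALim : ∀ A : Set (ℤ → ℕ), MeasurableSet A →
      Tendsto (fun N => ∫ y in A, Φ N y ^ 2 ∂η) atTop (𝓝 (∫ y in A, G y ^ 2 ∂η)) := by
    intro A hA
    have hbd : ∀ N, |∫ y in A, Φ N y ^ 2 ∂η - ∫ y in A, G y ^ 2 ∂η|
        ≤ ‖X N - G0‖ * (‖X N‖ + ‖G0‖) := by
      intro N
      have hWc : (⇑(X N - G0) : (ℤ → ℕ) → ℝ) =ᵐ[η] fun y => Φ N y - G y := by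
        filter_upwards [Lp.coeFn_sub (X N) G0, MemLp.coeFn_toLp (hmem N)] with y h1 h2
        rw [h1, Pi.sub_apply, h2]
      have hZc : (⇑(X N + G0) : (ℤ → ℕ) → ℝ) =ᵐ[η] fun y => Φ N y + G y := by
        filter_upwards [Lp.coeFn_add (X N) G0, MemLp.coeFn_toLp (hmem N)] with y h1 h2
        rw [h1, Pi.add_apply, h2]
      have hsqW : ∫ y, (Φ N y - G y) ^ 2 ∂η = ‖X N - G0‖ ^ 2 := by
        rw [← real_inner_self_eq_norm_sq, L2.inner_def]
        refine integral_congr_ae ?_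
        filter_upwards [hWc] with y hy
        rw [hy, RCLike.inner_apply, starRingEnd_apply, star_trivial]
        ring
      have hsqZ : ∫ y, (Φ N y + G y) ^ 2 ∂η = ‖X N + G0‖ ^ 2 := by
        rw [← real_inner_self_eq_norm_sq, L2.inner_def]
        refine integral_congr_ae ?_
        filter_upwards [hZc] with y hy
        rw [hy, RCLike.inner_apply, starRingEnd_apply, star_trivial]
        ring
      have hWmem : MemLp (fun y => |Φ N y - G y|) (ENNReal.ofReal 2) η := by
        rw [ENNReal.ofReal_ofNat]
        exact ((hmem N).sub hmemG).norm
      have hZmem : MemLp (fun y => |Φ N y + G y|) (ENNReal.ofReal 2) η := by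
        rw [ENNReal.ofReal_ofNat]
        exact ((hmem N).add hmemG).norm
      have hholder := integral_mul_le_Lp_mul_Lq_of_nonneg two_conj
        (ae_of_all _ fun y => abs_nonneg (Φ N y - G y))
        (ae_of_all _ fun y => abs_nonneg (Φ N y + G y)) hWmem hZmem
      have hWint : Integrable (fun y => Φ N y ^ 2 - G y ^ 2) η :=
        (hintΦ2 N).sub hintG2
      calc |∫ y in A, Φ N y ^ 2 ∂η - ∫ y in A, G y ^ 2 ∂η|
          = |∫ y in A, (Φ N y ^ 2 - G y ^ 2) ∂η| := by
            rw [integral_sub ((hintΦ2 N).restrict) (hintG2.restrict)]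
        _ ≤ ∫ y in A, |Φ N y ^ 2 - G y ^ 2| ∂η := by
            simpa [Real.norm_eq_abs] using
              norm_integral_le_integral_norm (μ := η.restrict A)
                (f := fun y => Φ N y ^ 2 - G y ^ 2)
        _ ≤ ∫ y, |Φ N y ^ 2 - G y ^ 2| ∂η := by
            refine integral_mono_measure Measure.restrict_le_self
              (ae_of_all _ fun y => abs_nonneg _) hWint.abs
        _ = ∫ y, |Φ N y - G y| * |Φ N y + G y| ∂η := by
            refine integral_congr_ae (ae_of_all _ fun y => ?_)
            show |Φ N y ^ 2 - G y ^ 2| = |Φ N y - G y| * |Φ N y + G y|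
            rw [show Φ N y ^ 2 - G y ^ 2 = (Φ N y - G y) * (Φ N y + G y) by ring, abs_mul]
        _ ≤ (∫ y, |Φ N y - G y| ^ (2:ℝ) ∂η) ^ (1/2 : ℝ)
            * (∫ y, |Φ N y + G y| ^ (2:ℝ) ∂η) ^ (1/2 : ℝ) := hholder
        _ = ‖X N - G0‖ * ‖X N + G0‖ := by
            have habs : ∀ x : ℝ, |x| ^ (2:ℝ) = x ^ 2 := fun x => by
              rw [show (2:ℝ) = ((2:ℕ):ℝ) by norm_num, Real.rpow_natCast, sq_abs]
            have e1 : ∫ y, |Φ N y - G y| ^ (2:ℝ) ∂η = ‖X N - G0‖ ^ 2 := by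
              rw [← hsqW]
              exact integral_congr_ae (ae_of_all _ fun y => habs _)
            have e2 : ∫ y, |Φ N y + G y| ^ (2:ℝ) ∂η = ‖X N + G0‖ ^ 2 := by
              rw [← hsqZ]
              exact integral_congr_ae (ae_of_all _ fun y => habs _)
            rw [e1, e2, ← Real.sqrt_eq_rpow, ← Real.sqrt_eq_rpow,
              Real.sqrt_sq (norm_nonneg _), Real.sqrt_sq (norm_nonneg _)]
        _ ≤ ‖X N - G0‖ * (‖X N‖ + ‖G0‖) :=
            mul_le_mul_of_nonneg_left (norm_add_le _ _) (norm_nonneg _)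
    have hRHS : Tendsto (fun N => ‖X N - G0‖ * (‖X N‖ + ‖G0‖)) atTop (𝓝 0) := by
      have : Tendsto (fun N => ‖X N - G0‖ * (1 + ‖G0‖)) atTop (𝓝 (0 * (1 + ‖G0‖))) :=
        hdist0.mul_const _
      rw [zero_mul] at this
      refine this.congr fun N => ?_
      rw [hnorm N]
    have hsub0 : Tendsto (fun N => ∫ y in A, Φ N y ^ 2 ∂η - ∫ y in A, G y ^ 2 ∂η)
        atTop (𝓝 0) :=
      squeeze_zero_norm (fun N => by simpa [Real.norm_eq_abs] using hbd N) hRHS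
    have := hsub0.add (tendsto_const_nhds (x := ∫ y in A, G y ^ 2 ∂η) (f := atTop))
    rw [zero_add] at this
    refine this.congr fun N => ?_
    ring
  -- identify the limit density
  set D : (ℤ → ℕ) → ℝ≥0∞ := fun y => ENNReal.ofReal (G y ^ 2) with hD
  have hAll : ∀ (F : Finset ℤ) (v : ℤ → ℕ),
      (η.withDensity D) {y | ∀ i ∈ F, y i = v i} = η' {y | ∀ i ∈ F, y i = v i} := by
    intro F v
    set A := {y : ℤ → ℕ | ∀ i ∈ F, y i = v i} with hA
    have hAm : MeasurableSet A := cyl_meas F v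
    -- eventually constant value
    obtain ⟨N0, hN0⟩ := finset_subset_Icc F
    have hconst : ∀ᶠ N in atTop, ∫ y in A, Φ N y ^ 2 ∂η = (η' A).toReal := by
      rw [eventually_atTop]
      refine ⟨N0, fun N hN => ?_⟩
      have hFN' : F ⊆ FN N := hN0.trans
        (Finset.Icc_subset_Icc (by exact_mod_cast neg_le_neg (Int.ofNat_le.mpr hN))
          (by exact_mod_cast Int.ofNat_le.mpr hN))
      rw [integral_eq_lintegral_of_nonneg_ae (ae_of_all _ fun y => sq_nonneg _)
        (((hΦm N).pow_const 2).aestronglyMeasurable).restrict]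
      rw [hcyl F v N hFN']
    have hlim2 : Tendsto (fun N => ∫ y in A, Φ N y ^ 2 ∂η) atTop (𝓝 ((η' A).toReal)) :=
      Tendsto.congr' (hconst.mono fun N h => h.symm) tendsto_const_nhds
    have hGval : ∫ y in A, G y ^ 2 ∂η = (η' A).toReal :=
      tendsto_nhds_unique (hALim A hAm) hlim2
    rw [withDensity_apply D hAm]
    rw [← ofReal_integral_eq_lintegral_ofReal (hintG2.restrict)
      (ae_of_all _ fun y => sq_nonneg _)]
    rw [hGval, ENNReal.ofReal_toReal (measure_ne_top η' A)]
  have huniv : (η.withDensity D) Set.univ = 1 := by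
    have := hAll ∅ 0
    rw [huniv_set] at this
    rw [this, measure_univ]
  haveI : IsProbabilityMeasure (η.withDensity D) := ⟨huniv⟩
  have heq : η.withDensity D = η' := measure_eq_of_cyl _ _ hAll
  rw [← heq]
  exact withDensity_absolutelyContinuous η D


end Kak

/-- For two sequences `(a_n)`, `(b_n)` of positive reals, the infinite product measures
`⊗_{n∈ℤ} Pois(b_n)` and `⊗_{n∈ℤ} Pois(a_n)` on `ℕ^ℤ` are mutually absolutely continuous
if and only if  `Σ_{n∈ℤ} (√(b_n) - √(a_n))² < ∞`. -/
theorem stmt5 (a b : ℤ → ℝ) (ha : ∀ n, 0 < a n) (hb : ∀ n, 0 < b n)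
    (η η' : Measure (ℤ → ℕ)) [IsProbabilityMeasure η] [IsProbabilityMeasure η']
    (hη : IsProductOf η fun n => pois (a n))
    (hη' : IsProductOf η' fun n => pois (b n)) :
    (η' ≪ η ∧ η ≪ η') ↔
      Summable fun n : ℤ => (Real.sqrt (b n) - Real.sqrt (a n)) ^ 2 := by
  constructor
  · intro hand
    by_contra hns
    exact (Kak.not_ac ha hb hη hη' hns hand.1).elim
  · intro hs
    exact ⟨Kak.ac ha hb hη hη' hs, Kak.ac hb ha hη' hη (hs.congr fun n => by ring)⟩
end

section
/- Let a > 0 and let (ε_j)_{j≥1} satisfy ε_j → 0, Σ_{j≥1} ε_j² = ∞ and Σ_{j≥1} ε_j⁴ < ∞. Then the partial sums Σ_{j=1}^n X_j tend to −∞ in probability: for every p > 0, lim_{n→∞} η( { z ∈ Z : Σ_{j=1}^n X_j(z) > −p } ) = 0. -/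
open MeasureTheory ProbabilityTheory Filter

/-- `IsProductOf' η μ` says that `η` is the infinite product `⊗_j μ j` of the probability
measures `μ j` on `ℕ × ℕ`, i.e. `η` gives each cylinder set the corresponding product value. -/
def IsProductOf' (η : Measure (ℕ → ℕ × ℕ)) (μ : ℕ → Measure (ℕ × ℕ)) : Prop :=
  ∀ (F : Finset ℕ) (v : ℕ → ℕ × ℕ), η {z | ∀ j ∈ F, z j = v j} = ∏ j ∈ F, μ j {v j}

instance pois_prob (a : ℝ) : IsProbabilityMeasure (pois a) := by
  unfold pois; infer_instance

lemma exp_tsum (x : ℝ) : ∑' n : ℕ, x ^ n / n.factorial = Real.exp x := by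
  rw [Real.exp_eq_exp_ℝ, NormedSpace.exp_eq_tsum_div]

lemma pois_singleton {b : ℝ} (hb : 0 ≤ b) (k : ℕ) :
    pois b {k} = ENNReal.ofReal (Real.exp (-b) * b ^ k / k.factorial) := by
  rw [pois, poissonMeasure_singleton]
  simp [Real.coe_toNNReal b hb]

lemma pois_mgf {b : ℝ} (hb : 0 ≤ b) (s : ℝ) :
    ∑' k : ℕ, ENNReal.ofReal (Real.exp (s * k)) * pois b {k}
      = ENNReal.ofReal (Real.exp (b * (Real.exp s - 1))) := by
  have h1 : ∀ k : ℕ, ENNReal.ofReal (Real.exp (s * k)) * pois b {k}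
      = ENNReal.ofReal (Real.exp (-b) * (b * Real.exp s) ^ k / k.factorial) := by
    intro k
    rw [pois_singleton hb, ← ENNReal.ofReal_mul (Real.exp_nonneg _)]
    congr 1
    rw [mul_pow, mul_comm s (k : ℝ), Real.exp_nat_mul]
    ring
  simp only [h1]
  have hsum : Summable (fun k : ℕ => Real.exp (-b) * (b * Real.exp s) ^ k / k.factorial) := by
    simpa [mul_div_assoc] using
      (Real.summable_pow_div_factorial (b * Real.exp s)).mul_left (Real.exp (-b))
  rw [← ENNReal.ofReal_tsum_of_nonneg (fun k => by positivity) hsum]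
  congr 1
  have : (fun k : ℕ => Real.exp (-b) * (b * Real.exp s) ^ k / k.factorial)
      = fun k : ℕ => Real.exp (-b) * ((b * Real.exp s) ^ k / k.factorial) := by
    funext k; ring
  rw [this, tsum_mul_left, exp_tsum, ← Real.exp_add]
  ring_nf

lemma coord_sum (a t : ℝ) (ha : 0 < a) :
    ∑' w : ℕ × ℕ, ENNReal.ofReal (Real.exp (t * ((w.2 : ℝ) - (w.1 : ℝ)) / 2))
        * ((pois (a * Real.exp t)).prod (pois a)) {w}
      = ENNReal.ofReal (Real.exp (-(a * (Real.exp (t / 2) - 1) ^ 2))) := by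
  have hb : (0:ℝ) ≤ a * Real.exp t := by positivity
  have hterm : ∀ x y : ℕ,
      ENNReal.ofReal (Real.exp (t * ((y : ℝ) - (x : ℝ)) / 2))
          * ((pois (a * Real.exp t)).prod (pois a)) {(x, y)}
        = (ENNReal.ofReal (Real.exp ((-(t/2)) * x)) * pois (a * Real.exp t) {x})
          * (ENNReal.ofReal (Real.exp ((t/2) * y)) * pois a {y}) := by
    intro x y
    have hset : ({(x, y)} : Set (ℕ × ℕ)) = {x} ×ˢ {y} := by
      rw [Set.singleton_prod_singleton]
    rw [hset, Measure.prod_prod]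
    have : Real.exp (t * ((y : ℝ) - (x : ℝ)) / 2)
        = Real.exp ((-(t/2)) * x) * Real.exp ((t/2) * y) := by
      rw [← Real.exp_add]; ring_nf
    rw [this, ENNReal.ofReal_mul (Real.exp_nonneg _)]
    ring
  calc ∑' w : ℕ × ℕ, ENNReal.ofReal (Real.exp (t * ((w.2 : ℝ) - (w.1 : ℝ)) / 2))
        * ((pois (a * Real.exp t)).prod (pois a)) {w}
      = ∑' x : ℕ, ∑' y : ℕ,
          (ENNReal.ofReal (Real.exp ((-(t/2)) * x)) * pois (a * Real.exp t) {x})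
          * (ENNReal.ofReal (Real.exp ((t/2) * y)) * pois a {y}) := by
        rw [ENNReal.tsum_prod']; exact tsum_congr fun x => tsum_congr fun y => hterm x y
    _ = (∑' x : ℕ, ENNReal.ofReal (Real.exp ((-(t/2)) * x)) * pois (a * Real.exp t) {x})
        * (∑' y : ℕ, ENNReal.ofReal (Real.exp ((t/2) * y)) * pois a {y}) := by
        simp_rw [ENNReal.tsum_mul_left, ENNReal.tsum_mul_right]
    _ = ENNReal.ofReal (Real.exp (-(a * (Real.exp (t / 2) - 1) ^ 2))) := by
        rw [pois_mgf hb, pois_mgf ha.le, ← ENNReal.ofReal_mul (Real.exp_nonneg _),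
          ← Real.exp_add]
        congr 2
        have h1 : Real.exp t = Real.exp (t/2) * Real.exp (t/2) := by
          rw [← Real.exp_add]; ring_nf
        have h2 : Real.exp (-(t/2)) * Real.exp (t/2) = 1 := by
          rw [← Real.exp_add]; simp
        rw [h1]
        linear_combination a * Real.exp (t / 2) * h2

lemma tsum_pi_prod {X : Type*} :
    ∀ (n : ℕ) (c : ℕ → X → ENNReal),
      ∑' v : Fin n → X, ∏ j : Fin n, c j (v j) = ∏ j : Fin n, ∑' w, c j w := by
  intro n
  induction n with
  | zero =>
    intro c
    haveI : Unique (Fin 0 → X) := ⟨⟨Fin.elim0⟩, fun v => funext fun i => i.elim0⟩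
    simp only [Finset.univ_eq_empty, Finset.prod_empty]
    rw [tsum_eq_single default (fun v hv => absurd (Subsingleton.elim v default) hv)]
  | succ n ih =>
    intro c
    have hterm : ∀ p : X × (Fin n → X),
        ∏ j : Fin (n+1), c j ((Fin.consEquiv fun _ => X) p j)
          = c 0 p.1 * ∏ j : Fin n, c (j + 1) (p.2 j) := by
      rintro ⟨x, w⟩
      rw [Fin.prod_univ_succ]
      simp [Fin.consEquiv]
    calc ∑' v : Fin (n+1) → X, ∏ j : Fin (n+1), c j (v j)
        = ∑' p : X × (Fin n → X), ∏ j : Fin (n+1), c j ((Fin.consEquiv fun _ => X) p j) :=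
          ((Fin.consEquiv fun _ => X).tsum_eq _).symm
      _ = ∑' p : X × (Fin n → X), c 0 p.1 * ∏ j : Fin n, c (j + 1) (p.2 j) :=
          tsum_congr hterm
      _ = (∑' x, c 0 x) * ∑' w : Fin n → X, ∏ j : Fin n, c (j + 1) (w j) := by
          rw [ENNReal.tsum_prod']
          simp_rw [ENNReal.tsum_mul_left, ENNReal.tsum_mul_right]
      _ = ∏ j : Fin (n+1), ∑' w, c j w := by
          rw [ih (fun j => c (j + 1)), Fin.prod_univ_succ]
          simp [Fin.val_succ]

lemma key_integral (a : ℝ) (ha : 0 < a) (ε : ℕ → ℝ) (η : Measure (ℕ → ℕ × ℕ))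
    [IsProbabilityMeasure η]
    (hη : IsProductOf' η fun j => (pois (a * Real.exp (ε j))).prod (pois a)) (n : ℕ) :
    ∫⁻ z, ENNReal.ofReal
        (Real.exp ((∑ j ∈ Finset.range n, ε j * (((z j).2 : ℝ) - ((z j).1 : ℝ))) / 2)) ∂η
      = ENNReal.ofReal
        (Real.exp (-(a * ∑ j ∈ Finset.range n, (Real.exp (ε j / 2) - 1) ^ 2))) := by
  set μ : ℕ → Measure (ℕ × ℕ) := fun j => (pois (a * Real.exp (ε j))).prod (pois a) with hμ
  set c : ℕ → (ℕ × ℕ) → ENNReal := fun j w =>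
    ENNReal.ofReal (Real.exp (ε j * ((w.2 : ℝ) - (w.1 : ℝ)) / 2)) * μ j {w} with hc
  set π : (ℕ → ℕ × ℕ) → (Fin n → ℕ × ℕ) := fun z j => z j with hπdef
  have hπ : Measurable π := measurable_pi_lambda _ fun j => measurable_pi_apply _
  set g : (Fin n → ℕ × ℕ) → ENNReal := fun v =>
    ∏ j : Fin n, ENNReal.ofReal (Real.exp (ε j * (((v j).2 : ℝ) - ((v j).1 : ℝ)) / 2)) with hg
  have hfg : ∀ z, ENNReal.ofReal
      (Real.exp ((∑ j ∈ Finset.range n, ε j * (((z j).2 : ℝ) - ((z j).1 : ℝ))) / 2))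
        = g (π z) := by
    intro z
    rw [hg]
    rw [← Fin.sum_univ_eq_sum_range (fun j => ε j * (((z j).2 : ℝ) - ((z j).1 : ℝ))) n,
      Finset.sum_div, Real.exp_sum, ENNReal.ofReal_prod_of_nonneg
        (fun i _ => Real.exp_nonneg _)]
  set ext : (Fin n → ℕ × ℕ) → ℕ → ℕ × ℕ := fun v j => if h : j < n then v ⟨j, h⟩ else (0, 0)
    with hext
  have hcyl : ∀ v : Fin n → ℕ × ℕ,
      π ⁻¹' {v} = {z | ∀ j ∈ Finset.range n, z j = ext v j} := by
    intro v
    ext z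
    simp only [Set.mem_preimage, Set.mem_singleton_iff, Set.mem_setOf_eq, funext_iff,
      Finset.mem_range, hext]
    constructor
    · intro h j hj
      rw [dif_pos hj]; exact h ⟨j, hj⟩
    · intro h j
      have := h j j.isLt
      rwa [dif_pos j.isLt, Fin.eta] at this
  have hmap : ∀ v : Fin n → ℕ × ℕ, η (π ⁻¹' {v}) = ∏ j : Fin n, μ j {v j} := by
    intro v
    rw [hcyl v, hη (Finset.range n) (ext v),
      ← Fin.prod_univ_eq_prod_range (fun j => μ j {ext v j}) n]
    refine Finset.prod_congr rfl fun j _ => ?_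
    simp [hext, j.isLt, Fin.eta]
  calc ∫⁻ z, ENNReal.ofReal
        (Real.exp ((∑ j ∈ Finset.range n, ε j * (((z j).2 : ℝ) - ((z j).1 : ℝ))) / 2)) ∂η
      = ∫⁻ z, g (π z) ∂η := lintegral_congr hfg
    _ = ∫⁻ v, g v ∂(η.map π) := (lintegral_map (measurable_of_countable g) hπ).symm
    _ = ∑' v : Fin n → ℕ × ℕ, g v * (η.map π) {v} := lintegral_countable' g
    _ = ∑' v : Fin n → ℕ × ℕ, ∏ j : Fin n, c j (v j) := by
        refine tsum_congr fun v => ?_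
        rw [Measure.map_apply hπ (measurableSet_singleton v), hmap v, hg, hc,
          ← Finset.prod_mul_distrib]
    _ = ∏ j : Fin n, ∑' w, c (j : ℕ) w := tsum_pi_prod n c
    _ = ∏ j : Fin n, ENNReal.ofReal (Real.exp (-(a * (Real.exp (ε j / 2) - 1) ^ 2))) := by
        refine Finset.prod_congr rfl fun j _ => ?_
        exact coord_sum a (ε j) ha
    _ = ENNReal.ofReal
        (Real.exp (-(a * ∑ j ∈ Finset.range n, (Real.exp (ε j / 2) - 1) ^ 2))) := by
        rw [← ENNReal.ofReal_prod_of_nonneg (fun i _ => Real.exp_nonneg _), ← Real.exp_sum]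
        congr 2
        rw [← Fin.sum_univ_eq_sum_range (fun j => (Real.exp (ε j / 2) - 1) ^ 2) n,
          Finset.mul_sum, ← Finset.sum_neg_distrib]

lemma sq_le_aux {x : ℝ} (hx : |x| ≤ 1) :
    x ^ 2 ≤ 4 * Real.exp 1 * (Real.exp (x / 2) - 1) ^ 2 := by
  have key : |x| / 2 * Real.exp (-(1/2 : ℝ)) ≤ |Real.exp (x / 2) - 1| := by
    rcases le_or_gt 0 x with hx0 | hx0
    · have h1 : x / 2 + 1 ≤ Real.exp (x / 2) := Real.add_one_le_exp _
      have h2 : Real.exp (-(1/2 : ℝ)) ≤ 1 := Real.exp_le_one_iff.mpr (by norm_num)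
      rw [abs_of_nonneg hx0, abs_of_nonneg (by linarith)]
      nlinarith [Real.exp_pos (-(1/2 : ℝ))]
    · have h1 : -(x / 2) + 1 ≤ Real.exp (-(x / 2)) := Real.add_one_le_exp _
      have h2 : Real.exp (-(1/2 : ℝ)) ≤ Real.exp (x / 2) := by
        apply Real.exp_le_exp.mpr
        have := abs_le.mp hx
        linarith [this.1]
      have h3 : Real.exp (x / 2) * Real.exp (-(x / 2)) = 1 := by
        rw [← Real.exp_add]; simp
      have h4 : Real.exp (x / 2) ≤ 1 := Real.exp_le_one_iff.mpr (by linarith)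
      rw [abs_of_neg hx0, abs_of_nonpos (by linarith)]
      nlinarith [Real.exp_pos (x / 2)]
  have hsq := pow_le_pow_left₀ (by positivity) key 2
  rw [sq_abs] at hsq
  have he : Real.exp (-(1/2 : ℝ)) ^ 2 = Real.exp (-1) := by
    rw [sq, ← Real.exp_add]; norm_num
  have hprod : Real.exp (-1) * Real.exp 1 = 1 := by rw [← Real.exp_add]; simp
  have hx2 : (|x| / 2) ^ 2 = x ^ 2 / 4 := by rw [div_pow, sq_abs]; norm_num
  rw [mul_pow, he, hx2] at hsq
  nlinarith [Real.exp_pos (1 : ℝ)]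

/-- On `Z = (ℕ×ℕ)^ℕ` with `η = ⊗_j (Pois(a e^{ε_j}) ⊗ Pois(a))` and
`X_j(z) := ε_j (y_j - x_j)`: if `ε_j → 0`, `Σ ε_j² = ∞` and `Σ ε_j⁴ < ∞`, then the partial
sums `Σ_{j<n} X_j` tend to `-∞` in probability, i.e. for every `p > 0`,
`η{z : Σ_{j<n} X_j(z) > -p} → 0` as `n → ∞`. -/
theorem stmt11 (a : ℝ) (ha : 0 < a) (ε : ℕ → ℝ)
    (hε0 : Tendsto ε atTop (nhds 0))
    (hε2 : ¬ Summable fun j => ε j ^ 2)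
    (hε4 : Summable fun j => ε j ^ 4)
    (η : Measure (ℕ → ℕ × ℕ)) [IsProbabilityMeasure η]
    (hη : IsProductOf' η fun j => (pois (a * Real.exp (ε j))).prod (pois a)) :
    ∀ p : ℝ, 0 < p →
      Tendsto (fun n : ℕ =>
          η {z | -p < ∑ j ∈ Finset.range n, ε j * (((z j).2 : ℝ) - ((z j).1 : ℝ))})
        atTop (nhds 0) := by
  intro p hp
  set c : ℕ → ℝ := fun j => (Real.exp (ε j / 2) - 1) ^ 2 with hcdef
  have hc0 : ∀ j, 0 ≤ c j := fun j => sq_nonneg _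
  have hcns : ¬ Summable c := by
    intro hS
    apply hε2
    have hev : ∀ᶠ j in atTop, |ε j| ≤ 1 := by
      filter_upwards [hε0.eventually (Metric.ball_mem_nhds (0:ℝ) one_pos)] with j hj
      rw [Real.dist_eq, sub_zero] at hj; exact hj.le
    obtain ⟨N, hN⟩ := eventually_atTop.mp hev
    have h2 : Summable (fun j => 4 * Real.exp 1 * c (j + N)) :=
      ((summable_nat_add_iff N).mpr hS).mul_left _
    have h1 : Summable (fun j => ε (j + N) ^ 2) :=
      h2.of_nonneg_of_le (fun j => sq_nonneg _)
        (fun j => sq_le_aux (hN _ (Nat.le_add_left N j)))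
    exact (summable_nat_add_iff N).mp h1
  have hsums : Tendsto (fun n => ∑ j ∈ Finset.range n, c j) atTop atTop :=
    (not_summable_iff_tendsto_nat_atTop_of_nonneg hc0).mp hcns
  have hbound : ∀ n : ℕ,
      η {z | -p < ∑ j ∈ Finset.range n, ε j * (((z j).2 : ℝ) - ((z j).1 : ℝ))}
        ≤ ENNReal.ofReal (Real.exp (p / 2 - a * ∑ j ∈ Finset.range n, c j)) := by
    intro n
    set S : (ℕ → ℕ × ℕ) → ℝ :=
      fun z => ∑ j ∈ Finset.range n, ε j * (((z j).2 : ℝ) - ((z j).1 : ℝ)) with hSdef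
    have hSm : Measurable S := by
      apply Finset.measurable_sum
      intro j _
      exact (measurable_of_countable (fun w : ℕ × ℕ => ε j * ((w.2 : ℝ) - (w.1 : ℝ)))).comp
        (measurable_pi_apply j)
    have hf : Measurable (fun z => ENNReal.ofReal (Real.exp (S z / 2))) :=
      ENNReal.measurable_ofReal.comp (Real.measurable_exp.comp (hSm.div_const 2))
    have hset : {z | -p < S z}
        ⊆ {z | ENNReal.ofReal (Real.exp (-p / 2)) ≤ ENNReal.ofReal (Real.exp (S z / 2))} := by
      intro z hz
      exact ENNReal.ofReal_le_ofReal (Real.exp_le_exp.mpr (by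
        have : -p < S z := hz
        linarith))
    have hmark := mul_meas_ge_le_lintegral₀ (μ := η) hf.aemeasurable (ENNReal.ofReal (Real.exp (-p / 2)))
    have h1 : ENNReal.ofReal (Real.exp (-p / 2)) * η {z | -p < S z}
        ≤ ∫⁻ z, ENNReal.ofReal (Real.exp (S z / 2)) ∂η :=
      le_trans (mul_le_mul_right (measure_mono hset) _) hmark
    rw [key_integral a ha ε η hη n] at h1
    have h2 := mul_le_mul_right h1 (ENNReal.ofReal (Real.exp (p / 2)))
    rw [← mul_assoc, ← ENNReal.ofReal_mul (Real.exp_nonneg _), ← Real.exp_add,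
      show p / 2 + -p / 2 = 0 by ring, Real.exp_zero, ENNReal.ofReal_one, one_mul] at h2
    refine le_trans h2 (le_of_eq ?_)
    rw [← ENNReal.ofReal_mul (Real.exp_nonneg _), ← Real.exp_add, sub_eq_add_neg]
  have hatBot : Tendsto (fun n => p / 2 - a * ∑ j ∈ Finset.range n, c j) atTop atBot := by
    have h1 : Tendsto (fun n => a * ∑ j ∈ Finset.range n, c j) atTop atTop :=
      hsums.const_mul_atTop ha
    have h2 : Tendsto (fun n => -(a * ∑ j ∈ Finset.range n, c j)) atTop atBot :=
      tendsto_neg_atTop_atBot.comp h1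
    simpa [sub_eq_add_neg] using tendsto_atBot_add_const_left atTop (p / 2) h2
  have hlim : Tendsto
      (fun n => ENNReal.ofReal (Real.exp (p / 2 - a * ∑ j ∈ Finset.range n, c j)))
      atTop (nhds 0) := by
    have := ENNReal.tendsto_ofReal (Real.tendsto_exp_atBot.comp hatBot)
    simpa using this
  exact tendsto_of_tendsto_of_tendsto_of_le_of_le tendsto_const_nhds hlim
    (fun n => zero_le) hbound
end

section
/- Let a > 0 and let (ε_j)_{j≥1} satisfy ε_j → 0, Σ_{j≥1} ε_j² = ∞ and Σ_{j≥1} ε_j⁴ < ∞. Then for η-almost every z ∈ Z, X_n(z) → 0 as n → ∞; that is, for every δ > 0 there is N such that |ε_n (y_n − x_n)| < δ for all n > N. -/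
open MeasureTheory ProbabilityTheory Filter
open scoped ENNReal NNReal Nat

/-- Fourth moment bound for the Poisson PMF. -/
lemma pois_moment (r : ℝ≥0) :
    ∑' k : ℕ, (k : ℝ≥0∞) ^ 4 * poissonPMF r k ≤ ENNReal.ofReal (Real.exp (15 * r)) := by
  have hsum : Summable fun k : ℕ => Real.exp (-(r : ℝ)) * (16 * (r : ℝ)) ^ k / k ! := by
    have := (Real.summable_pow_div_factorial (16 * (r : ℝ))).mul_left (Real.exp (-(r : ℝ)))
    convert this using 2 with k
    case e'_5 => ring
    case e'_3 => rfl
  have h1 : ∀ k : ℕ, (k : ℝ≥0∞) ^ 4 * poissonPMF r k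
      ≤ ENNReal.ofReal (Real.exp (-(r : ℝ)) * (16 * (r : ℝ)) ^ k / k !) := by
    intro k
    have hk : poissonPMF r k = ENNReal.ofReal (Real.exp (-(r : ℝ)) * (r : ℝ) ^ k / k !) := rfl
    rw [hk, ← ENNReal.ofReal_natCast, ← ENNReal.ofReal_pow (Nat.cast_nonneg k),
      ← ENNReal.ofReal_mul (by positivity)]
    apply ENNReal.ofReal_le_ofReal
    have hk4 : (k : ℝ) ^ 4 ≤ 16 ^ k := by
      have h2 : (k : ℝ) ≤ 2 ^ k := by exact_mod_cast (Nat.lt_two_pow_self (n := k)).le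
      calc (k : ℝ) ^ 4 ≤ ((2 : ℝ) ^ k) ^ 4 := pow_le_pow_left₀ (Nat.cast_nonneg k) h2 4
        _ = ((2 : ℝ) ^ 4) ^ k := by rw [← pow_mul, ← pow_mul, Nat.mul_comm]
        _ = 16 ^ k := by norm_num
    calc (k : ℝ) ^ 4 * (Real.exp (-(r : ℝ)) * (r : ℝ) ^ k / k !)
        ≤ 16 ^ k * (Real.exp (-(r : ℝ)) * (r : ℝ) ^ k / k !) :=
          mul_le_mul_of_nonneg_right hk4 (by positivity)
      _ = Real.exp (-(r : ℝ)) * (16 * (r : ℝ)) ^ k / k ! := by rw [mul_pow]; ring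
  calc ∑' k : ℕ, (k : ℝ≥0∞) ^ 4 * poissonPMF r k
      ≤ ∑' k : ℕ, ENNReal.ofReal (Real.exp (-(r : ℝ)) * (16 * (r : ℝ)) ^ k / k !) :=
        ENNReal.tsum_le_tsum h1
    _ = ENNReal.ofReal (∑' k : ℕ, Real.exp (-(r : ℝ)) * (16 * (r : ℝ)) ^ k / k !) :=
        (ENNReal.ofReal_tsum_of_nonneg (fun k => by positivity) hsum).symm
    _ = ENNReal.ofReal (Real.exp (15 * r)) := by
        congr 1
        have he : ∑' k : ℕ, (16 * (r : ℝ)) ^ k / k ! = Real.exp (16 * r) := by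
          rw [Real.exp_eq_exp_ℝ, NormedSpace.exp_eq_tsum_div]
        calc ∑' k : ℕ, Real.exp (-(r : ℝ)) * (16 * (r : ℝ)) ^ k / k !
            = Real.exp (-(r : ℝ)) * ∑' k : ℕ, (16 * (r : ℝ)) ^ k / k ! := by
              rw [← tsum_mul_left]; congr 1 with k; ring
          _ = Real.exp (15 * r) := by rw [he, ← Real.exp_add]; ring_nf

/-- Fourth moment bound for a product of two `ℕ`-valued PMFs. -/
lemma prod_moment (p q : PMF ℕ) (Cp Cq : ℝ≥0∞)
    (hp : ∑' k : ℕ, (k : ℝ≥0∞) ^ 4 * p k ≤ Cp) (hq : ∑' k : ℕ, (k : ℝ≥0∞) ^ 4 * q k ≤ Cq) :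
    ∑' v : ℕ × ℕ, ((v.1 + v.2 : ℕ) : ℝ≥0∞) ^ 4 * (p v.1 * q v.2) ≤ 16 * (Cp + Cq) := by
  rw [ENNReal.tsum_prod']
  have hinner : ∀ x : ℕ, ∑' y : ℕ, ((x + y : ℕ) : ℝ≥0∞) ^ 4 * (p x * q y)
      ≤ 16 * ((x : ℝ≥0∞) ^ 4 * p x) + 16 * p x * Cq := by
    intro x
    have step : ∀ y : ℕ, ((x + y : ℕ) : ℝ≥0∞) ^ 4 * (p x * q y)
        ≤ 16 * ((x : ℝ≥0∞) ^ 4 * p x) * q y + 16 * p x * ((y : ℝ≥0∞) ^ 4 * q y) := by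
      intro y
      have hnat : ((x + y) ^ 4 : ℕ) ≤ 16 * (x ^ 4 + y ^ 4) := by
        rcases le_total x y with h | h
        · calc (x + y) ^ 4 ≤ (2 * y) ^ 4 := Nat.pow_le_pow_left (by omega) 4
            _ = 16 * y ^ 4 := by ring
            _ ≤ 16 * (x ^ 4 + y ^ 4) := Nat.mul_le_mul_left _ (Nat.le_add_left _ _)
        · calc (x + y) ^ 4 ≤ (2 * x) ^ 4 := Nat.pow_le_pow_left (by omega) 4
            _ = 16 * x ^ 4 := by ring
            _ ≤ 16 * (x ^ 4 + y ^ 4) := Nat.mul_le_mul_left _ (Nat.le_add_right _ _)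
      have hcast : ((x + y : ℕ) : ℝ≥0∞) ^ 4 ≤ 16 * ((x : ℝ≥0∞) ^ 4 + (y : ℝ≥0∞) ^ 4) := by
        have h0 : (((x + y) ^ 4 : ℕ) : ℝ≥0∞) ≤ ((16 * (x ^ 4 + y ^ 4) : ℕ) : ℝ≥0∞) :=
          Nat.cast_le.mpr hnat
        push_cast at h0 ⊢
        exact h0
      calc ((x + y : ℕ) : ℝ≥0∞) ^ 4 * (p x * q y)
          ≤ (16 * ((x : ℝ≥0∞) ^ 4 + (y : ℝ≥0∞) ^ 4)) * (p x * q y) :=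
            mul_le_mul_left hcast _
        _ = 16 * ((x : ℝ≥0∞) ^ 4 * p x) * q y + 16 * p x * ((y : ℝ≥0∞) ^ 4 * q y) := by ring
    calc ∑' y : ℕ, ((x + y : ℕ) : ℝ≥0∞) ^ 4 * (p x * q y)
        ≤ ∑' y : ℕ, (16 * ((x : ℝ≥0∞) ^ 4 * p x) * q y + 16 * p x * ((y : ℝ≥0∞) ^ 4 * q y)) :=
          ENNReal.tsum_le_tsum step
      _ = 16 * ((x : ℝ≥0∞) ^ 4 * p x) * (∑' y, q y) + 16 * p x * ∑' y : ℕ, (y : ℝ≥0∞) ^ 4 * q y := by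
          rw [ENNReal.tsum_add, ENNReal.tsum_mul_left, ENNReal.tsum_mul_left]
      _ ≤ 16 * ((x : ℝ≥0∞) ^ 4 * p x) + 16 * p x * Cq := by
          rw [q.tsum_coe, mul_one]
          exact add_le_add_right (mul_le_mul_right hq _) _
  calc ∑' x : ℕ, ∑' y : ℕ, ((x + y : ℕ) : ℝ≥0∞) ^ 4 * (p x * q y)
      ≤ ∑' x : ℕ, (16 * ((x : ℝ≥0∞) ^ 4 * p x) + 16 * p x * Cq) := ENNReal.tsum_le_tsum hinner
    _ = 16 * ∑' x : ℕ, ((x : ℝ≥0∞) ^ 4 * p x) + 16 * Cq * ∑' x, p x := by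
        rw [ENNReal.tsum_add, ENNReal.tsum_mul_left]
        congr 1
        rw [← ENNReal.tsum_mul_left]
        congr 1 with x; ring
    _ ≤ 16 * Cp + 16 * Cq * 1 := by
        rw [p.tsum_coe]
        exact add_le_add (mul_le_mul_right hp _) le_rfl
    _ = 16 * (Cp + Cq) := by ring

/-- On `Z = (ℕ×ℕ)^ℕ` with `η = ⊗_j (Pois(a e^{ε_j}) ⊗ Pois(a))` and
`X_j(z) := ε_j (y_j - x_j)`: if `ε_j → 0`, `Σ ε_j² = ∞` and `Σ ε_j⁴ < ∞`, then for `η`-a.e.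
`z`, `X_n(z) → 0` as `n → ∞`. -/
theorem stmt12 (a : ℝ) (ha : 0 < a) (ε : ℕ → ℝ)
    (hε0 : Tendsto ε atTop (nhds 0))
    (hε2 : ¬ Summable fun j => ε j ^ 2)
    (hε4 : Summable fun j => ε j ^ 4)
    (η : Measure (ℕ → ℕ × ℕ)) [IsProbabilityMeasure η]
    (hη : IsProductOf' η fun j => (pois (a * Real.exp (ε j))).prod (pois a)) :
    ∀ᵐ z ∂η, Tendsto (fun n : ℕ => ε n * (((z n).2 : ℝ) - ((z n).1 : ℝ)))
      atTop (nhds 0) := by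
  -- a uniform bound on |ε n|
  obtain ⟨B, hB⟩ : ∃ B : ℝ, ∀ n, |ε n| ≤ B := by
    obtain ⟨B, hB⟩ := (hε0.abs).bddAbove_range
    exact ⟨B, fun n => hB (Set.mem_range_self n)⟩
  have hB0 : 0 ≤ B := le_trans (abs_nonneg _) (hB 0)
  set C : ℝ := Real.exp (15 * (a * Real.exp B)) with hC
  have hC0 : 0 ≤ C := (Real.exp_pos _).le
  -- moment bounds for the two marginals
  have hQ : ∑' k : ℕ, (k : ℝ≥0∞) ^ 4 * poissonPMF a.toNNReal k ≤ ENNReal.ofReal C := by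
    refine le_trans (pois_moment _) (ENNReal.ofReal_le_ofReal (Real.exp_le_exp.mpr ?_))
    have : (a.toNNReal : ℝ) = a := Real.coe_toNNReal a ha.le
    rw [this]
    have h1 : a ≤ a * Real.exp B :=
      le_mul_of_one_le_right ha.le (Real.one_le_exp hB0)
    nlinarith
  have hP : ∀ n, ∑' k : ℕ, (k : ℝ≥0∞) ^ 4 * poissonPMF (a * Real.exp (ε n)).toNNReal k
      ≤ ENNReal.ofReal C := by
    intro n
    refine le_trans (pois_moment _) (ENNReal.ofReal_le_ofReal (Real.exp_le_exp.mpr ?_))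
    have hpos : 0 < a * Real.exp (ε n) := mul_pos ha (Real.exp_pos _)
    have : ((a * Real.exp (ε n)).toNNReal : ℝ) = a * Real.exp (ε n) :=
      Real.coe_toNNReal _ hpos.le
    rw [this]
    have h1 : Real.exp (ε n) ≤ Real.exp B :=
      Real.exp_le_exp.mpr ((le_abs_self _).trans (hB n))
    nlinarith [Real.exp_pos (ε n)]
  -- cylinder formula for single coordinates
  have hcyl : ∀ (n : ℕ) (v : ℕ × ℕ), η {z | z n = v}
      = poissonPMF (a * Real.exp (ε n)).toNNReal v.1 * poissonPMF a.toNNReal v.2 := by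
    intro n v
    have h := hη {n} (fun _ => v)
    simp only [Finset.mem_singleton, Finset.prod_singleton] at h
    have hset : {z : ℕ → ℕ × ℕ | ∀ j, j = n → z j = v} = {z | z n = v} := by
      ext z; constructor
      · intro hz; exact hz n rfl
      · intro hz j hj; rw [hj]; exact hz
    rw [hset] at h
    rw [h]
    have hv : ({v} : Set (ℕ × ℕ)) = {v.1} ×ˢ {v.2} := by
      rw [Set.singleton_prod_singleton]
    haveI : SFinite (pois a) := by
      unfold pois
      infer_instance
    rw [hv, Measure.prod_prod]
    simp only [pois, poissonMeasure_singleton]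
    rfl
  -- the key Borel–Cantelli estimate
  have key : ∀ δ : ℝ, 0 < δ → ∀ᵐ z ∂η, ∀ᶠ n in atTop,
      z ∉ {z : ℕ → ℕ × ℕ | δ ≤ |ε n * (((z n).2 : ℝ) - ((z n).1 : ℝ))|} := by
    intro δ hδ
    apply ae_eventually_notMem
    have hbound : ∀ n, η {z : ℕ → ℕ × ℕ | δ ≤ |ε n * (((z n).2 : ℝ) - ((z n).1 : ℝ))|}
        ≤ ENNReal.ofReal ((32 * C / δ ^ 4) * ε n ^ 4) := by
      intro n
      set P : PMF ℕ := poissonPMF (a * Real.exp (ε n)).toNNReal with hPdef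
      set Q : PMF ℕ := poissonPMF a.toNNReal with hQdef
      set S : Set (ℕ × ℕ) := {v | δ ≤ |ε n * ((v.2 : ℝ) - (v.1 : ℝ))|} with hSdef
      have hsn : {z : ℕ → ℕ × ℕ | δ ≤ |ε n * (((z n).2 : ℝ) - ((z n).1 : ℝ))|}
          = ⋃ v ∈ S, {z : ℕ → ℕ × ℕ | z n = v} := by
        ext z
        simp only [Set.mem_setOf_eq, Set.mem_iUnion, exists_prop]
        constructor
        · intro hz; exact ⟨z n, hz, rfl⟩
        · rintro ⟨v, hv, hzv⟩; rw [hzv]; exact hv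
      -- pointwise bound on S
      have hpt : ∀ v : S, P (v : ℕ × ℕ).1 * Q (v : ℕ × ℕ).2
          ≤ ENNReal.ofReal (ε n ^ 4 / δ ^ 4)
            * (((v : ℕ × ℕ).1 + (v : ℕ × ℕ).2 : ℕ) : ℝ≥0∞) ^ 4
            * (P (v : ℕ × ℕ).1 * Q (v : ℕ × ℕ).2) := by
        rintro ⟨⟨x, y⟩, hv⟩
        replace hv : δ ≤ |ε n * ((y : ℝ) - (x : ℝ))| := hv
        have hxy : δ ≤ |ε n| * ((x : ℝ) + y) := by
          have h2 : |(y : ℝ) - x| ≤ (x : ℝ) + y := by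
            rw [abs_sub_le_iff]
            constructor <;>
              [skip; skip] <;>
              · have hx : (0 : ℝ) ≤ x := Nat.cast_nonneg x
                have hy : (0 : ℝ) ≤ y := Nat.cast_nonneg y
                linarith
          calc δ ≤ |ε n * ((y : ℝ) - x)| := hv
            _ = |ε n| * |(y : ℝ) - x| := abs_mul _ _
            _ ≤ |ε n| * ((x : ℝ) + y) := mul_le_mul_of_nonneg_left h2 (abs_nonneg _)
        have hone : (1 : ℝ) ≤ (ε n ^ 4 / δ ^ 4) * ((x : ℝ) + y) ^ 4 := by
          have h4 : δ ^ 4 ≤ (|ε n| * ((x : ℝ) + y)) ^ 4 := pow_le_pow_left₀ hδ.le hxy 4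
          have h5 : (|ε n| * ((x : ℝ) + y)) ^ 4 = ε n ^ 4 * ((x : ℝ) + y) ^ 4 := by
            rw [mul_pow, pow_abs, abs_of_nonneg (by positivity : (0:ℝ) ≤ ε n ^ 4)]
          rw [div_mul_eq_mul_div, le_div_iff₀ (by positivity), one_mul]
          nlinarith
        calc P x * Q y = 1 * (P x * Q y) := (one_mul _).symm
          _ ≤ ENNReal.ofReal ((ε n ^ 4 / δ ^ 4) * ((x : ℝ) + y) ^ 4) * (P x * Q y) :=
            mul_le_mul_left (ENNReal.one_le_ofReal.mpr hone) _
          _ = ENNReal.ofReal (ε n ^ 4 / δ ^ 4) * (((x + y : ℕ)) : ℝ≥0∞) ^ 4 * (P x * Q y) := by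
            rw [ENNReal.ofReal_mul (by positivity), ENNReal.ofReal_pow (by positivity)]
            have : ENNReal.ofReal ((x : ℝ) + y) = ((x + y : ℕ) : ℝ≥0∞) := by
              rw [show (x : ℝ) + y = ((x + y : ℕ) : ℝ) by push_cast; ring,
                ENNReal.ofReal_natCast]
            rw [this]
      calc η {z : ℕ → ℕ × ℕ | δ ≤ |ε n * (((z n).2 : ℝ) - ((z n).1 : ℝ))|}
          ≤ ∑' v : S, η {z : ℕ → ℕ × ℕ | z n = (v : ℕ × ℕ)} := by
            rw [hsn]; exact measure_biUnion_le η S.to_countable _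
        _ = ∑' v : S, (P (v : ℕ × ℕ).1 * Q (v : ℕ × ℕ).2) :=
            tsum_congr fun v => hcyl n (v : ℕ × ℕ)
        _ ≤ ∑' v : S, ENNReal.ofReal (ε n ^ 4 / δ ^ 4)
              * (((v : ℕ × ℕ).1 + (v : ℕ × ℕ).2 : ℕ) : ℝ≥0∞) ^ 4
              * (P (v : ℕ × ℕ).1 * Q (v : ℕ × ℕ).2) := ENNReal.tsum_le_tsum hpt
        _ ≤ ∑' v : ℕ × ℕ, ENNReal.ofReal (ε n ^ 4 / δ ^ 4)
              * ((v.1 + v.2 : ℕ) : ℝ≥0∞) ^ 4 * (P v.1 * Q v.2) := by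
            have h := ENNReal.tsum_le_tsum (f := S.indicator fun v : ℕ × ℕ =>
                ENNReal.ofReal (ε n ^ 4 / δ ^ 4) * ((v.1 + v.2 : ℕ) : ℝ≥0∞) ^ 4
                  * (P v.1 * Q v.2))
              (fun v => Set.indicator_le_self _ _ v)
            rwa [← tsum_subtype] at h
        _ = ENNReal.ofReal (ε n ^ 4 / δ ^ 4)
              * ∑' v : ℕ × ℕ, ((v.1 + v.2 : ℕ) : ℝ≥0∞) ^ 4 * (P v.1 * Q v.2) := by
            rw [← ENNReal.tsum_mul_left]
            exact tsum_congr fun v => by ring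
        _ ≤ ENNReal.ofReal (ε n ^ 4 / δ ^ 4)
              * (16 * (ENNReal.ofReal C + ENNReal.ofReal C)) :=
            mul_le_mul_right (prod_moment P Q _ _ (hP n) hQ) _
        _ = ENNReal.ofReal ((32 * C / δ ^ 4) * ε n ^ 4) := by
            rw [show (16 : ℝ≥0∞) * (ENNReal.ofReal C + ENNReal.ofReal C)
                = ENNReal.ofReal (32 * C) by
              rw [ENNReal.ofReal_mul (by norm_num : (0:ℝ) ≤ 32), ENNReal.ofReal_ofNat]
              ring]
            rw [← ENNReal.ofReal_mul (by positivity)]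
            congr 1
            ring
    refine ne_top_of_le_ne_top ?_ (ENNReal.tsum_le_tsum hbound)
    rw [← ENNReal.ofReal_tsum_of_nonneg (fun n => by positivity) (hε4.mul_left _)]
    exact ENNReal.ofReal_ne_top
  have hall : ∀ᵐ z ∂η, ∀ m : ℕ, ∀ᶠ n in atTop,
      ¬ ((1 : ℝ) / (m + 1) ≤ |ε n * (((z n).2 : ℝ) - ((z n).1 : ℝ))|) :=
    ae_all_iff.mpr fun m => key (1 / (m + 1)) (by positivity)
  filter_upwards [hall] with z hz
  rw [NormedAddCommGroup.tendsto_nhds_zero]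
  intro δ hδ
  obtain ⟨m, hm⟩ := exists_nat_one_div_lt hδ
  filter_upwards [hz m] with n hn
  rw [Real.norm_eq_abs]
  push_neg at hn
  exact hn.trans hm
end

section
/- Let a > 0, b > 0, and let X and Y be independent ℕ-valued random variables with X distributed Pois(a) and Y distributed Pois(b). Then for every natural number L ≥ 1, P( |X − Y| ≥ L ) ≤ e^{a − b + ab} · (a^L e^a + b^L e^b) / L!. -/
open MeasureTheory ProbabilityTheory

instance pois.instIsProbabilityMeasure (a : ℝ) : IsProbabilityMeasure (pois a) :=
  inferInstanceAs (IsProbabilityMeasure (poissonMeasure a.toNNReal))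

/-- Tail bound for a Poisson random variable: `P(X ≥ L) ≤ r^L / L!`. -/
lemma pois_tail_le (r : ℝ) (hr : 0 < r) (L : ℕ) :
    (pois r) {n : ℕ | L ≤ n} ≤ ENNReal.ofReal (r ^ L / L.factorial) := by
  have hrr : (r.toNNReal : ℝ) = r := Real.coe_toNNReal r hr.le
  have hmeas : MeasurableSet {n : ℕ | L ≤ n} := by measurability
  have h1 : (pois r) {n : ℕ | L ≤ n}
      = ∑' x : ℕ, {n : ℕ | L ≤ n}.indicator (⇑(poissonPMF r.toNNReal)) x :=
    by
    rw [pois, poissonMeasure, Measure.sum_apply _ hmeas]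
    refine tsum_congr fun n => ?_
    rw [Measure.smul_apply, Measure.dirac_apply' _ hmeas]
    by_cases hn : n ∈ {n : ℕ | L ≤ n} <;>
      simp [hn, ← poissonPMFReal_ofReal_eq_poissonPMF, poissonPMFReal]
  rw [h1, ← tsum_subtype]
  -- reindex the tail via the equivalence `k ↦ L + k`
  rw [← Equiv.tsum_eq ((⟨fun k => ⟨L + k, Nat.le_add_right L k⟩, fun n => (n : ℕ) - L,
      fun k => by simp, fun n => Subtype.ext (by
        have := n.2; simp only [Set.mem_setOf_eq] at this; simp; omega)⟩ :
      ℕ ≃ {n : ℕ | L ≤ n}))]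
  simp only [Equiv.coe_fn_mk]
  have hterm : ∀ k : ℕ, (poissonPMF r.toNNReal) (L + k)
      ≤ ENNReal.ofReal (Real.exp (-r) * (r ^ L / L.factorial) * (r ^ k / k.factorial)) := by
    intro k
    show ENNReal.ofReal (poissonPMFReal r.toNNReal (L + k)) ≤ _
    apply ENNReal.ofReal_le_ofReal
    unfold poissonPMFReal
    rw [hrr]
    have hfac : (L.factorial : ℝ) * k.factorial ≤ (L + k).factorial := by
      exact_mod_cast Nat.le_of_dvd (Nat.factorial_pos _)
        (Nat.factorial_mul_factorial_dvd_factorial_add L k)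
    calc Real.exp (-r) * r ^ (L + k) / (L + k).factorial
        ≤ Real.exp (-r) * r ^ (L + k) / ((L.factorial : ℝ) * k.factorial) :=
          div_le_div_of_nonneg_left (by positivity) (by positivity) hfac
      _ = Real.exp (-r) * (r ^ L / L.factorial) * (r ^ k / k.factorial) := by
          rw [pow_add]; ring
  calc ∑' k : ℕ, (poissonPMF r.toNNReal) (L + k)
      ≤ ∑' k : ℕ, ENNReal.ofReal
          (Real.exp (-r) * (r ^ L / L.factorial) * (r ^ k / k.factorial)) :=
        ENNReal.tsum_le_tsum fun k => hterm k
    _ = ENNReal.ofReal (∑' k : ℕ, Real.exp (-r) * (r ^ L / L.factorial) * (r ^ k / k.factorial)) := by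
        rw [ENNReal.ofReal_tsum_of_nonneg (fun k => by positivity)]
        exact (Summable.mul_left _ (by
          have := NormedSpace.expSeries_div_hasSum_exp r
          exact this.summable))
    _ ≤ ENNReal.ofReal (r ^ L / L.factorial) := by
        apply ENNReal.ofReal_le_ofReal
        have hsum : HasSum (fun k : ℕ => r ^ k / k.factorial) (Real.exp r) := by
          rw [Real.exp_eq_exp_ℝ]
          exact NormedSpace.expSeries_div_hasSum_exp r
        rw [tsum_mul_left, hsum.tsum_eq, mul_comm (Real.exp (-r)), mul_assoc,
          ← Real.exp_add, neg_add_cancel, Real.exp_zero, mul_one]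

/-- Arithmetic core: `a^L + b^L ≤ e^{a-b+ab}(a^L e^a + b^L e^b)`. -/
lemma key_arith (a b : ℝ) (ha : 0 < a) (hb : 0 < b) (L : ℕ) (hL : 1 ≤ L) :
    a ^ L + b ^ L ≤ Real.exp (a - b + a * b) * (a ^ L * Real.exp a + b ^ L * Real.exp b) := by
  obtain ⟨m, rfl⟩ : ∃ m, L = m + 1 := ⟨L - 1, (Nat.succ_pred_eq_of_pos hL).symm⟩
  have hrw : Real.exp (a - b + a * b) * (a ^ (m+1) * Real.exp a + b ^ (m+1) * Real.exp b)
      = a ^ (m+1) * Real.exp (2*a - b + a*b) + b ^ (m+1) * Real.exp (a + a*b) := by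
    rw [mul_add, ← mul_assoc, ← mul_assoc, mul_comm (Real.exp _) (a ^ (m+1)),
      mul_comm (Real.exp _) (b ^ (m+1)), mul_assoc, mul_assoc, ← Real.exp_add, ← Real.exp_add]
    ring_nf
  rw [hrw]
  set x := 2*a - b + a*b with hx
  have hpa : (0:ℝ) < a ^ (m+1) := by positivity
  have hpb : (0:ℝ) < b ^ (m+1) := by positivity
  by_cases hxs : 0 ≤ x
  · have h1 : a ^ (m+1) ≤ a ^ (m+1) * Real.exp x :=
      le_mul_of_one_le_right hpa.le (Real.one_le_exp hxs)
    have h2 : b ^ (m+1) ≤ b ^ (m+1) * Real.exp (a + a*b) :=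
      le_mul_of_one_le_right hpb.le (Real.one_le_exp (by positivity))
    linarith
  · push_neg at hxs
    -- then b(1-a) > 2a > 0, so a < 1 and a < b
    have hab : a ≤ b := by nlinarith
    have hmm : a ^ m ≤ b ^ m := pow_le_pow_left₀ ha.le hab m
    have h1 : 1 - Real.exp x ≤ -x := by
      have := Real.add_one_le_exp x
      linarith
    have h2 : a + a*b ≤ Real.exp (a + a*b) - 1 := by
      have := Real.add_one_le_exp (a + a*b)
      linarith
    have key : a ^ (m+1) * (1 - Real.exp x) ≤ b ^ (m+1) * (Real.exp (a + a*b) - 1) := by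
      calc a ^ (m+1) * (1 - Real.exp x) ≤ a ^ (m+1) * (-x) := by
            apply mul_le_mul_of_nonneg_left h1 hpa.le
        _ ≤ a ^ (m+1) * b := by
            apply mul_le_mul_of_nonneg_left _ hpa.le
            rw [hx]; nlinarith
        _ = (a ^ m * b) * a := by ring
        _ ≤ (b ^ m * b) * a := by
            apply mul_le_mul_of_nonneg_right (mul_le_mul_of_nonneg_right hmm hb.le) ha.le
        _ = b ^ (m+1) * a := by ring
        _ ≤ b ^ (m+1) * (a + a*b) :=
            mul_le_mul_of_nonneg_left (by nlinarith) hpb.le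
        _ ≤ b ^ (m+1) * (Real.exp (a + a*b) - 1) :=
            mul_le_mul_of_nonneg_left h2 hpb.le
    nlinarith [key]

/-- Tail bound for the Skellam distribution: if `X ~ Pois(a)` and `Y ~ Pois(b)` are
independent (modelled by the product measure `Pois(a) ⊗ Pois(b)` on `ℕ × ℕ`), then for
every natural number `L ≥ 1`,
`P(|X - Y| ≥ L) ≤ e^{a - b + ab} (a^L e^a + b^L e^b) / L!`. -/
theorem stmt17 (a b : ℝ) (ha : 0 < a) (hb : 0 < b) (L : ℕ) (hL : 1 ≤ L) :
    (((pois a).prod (pois b)) {p : ℕ × ℕ | (L : ℤ) ≤ |(p.1 : ℤ) - (p.2 : ℤ)|}).toReal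
      ≤ Real.exp (a - b + a * b) * (a ^ L * Real.exp a + b ^ L * Real.exp b)
          / (L.factorial : ℝ) := by
  have hsub : {p : ℕ × ℕ | (L : ℤ) ≤ |(p.1 : ℤ) - (p.2 : ℤ)|}
      ⊆ ({n : ℕ | L ≤ n} ×ˢ Set.univ) ∪ (Set.univ ×ˢ {n : ℕ | L ≤ n}) := by
    rintro ⟨x, y⟩ h
    simp only [Set.mem_setOf_eq] at h
    rcases abs_cases ((x:ℤ) - (y:ℤ)) with ⟨h1, _⟩ | ⟨h1, _⟩ <;>
      [left; right] <;> simp only [Set.mem_prod, Set.mem_setOf_eq, Set.mem_univ, and_true,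
        true_and] <;> omega
  have hmono := measure_mono (μ := (pois a).prod (pois b)) hsub
  have hA : MeasurableSet {n : ℕ | L ≤ n} := by measurability
  have hunion : ((pois a).prod (pois b))
        (({n : ℕ | L ≤ n} ×ˢ Set.univ) ∪ (Set.univ ×ˢ {n : ℕ | L ≤ n}))
      ≤ (pois a) {n : ℕ | L ≤ n} + (pois b) {n : ℕ | L ≤ n} := by
    refine (measure_union_le _ _).trans ?_
    simp [Measure.prod_prod]
  have htail := (hmono.trans hunion).trans
    (add_le_add (pois_tail_le a ha L) (pois_tail_le b hb L))
  rw [← ENNReal.ofReal_add (by positivity) (by positivity)] at htail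
  have := ENNReal.toReal_mono (ENNReal.ofReal_ne_top) htail
  refine le_trans (this.trans (le_of_eq (ENNReal.toReal_ofReal (by positivity)))) ?_
  rw [← add_div, div_le_div_iff₀ (by positivity) (by positivity)]
  have := key_arith a b ha hb L hL
  exact mul_le_mul_of_nonneg_right this (by positivity)
end
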